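/- arXiv:1009.1647 — 4 statements merged into one kernel-verified Lean document; each statement's English description precedes it below -/
import Mathlib

section
/- Let G be a group with a convergence group action on a compact metrizable space M with at least three points, and let H and J be dynamically quasiconvex subgroups of G such that every point of Λ(H) is either a conical limit point of H or a bounded parabolic point of H, and every point of Λ(J) is either a conical limit point of J or a bounded parabolic point of J. If Λ(H) ⊆ Λ(J), then either Λ(H ∩ J) = Λ(H), or H is a parabolic subgroup. -/
open Pointwise Filter Topology Set

section ConvergenceGroups

variable (G M : Type*) [Group G] [TopologicalSpace M] [MulAction G M]

/-- A convergence group action: the action is by homeomorphisms (each element acts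
continuously, hence as a homeomorphism since the action is by a group), and the induced
diagonal action on the space of distinct triples of points of `M` is properly
discontinuous. -/
def IsConvergenceAction : Prop :=
  (∀ g : G, Continuous fun x : M => g • x) ∧
    ∀ K L : Set (M × M × M), IsCompact K → IsCompact L →
      (∀ t ∈ K ∪ L, t.1 ≠ t.2.1 ∧ t.1 ≠ t.2.2 ∧ t.2.1 ≠ t.2.2) →
      {g : G | ((g • K) ∩ L).Nonempty}.Finite

/-- The limit set of a subgroup `H ≤ G`: the set of accumulation points in `M` of
the `H`-orbits of points of `M`. -/
def limitSet (H : Subgroup G) : Set M :=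
  {x : M | ∃ m : M, x ∈ closure (((fun h : G => h • m) '' (H : Set G)) \ {x})}

/-- `z` is a conical limit point of the subgroup `H`. -/
def IsConicalLimitPoint (H : Subgroup G) (z : M) : Prop :=
  ∃ (h : ℕ → G) (a b : M), (∀ n, h n ∈ H) ∧ a ≠ b ∧
    Tendsto (fun n => h n • z) atTop (nhds a) ∧
    ∀ q : M, q ≠ z → Tendsto (fun n => h n • q) atTop (nhds b)

/-- `g` is loxodromic: it has infinite order and fixes exactly two points of `M`. -/
def IsLoxodromic (g : G) : Prop :=
  ¬ IsOfFinOrder g ∧ {x : M | g • x = x}.encard = 2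

/-- `p` is a bounded parabolic point of the subgroup `H`: its stabilizer in `H` is an
infinite subgroup containing no loxodromic element, which acts cocompactly on
`Λ(H) \ {p}`. -/
def IsBoundedParabolicPoint (H : Subgroup G) (p : M) : Prop :=
  ((H ⊓ MulAction.stabilizer G p : Subgroup G) : Set G).Infinite ∧
  (∀ g ∈ H ⊓ MulAction.stabilizer G p, ¬ IsLoxodromic G M g) ∧
  ∃ C : Set M, IsCompact C ∧ C ⊆ limitSet G M H \ {p} ∧
    limitSet G M H \ {p} ⊆ ⋃ g ∈ (H ⊓ MulAction.stabilizer G p : Subgroup G), g • C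

/-- `H` is dynamically quasiconvex: for every pair of disjoint closed subsets `K, L` of
`M`, the set of cosets `gH` with `gΛ(H)` meeting both `K` and `L` is finite. -/
def DynamicallyQuasiconvex (H : Subgroup G) : Prop :=
  ∀ K L : Set M, IsClosed K → IsClosed L → Disjoint K L →
    ((fun g : G => (g : G ⧸ H)) ''
      {g : G | ((g • limitSet G M H) ∩ K).Nonempty ∧
               ((g • limitSet G M H) ∩ L).Nonempty}).Finite

end ConvergenceGroups


set_option linter.unusedSectionVars false

section Aux

variable {G M : Type*} [Group G] [TopologicalSpace M] [MulAction G M]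

private lemma exists_infinite_fiber' {α β : Type*} {S : Set α} (f : α → β) (hS : S.Infinite)
    (hf : (f '' S).Finite) : ∃ c, {x | x ∈ S ∧ f x = c}.Infinite := by
  by_contra h
  push_neg at h
  have hsub : S ⊆ ⋃ c ∈ f '' S, {x | x ∈ S ∧ f x = c} := fun x hx =>
    Set.mem_biUnion (Set.mem_image_of_mem f hx) ⟨hx, rfl⟩
  exact hS ((hf.biUnion fun c _ => h c).subset hsub)

private lemma ev_ne {α : Type*} [T2Space M] {l : Filter α} {u v : α → M} {a b : M}
    (hu : Tendsto u l (𝓝 a)) (hv : Tendsto v l (𝓝 b)) (hab : a ≠ b) :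
    ∀ᶠ n in l, u n ≠ v n := by
  obtain ⟨U, V, hU, hV, haU, hbV, hUV⟩ := t2_separation hab
  filter_upwards [hu.eventually (hU.mem_nhds haU), hv.eventually (hV.mem_nhds hbV)] with n h1 h2
  exact fun he => Set.disjoint_left.mp hUV h1 (he ▸ h2)

private lemma limitSet_mono {H K : Subgroup G} (h : H ≤ K) :
    limitSet G M H ⊆ limitSet G M K := by
  rintro x ⟨m, hx⟩
  exact ⟨m, closure_mono (Set.diff_subset_diff_left (Set.image_mono h)) hx⟩

private lemma limitSet_of_finite [T1Space M] {H : Subgroup G} (hH : (H : Set G).Finite) :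
    limitSet G M H = ∅ := by
  ext x
  simp only [Set.mem_empty_iff_false, iff_false]
  rintro ⟨m, hm⟩
  have hfin : (((fun h : G => h • m) '' (H : Set G)) \ {x}).Finite :=
    (hH.image _).subset Set.diff_subset
  rw [hfin.isClosed.closure_eq] at hm
  exact hm.2 rfl

private lemma smul_mem_limitSet (hc : ∀ g : G, Continuous fun x : M => g • x)
    {H : Subgroup G} {x : M} {g : G} (hg : g ∈ H) (hx : x ∈ limitSet G M H) :
    g • x ∈ limitSet G M H := by
  obtain ⟨m, hm⟩ := hx
  refine ⟨m, ?_⟩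
  have himg : (fun p : M => g • p) '' ((fun h : G => h • m) '' (H : Set G)) =
      (fun h : G => h • m) '' (H : Set G) := by
    ext y
    constructor
    · rintro ⟨-, ⟨k, hk, rfl⟩, rfl⟩
      exact ⟨g * k, H.mul_mem hg hk, by show (g * k) • m = g • (k • m); rw [mul_smul]⟩
    · rintro ⟨k, hk, rfl⟩
      exact ⟨(g⁻¹ * k) • m, ⟨g⁻¹ * k, H.mul_mem (H.inv_mem hg) hk, rfl⟩, by
        show g • ((g⁻¹ * k) • m) = k • m
        rw [smul_smul, mul_inv_cancel_left]⟩
  have h1 : g • x ∈ (fun p : M => g • p) ''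
      closure (((fun h : G => h • m) '' (H : Set G)) \ {x}) := ⟨x, hm, rfl⟩
  have h2 := image_closure_subset_closure_image (hc g) h1
  have h3 : (fun p : M => g • p) '' (((fun h : G => h • m) '' (H : Set G)) \ {x}) =
      ((fun h : G => h • m) '' (H : Set G)) \ {g • x} := by
    rw [Set.image_diff (MulAction.injective g), himg, Set.image_singleton]
  rwa [h3] at h2

private lemma smul_limitSet (hc : ∀ g : G, Continuous fun x : M => g • x)
    {H : Subgroup G} {g : G} (hg : g ∈ H) : g • limitSet G M H = limitSet G M H := by
  apply Set.Subset.antisymm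
  · rintro - ⟨x, hx, rfl⟩
    exact smul_mem_limitSet hc hg hx
  · intro x hx
    exact ⟨g⁻¹ • x, smul_mem_limitSet hc (H.inv_mem hg) hx, smul_inv_smul g x⟩

private lemma finite_tripleStab (hconv : IsConvergenceAction G M) {t : M × M × M}
    (h1 : t.1 ≠ t.2.1) (h2 : t.1 ≠ t.2.2) (h3 : t.2.1 ≠ t.2.2) :
    {g : G | g • t = t}.Finite := by
  have hfin := hconv.2 {t} {t} isCompact_singleton isCompact_singleton (by
    rintro x hx
    rw [Set.union_self, Set.mem_singleton_iff] at hx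
    subst hx
    exact ⟨h1, h2, h3⟩)
  refine hfin.subset fun g hg => ⟨t, Set.mem_smul_set.2 ⟨t, rfl, hg⟩, rfl⟩

private lemma exists_infinite_orbit (hconv : IsConvergenceAction G M)
    (h3 : ∃ a b c : M, a ≠ b ∧ a ≠ c ∧ b ≠ c) {Q : Subgroup G} (hQ : (Q : Set G).Infinite) :
    ∃ m : M, ((fun h : G => h • m) '' (Q : Set G)).Infinite := by
  obtain ⟨t1, t2, t3, h12, h13, h23⟩ := h3
  by_contra hcon
  push_neg at hcon
  set f : G → M × M × M := fun g => (g • t1, g • t2, g • t3) with hf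
  have hfin : (f '' (Q : Set G)).Finite := by
    apply Set.Finite.subset ((hcon t1).prod ((hcon t2).prod (hcon t3)))
    rintro - ⟨g, hg, rfl⟩
    exact ⟨⟨g, hg, rfl⟩, ⟨g, hg, rfl⟩, ⟨g, hg, rfl⟩⟩
  obtain ⟨c, hc⟩ := exists_infinite_fiber' f hQ hfin
  obtain ⟨g₁, hg₁Q, hg₁c⟩ := hc.nonempty
  apply hc
  apply Set.Finite.subset
    ((finite_tripleStab hconv (t := (t1, t2, t3)) h12 h13 h23).image (fun k => g₁ * k))
  rintro g ⟨hgQ, hgc⟩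
  refine ⟨g₁⁻¹ * g, ?_, by show g₁ * (g₁⁻¹ * g) = g; rw [mul_inv_cancel_left]⟩
  have he : f g = f g₁ := hgc.trans hg₁c.symm
  simp only [hf, Prod.mk.injEq] at he
  have key : ∀ y : M, g • y = g₁ • y → (g₁⁻¹ * g) • y = y := fun y hy => by
    rw [mul_smul, hy, inv_smul_smul]
  show (g₁⁻¹ * g) • (t1, t2, t3) = (t1, t2, t3)
  show ((g₁⁻¹ * g) • t1, (g₁⁻¹ * g) • t2, (g₁⁻¹ * g) • t3) = (t1, t2, t3)
  rw [key t1 he.1, key t2 he.2.1, key t3 he.2.2]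

end Aux
section Aux2

open TopologicalSpace

variable {G M : Type*} [Group G] [TopologicalSpace M] [MulAction G M]

private lemma tool [CompactSpace M] [MetrizableSpace M] (hconv : IsConvergenceAction G M)
    {g : ℕ → G} (hg : Function.Injective g) {u v w : ℕ → M} {a₁ a₂ a₃ b₁ b₂ b₃ : M}
    (hu : Tendsto u atTop (𝓝 a₁)) (hv : Tendsto v atTop (𝓝 a₂))
    (hw : Tendsto w atTop (𝓝 a₃))
    (hgu : Tendsto (fun n => g n • u n) atTop (𝓝 b₁))
    (hgv : Tendsto (fun n => g n • v n) atTop (𝓝 b₂))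
    (hgw : Tendsto (fun n => g n • w n) atTop (𝓝 b₃))
    (h12 : a₁ ≠ a₂) (h13 : a₁ ≠ a₃) (h23 : a₂ ≠ a₃)
    (k12 : b₁ ≠ b₂) (k13 : b₁ ≠ b₃) (k23 : b₂ ≠ b₃) : False := by
  letI : MetricSpace M := TopologicalSpace.metrizableSpaceMetric M
  obtain ⟨N, hN⟩ := eventually_atTop.mp
    ((ev_ne hu hv h12).and ((ev_ne hu hw h13).and (ev_ne hv hw h23)))
  set t : ℕ → M × M × M := fun k => (u (k + N), v (k + N), w (k + N)) with ht
  set s : ℕ → M × M × M := fun k =>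
    (g (k + N) • u (k + N), g (k + N) • v (k + N), g (k + N) • w (k + N)) with hs
  have hshift : Tendsto (fun k : ℕ => k + N) atTop atTop := tendsto_add_atTop_nat N
  have htt : Tendsto t atTop (𝓝 (a₁, a₂, a₃)) :=
    (hu.comp hshift).prodMk_nhds ((hv.comp hshift).prodMk_nhds (hw.comp hshift))
  have hst : Tendsto s atTop (𝓝 (b₁, b₂, b₃)) :=
    (hgu.comp hshift).prodMk_nhds ((hgv.comp hshift).prodMk_nhds (hgw.comp hshift))
  have hK : IsCompact (insert (a₁, a₂, a₃) (Set.range t)) := htt.isCompact_insert_range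
  have hL : IsCompact (insert (b₁, b₂, b₃) (Set.range s)) := hst.isCompact_insert_range
  have hdist : ∀ x ∈ insert (a₁, a₂, a₃) (Set.range t) ∪ insert (b₁, b₂, b₃) (Set.range s),
      x.1 ≠ x.2.1 ∧ x.1 ≠ x.2.2 ∧ x.2.1 ≠ x.2.2 := by
    rintro x (hx | hx) <;> rcases hx with rfl | ⟨k, rfl⟩
    · exact ⟨h12, h13, h23⟩
    · exact ⟨(hN _ (Nat.le_add_left N k)).1, (hN _ (Nat.le_add_left N k)).2.1,
        (hN _ (Nat.le_add_left N k)).2.2⟩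
    · exact ⟨k12, k13, k23⟩
    · obtain ⟨e1, e2, e3⟩ := hN (k + N) (Nat.le_add_left N k)
      exact ⟨fun h => e1 (MulAction.injective (g (k + N)) h),
        fun h => e2 (MulAction.injective (g (k + N)) h),
        fun h => e3 (MulAction.injective (g (k + N)) h)⟩
  have hfin := hconv.2 _ _ hK hL hdist
  have hsubs : Set.range (fun k => g (k + N)) ⊆
      {x : G | ((x • insert (a₁, a₂, a₃) (Set.range t)) ∩
        insert (b₁, b₂, b₃) (Set.range s)).Nonempty} := by
    rintro - ⟨k, rfl⟩
    refine ⟨s k, Set.mem_smul_set.2 ⟨t k, Set.mem_insert_of_mem _ ⟨k, rfl⟩, rfl⟩,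
      Set.mem_insert_of_mem _ ⟨k, rfl⟩⟩
  exact Set.infinite_range_of_injective (hg.comp fun i j h => by omega)
    (hfin.subset hsubs)

private lemma eventually_ne_comp {u : ℕ → M} (hinj : Function.Injective u) {v : ℕ → ℕ}
    (hv : Tendsto v atTop atTop) (x : M) : ∀ᶠ n in atTop, u (v n) ≠ x := by
  by_cases hex : ∃ k, u k = x
  · obtain ⟨k₀, hk₀⟩ := hex
    filter_upwards [hv.eventually (eventually_gt_atTop k₀)] with n hn he
    exact absurd (hinj (he.trans hk₀.symm)) (by omega)
  · push_neg at hex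
    exact Eventually.of_forall fun n => hex (v n)

private lemma exists_acc_seq [CompactSpace M] [MetrizableSpace M] {Q : Subgroup G} {m : M}
    (h : ((fun h : G => h • m) '' (Q : Set G)).Infinite) :
    ∃ (h' : ℕ → G) (x : M), (∀ n, h' n ∈ Q) ∧ Function.Injective h' ∧
      Function.Injective (fun n => h' n • m) ∧ Tendsto (fun n => h' n • m) atTop (𝓝 x) := by
  letI : MetricSpace M := TopologicalSpace.metrizableSpaceMetric M
  set emb := h.natEmbedding with hememb
  have hval : ∀ n : ℕ, ∃ g : G, g ∈ (Q : Set G) ∧ g • m = (emb n : M) := fun n => (emb n).2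
  choose gf hgQ hgm using hval
  have hvinj : Function.Injective fun n => (emb n : M) :=
    fun i j hij => emb.injective (Subtype.val_injective hij)
  obtain ⟨x, φ, hφ, hx⟩ := CompactSpace.tendsto_subseq fun n => (emb n : M)
  refine ⟨gf ∘ φ, x, fun n => hgQ (φ n), ?_, ?_, ?_⟩
  · intro i j hij
    have : (emb (φ i) : M) = (emb (φ j) : M) := by
      rw [← hgm (φ i), ← hgm (φ j)]
      show (gf ∘ φ) i • m = (gf ∘ φ) j • m
      rw [hij]
    exact hφ.injective (hvinj this)
  · intro i j hij
    have : (emb (φ i) : M) = (emb (φ j) : M) := by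
      rw [← hgm (φ i), ← hgm (φ j)]; exact hij
    exact hφ.injective (hvinj this)
  · have : (fun n => (gf ∘ φ) n • m) = (fun n => (emb n : M)) ∘ φ := by
      funext n; exact hgm (φ n)
    rw [this]
    exact hx

end Aux2
section Aux3

open TopologicalSpace

variable {G M : Type*} [Group G] [TopologicalSpace M] [MulAction G M]

private lemma two_limit_points [CompactSpace M] [MetrizableSpace M]
    (hconv : IsConvergenceAction G M) (h3 : ∃ a b c : M, a ≠ b ∧ a ≠ c ∧ b ≠ c)
    {H : Subgroup G} {g₀ : G} (hg₀H : g₀ ∈ H) (hord : ¬IsOfFinOrder g₀)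
    (hfix : {x : M | g₀ • x = x}.encard = 2) :
    ∃ u v : M, u ∈ limitSet G M H ∧ v ∈ limitSet G M H ∧ u ≠ v := by
  letI : MetricSpace M := TopologicalSpace.metrizableSpaceMetric M
  set Γ := Subgroup.zpowers g₀ with hΓ
  have hΓH : Γ ≤ H := (Subgroup.zpowers_le).2 hg₀H
  have hzinj : Function.Injective fun n : ℤ => g₀ ^ n :=
    injective_zpow_iff_not_isOfFinOrder.2 hord
  have hΓinf : (Γ : Set G).Infinite := by
    refine (Set.infinite_range_of_injective hzinj).mono ?_
    rintro - ⟨n, rfl⟩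
    exact Subgroup.zpow_mem_zpowers g₀ n
  obtain ⟨m₀, hm₀⟩ := exists_infinite_orbit hconv h3 hΓinf
  haveI : Infinite M := Set.infinite_univ_iff.mp (hm₀.mono (Set.subset_univ _))
  obtain ⟨h', u, hmemΓ, hinj', hpinj, hlim⟩ := exists_acc_seq hm₀
  have huΛ : u ∈ limitSet G M Γ := by
    refine ⟨m₀, mem_closure_of_tendsto hlim ?_⟩
    filter_upwards [eventually_ne_comp hpinj tendsto_id u] with n hn
    exact ⟨⟨h' n, hmemΓ n, rfl⟩, hn⟩
  by_contra hcon
  push_neg at hcon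
  have hΛΓu : ∀ y ∈ limitSet G M Γ, y = u := fun y hy =>
    hcon y u (limitSet_mono hΓH hy) (limitSet_mono hΓH huΛ)
  obtain ⟨p₁, p₂, hp12, hpset⟩ := Set.encard_eq_two.mp hfix
  have hfix1 : g₀ • p₁ = p₁ := by
    have : p₁ ∈ {x : M | g₀ • x = x} := by rw [hpset]; exact Set.mem_insert _ _
    exact this
  have hfix2 : g₀ • p₂ = p₂ := by
    have : p₂ ∈ {x : M | g₀ • x = x} := by
      rw [hpset]; exact Set.mem_insert_of_mem _ rfl
    exact this
  obtain ⟨q, hqfix, hqu⟩ : ∃ q : M, g₀ • q = q ∧ q ≠ u := by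
    rcases eq_or_ne p₁ u with rfl | hne
    · exact ⟨p₂, hfix2, hp12.symm⟩
    · exact ⟨p₁, hfix1, hne⟩
  obtain ⟨m, hmmem⟩ := ((Set.toFinite {u, q, p₁, p₂}).infinite_compl).nonempty
  simp only [Set.mem_compl_iff, Set.mem_insert_iff, Set.mem_singleton_iff, not_or] at hmmem
  obtain ⟨hmu, hmq, hmp₁, hmp₂⟩ := hmmem
  -- injectivity of the ⟨g₀⟩-orbit of m
  have horb : Function.Injective fun n : ℤ => g₀ ^ n • m := by
    intro i j hij
    by_contra hne
    have hij' : g₀ ^ i • m = g₀ ^ j • m := hij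
    have hstabm : g₀ ^ (i - j) ∈ MulAction.stabilizer G m := by
      have h1 : (g₀ ^ (-j) * g₀ ^ i) • m = m := by
        rw [mul_smul, hij', ← mul_smul, ← zpow_add, neg_add_cancel, zpow_zero, one_smul]
      have he : -j + i = i - j := by ring
      rw [← zpow_add, he] at h1
      exact MulAction.mem_stabilizer_iff.mpr h1
    have hstab1 : g₀ ^ (i - j) ∈ MulAction.stabilizer G p₁ :=
      Subgroup.zpow_mem _ hfix1 _
    have hstab2 : g₀ ^ (i - j) ∈ MulAction.stabilizer G p₂ :=
      Subgroup.zpow_mem _ hfix2 _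
    have hsubs : Set.range (fun k : ℤ => g₀ ^ ((i - j) * k)) ⊆
        {g : G | g • ((m, p₁, p₂) : M × M × M) = (m, p₁, p₂)} := by
      rintro - ⟨k, rfl⟩
      show g₀ ^ ((i - j) * k) • ((m, p₁, p₂) : M × M × M) = (m, p₁, p₂)
      have e0 : ∀ y : M, g₀ ^ (i - j) ∈ MulAction.stabilizer G y →
          g₀ ^ ((i - j) * k) • y = y := by
        intro y hy
        rw [zpow_mul]
        exact Subgroup.zpow_mem _ hy _
      show (g₀ ^ ((i - j) * k) • m, g₀ ^ ((i - j) * k) • p₁, g₀ ^ ((i - j) * k) • p₂)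
          = (m, p₁, p₂)
      rw [e0 m hstabm, e0 p₁ hstab1, e0 p₂ hstab2]
    have hinj2 : Function.Injective fun k : ℤ => g₀ ^ ((i - j) * k) := by
      intro a b hab
      have := hzinj hab
      have hij0 : i - j ≠ 0 := sub_ne_zero.mpr hne
      exact mul_left_cancel₀ hij0 this
    exact Set.infinite_range_of_injective hinj2
      ((finite_tripleStab hconv (t := (m, p₁, p₂)) hmp₁ hmp₂ hp12).subset hsubs)
  -- all limits of injective orbit sequences are u
  have hmain : ∀ e : ℕ → ℤ, Function.Injective e →
      Tendsto (fun n => g₀ ^ (e n) • m) atTop (𝓝 u) := by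
    intro e he
    apply tendsto_of_subseq_tendsto
    intro ns hns
    obtain ⟨w, φ, hφ, hw⟩ := CompactSpace.tendsto_subseq fun n => g₀ ^ (e (ns n)) • m
    have hwΛ : w ∈ limitSet G M Γ := by
      refine ⟨m, mem_closure_of_tendsto hw ?_⟩
      have hiv : Tendsto (fun n => ns (φ n)) atTop atTop := hns.comp hφ.tendsto_atTop
      filter_upwards [eventually_ne_comp (u := fun n => g₀ ^ (e n) • m)
        (horb.comp he) hiv w] with n hn
      exact ⟨⟨g₀ ^ (e (ns (φ n))), Subgroup.zpow_mem_zpowers g₀ _, rfl⟩, hn⟩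
    rw [hΛΓu w hwΛ] at hw
    exact ⟨φ, hw⟩
  have hcnat : Function.Injective fun n : ℕ => (n : ℤ) := by
    intro a b hab
    have h : (a : ℤ) = (b : ℤ) := hab
    omega
  have hneg : Function.Injective fun n : ℕ => -(n : ℤ) := by
    intro a b hab
    have h : -(a : ℤ) = -(b : ℤ) := hab
    omega
  have hcu : Tendsto (fun n : ℕ => g₀ ^ ((n : ℤ)) • m) atTop (𝓝 u) := hmain _ hcnat
  have hdu : Tendsto (fun n : ℕ => g₀ ^ (-(n : ℤ)) • m) atTop (𝓝 u) := hmain _ hneg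
  -- Tool contradiction
  have himg1 : ∀ n : ℕ, g₀ ^ ((n : ℤ)) • (g₀ ^ (-(n : ℤ)) • m) = m := fun n => by
    rw [← mul_smul, ← zpow_add, add_neg_cancel, zpow_zero, one_smul]
  have himg2 : ∀ n : ℕ, g₀ ^ ((n : ℤ)) • q = q := fun n =>
    Subgroup.zpow_mem (MulAction.stabilizer G q) hqfix (n : ℤ)
  have hig1 : Tendsto (fun n : ℕ => g₀ ^ ((n : ℤ)) • (g₀ ^ (-(n : ℤ)) • m)) atTop (𝓝 m) := by
    rw [tendsto_congr himg1]; exact tendsto_const_nhds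
  have hig2 : Tendsto (fun n : ℕ => g₀ ^ ((n : ℤ)) • q) atTop (𝓝 q) := by
    rw [tendsto_congr himg2]; exact tendsto_const_nhds
  exact tool hconv (hzinj.comp hcnat)
    (u := fun n : ℕ => g₀ ^ (-(n : ℤ)) • m) (v := fun _ => q) (w := fun _ => m)
    hdu tendsto_const_nhds tendsto_const_nhds hig1 hig2 hcu
    hqu.symm (Ne.symm hmu) (Ne.symm hmq) hmq hmu hqu

end Aux3

section Aux4

open TopologicalSpace

variable {G M : Type*} [Group G] [TopologicalSpace M] [MulAction G M]

private lemma parabolic_fix_in_limitSet [CompactSpace M] [MetrizableSpace M]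
    (hconv : IsConvergenceAction G M) (h3 : ∃ a b c : M, a ≠ b ∧ a ≠ c ∧ b ≠ c)
    {Q : Subgroup G} {p : M} (hQ : (Q : Set G).Infinite)
    (hQp : ∀ g ∈ Q, g • p = p) : p ∈ limitSet G M Q := by
  letI : MetricSpace M := TopologicalSpace.metrizableSpaceMetric M
  by_contra hcon
  have hconc : ∀ m : M, p ∉ closure (((fun h : G => h • m) '' (Q : Set G)) \ {p}) :=
    fun m hm => hcon ⟨m, hm⟩
  obtain ⟨m₀, hm₀⟩ := exists_infinite_orbit hconv h3 hQ
  haveI : Infinite M := Set.infinite_univ_iff.mp (hm₀.mono (Set.subset_univ _))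
  obtain ⟨h', x, hmem, hinj, hpinj, hlim⟩ := exists_acc_seq hm₀
  have hm₀p : m₀ ≠ p := by
    rintro rfl
    refine hm₀ ((Set.finite_singleton m₀).subset ?_)
    rintro - ⟨g, hg, rfl⟩
    exact hQp g hg
  have hxp : x ≠ p := by
    rintro rfl
    refine hconc m₀ (mem_closure_of_tendsto hlim ?_)
    filter_upwards [eventually_ne_comp hpinj tendsto_id x] with n hn
    exact ⟨⟨h' n, hmem n, rfl⟩, hn⟩
  obtain ⟨e₂, he₂⟩ := ((Set.toFinite {m₀, p}).infinite_compl).nonempty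
  simp only [Set.mem_compl_iff, Set.mem_insert_iff, Set.mem_singleton_iff, not_or] at he₂
  obtain ⟨he₂m, he₂p⟩ := he₂
  obtain ⟨x₂, φ₁, hφ₁, hx₂⟩ := CompactSpace.tendsto_subseq fun n => h' n • e₂
  have h1mem : ∀ n, h' (φ₁ n) ∈ Q := fun n => hmem _
  have h1inj : Function.Injective fun n => h' (φ₁ n) := hinj.comp hφ₁.injective
  have h1lim : Tendsto (fun n => h' (φ₁ n) • m₀) atTop (𝓝 x) := hlim.comp hφ₁.tendsto_atTop
  have h1e₂ : Tendsto (fun n => h' (φ₁ n) • e₂) atTop (𝓝 x₂) := hx₂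
  have hfixQ : ∀ (g : G), g ∈ Q → ∀ y : M, g • y = p → y = p := by
    intro g hg y hy
    calc y = g⁻¹ • (g • y) := (inv_smul_smul _ _).symm
    _ = g⁻¹ • p := by rw [hy]
    _ = g⁻¹ • (g • p) := by rw [hQp g hg]
    _ = p := inv_smul_smul _ _
  have hx₂p : x₂ ≠ p := by
    rintro rfl
    refine hconc e₂ (mem_closure_of_tendsto hx₂ (Eventually.of_forall fun n => ?_))
    exact ⟨⟨h' (φ₁ n), hmem _, rfl⟩, fun he => he₂p (hfixQ _ (hmem _) _ he)⟩
  have hx₂x : x₂ = x := by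
    by_contra hne
    have hgp : Tendsto (fun n => h' (φ₁ n) • p) atTop (𝓝 p) := by
      have : (fun n => h' (φ₁ n) • p) = fun _ => p := funext fun n => hQp _ (hmem _)
      rw [this]; exact tendsto_const_nhds
    exact tool hconv h1inj
      (u := fun _ => m₀) (v := fun _ => e₂) (w := fun _ => p)
      tendsto_const_nhds tendsto_const_nhds tendsto_const_nhds
      h1lim h1e₂ hgp
      (Ne.symm he₂m) hm₀p he₂p (fun h => hne (h.symm)) hxp hx₂p
  rw [hx₂x] at h1e₂
  obtain ⟨y, hy⟩ := ((Set.toFinite {p, x}).infinite_compl).nonempty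
  simp only [Set.mem_compl_iff, Set.mem_insert_iff, Set.mem_singleton_iff, not_or] at hy
  obtain ⟨hyp, hyx⟩ := hy
  obtain ⟨w, φ₂, hφ₂, hw⟩ := CompactSpace.tendsto_subseq fun n => (h' (φ₁ n))⁻¹ • y
  have hwp : w ≠ p := by
    rintro rfl
    refine hconc y (mem_closure_of_tendsto hw (Eventually.of_forall fun n => ?_))
    refine ⟨⟨(h' (φ₁ (φ₂ n)))⁻¹, Q.inv_mem (hmem _), rfl⟩, fun he => hyp ?_⟩
    have he' : (h' (φ₁ (φ₂ n)))⁻¹ • y = w := he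
    calc y = (h' (φ₁ (φ₂ n))) • ((h' (φ₁ (φ₂ n)))⁻¹ • y) := (smul_inv_smul _ _).symm
    _ = (h' (φ₁ (φ₂ n))) • w := by rw [he']
    _ = w := hQp _ (hmem _)
  obtain ⟨e, hew, hep, helim⟩ : ∃ e : M, e ≠ w ∧ e ≠ p ∧
      Tendsto (fun n => h' (φ₁ (φ₂ n)) • e) atTop (𝓝 x) := by
    rcases eq_or_ne w m₀ with rfl | hwm
    · exact ⟨e₂, he₂m, he₂p, h1e₂.comp hφ₂.tendsto_atTop⟩
    · exact ⟨m₀, Ne.symm hwm, hm₀p, h1lim.comp hφ₂.tendsto_atTop⟩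
  have higy : Tendsto (fun n => h' (φ₁ (φ₂ n)) • ((h' (φ₁ (φ₂ n)))⁻¹ • y)) atTop (𝓝 y) := by
    have : (fun n => h' (φ₁ (φ₂ n)) • ((h' (φ₁ (φ₂ n)))⁻¹ • y)) = fun _ => y :=
      funext fun n => smul_inv_smul _ _
    rw [this]; exact tendsto_const_nhds
  have higp : Tendsto (fun n => h' (φ₁ (φ₂ n)) • p) atTop (𝓝 p) := by
    have : (fun n => h' (φ₁ (φ₂ n)) • p) = fun _ => p := funext fun n => hQp _ (hmem _)
    rw [this]; exact tendsto_const_nhds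
  exact tool hconv (h1inj.comp hφ₂.injective)
    (u := fun n => (h' (φ₁ (φ₂ n)))⁻¹ • y) (v := fun _ => p) (w := fun _ => e)
    hw tendsto_const_nhds tendsto_const_nhds
    higy higp helim
    hwp (fun h => hew h.symm) (Ne.symm hep)
    hyp hyx (Ne.symm hxp)

end Aux4

section Aux5

open TopologicalSpace

variable {G M : Type*} [Group G] [TopologicalSpace M] [MulAction G M]

private lemma pair_ne {M : Type*} (h3 : ∃ a b c : M, a ≠ b ∧ a ≠ c ∧ b ≠ c) (z : M) :
    ∃ q₁ q₂ : M, q₁ ≠ q₂ ∧ q₁ ≠ z ∧ q₂ ≠ z := by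
  obtain ⟨a, b, c, hab, hac, hbc⟩ := h3
  rcases eq_or_ne a z with rfl | ha
  · exact ⟨b, c, hbc, Ne.symm hab, Ne.symm hac⟩
  rcases eq_or_ne b z with rfl | hb
  · exact ⟨a, c, hac, ha, Ne.symm hbc⟩
  · exact ⟨a, b, hab, ha, hb⟩

private lemma pt_ne {M : Type*} (h3 : ∃ a b c : M, a ≠ b ∧ a ≠ c ∧ b ≠ c) (α β : M) :
    ∃ y : M, y ≠ α ∧ y ≠ β := by
  obtain ⟨q₁, q₂, h12, h1, h2⟩ := pair_ne h3 α
  rcases eq_or_ne q₁ β with rfl | hb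
  · exact ⟨q₂, h2, Ne.symm h12⟩
  · exact ⟨q₁, h1, hb⟩

private lemma conical_mem [CompactSpace M] [MetrizableSpace M]
    (hconv : IsConvergenceAction G M) (h3 : ∃ a b c : M, a ≠ b ∧ a ≠ c ∧ b ≠ c)
    {H J : Subgroup G} (hdqcJ : DynamicallyQuasiconvex G M J) {z : M}
    (hzJ : z ∈ limitSet G M J)
    (hconi : IsConicalLimitPoint G M H z)
    (hwit : ∃ w, w ∈ limitSet G M J ∧ w ≠ z) : z ∈ limitSet G M (H ⊓ J) := by
  letI : MetricSpace M := TopologicalSpace.metrizableSpaceMetric M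
  obtain ⟨h, a, b, hmemH, hab, hz, hq⟩ := hconi
  obtain ⟨w₀, hw₀J, hw₀z⟩ := hwit
  -- Step 1: the sequence takes infinitely many values
  have hrng : (Set.range h).Infinite := by
    intro hfin
    obtain ⟨c, hc⟩ := exists_infinite_fiber' h Set.infinite_univ (by rwa [Set.image_univ])
    have hcinf : {n : ℕ | h n = c}.Infinite := hc.mono fun x hx => hx.2
    have hfreq : ∃ᶠ n in atTop, h n = c := Nat.frequently_atTop_iff_infinite.mpr hcinf
    obtain ⟨q₁, q₂, hq12, hq1z, hq2z⟩ := pair_ne h3 z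
    have e2 : b = c • q₁ := tendsto_nhds_unique_of_frequently_eq (hq q₁ hq1z)
      tendsto_const_nhds (hfreq.mono fun n hn => by show h n • q₁ = c • q₁; rw [hn])
    have e3 : b = c • q₂ := tendsto_nhds_unique_of_frequently_eq (hq q₂ hq2z)
      tendsto_const_nhds (hfreq.mono fun n hn => by show h n • q₂ = c • q₂; rw [hn])
    exact hq12 (MulAction.injective c (e2.symm.trans e3))
  -- Step 2: metric separation of a and b
  have hd : (0 : ℝ) < dist a b := dist_pos.mpr hab
  set Kb := Metric.closedBall a (dist a b / 3) with hKb
  set Lb := Metric.closedBall b (dist a b / 3) with hLb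
  have hdisj : Disjoint Kb Lb := Metric.closedBall_disjoint_closedBall (by linarith)
  have hev : ∀ᶠ n in atTop,
      ((h n • limitSet G M J) ∩ Kb).Nonempty ∧ ((h n • limitSet G M J) ∩ Lb).Nonempty := by
    filter_upwards [hz.eventually (Metric.closedBall_mem_nhds a
      (show (0:ℝ) < dist a b / 3 by linarith)),
      (hq w₀ hw₀z).eventually (Metric.closedBall_mem_nhds b
      (show (0:ℝ) < dist a b / 3 by linarith))] with n h1 h2
    exact ⟨⟨h n • z, Set.smul_mem_smul_set hzJ, h1⟩,
      ⟨h n • w₀, Set.smul_mem_smul_set hw₀J, h2⟩⟩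
  obtain ⟨N, hN⟩ := eventually_atTop.mp hev
  have htail : (h '' {n | N ≤ n}).Infinite := by
    intro hfin
    apply hrng
    have hsplit : Set.range h ⊆ h '' {n | N ≤ n} ∪ h '' {n | n < N} := by
      rintro - ⟨n, rfl⟩
      rcases le_or_gt N n with hn | hn
      · exact Or.inl ⟨n, hn, rfl⟩
      · exact Or.inr ⟨n, hn, rfl⟩
    exact (hfin.union ((Set.finite_lt_nat N).image h)).subset hsplit
  have hdq := hdqcJ Kb Lb Metric.isClosed_closedBall Metric.isClosed_closedBall hdisj
  have himfin : ((fun g : G => (g : G ⧸ J)) '' (h '' {n | N ≤ n})).Finite := by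
    refine hdq.subset (Set.image_mono ?_)
    rintro - ⟨n, hn, rfl⟩
    exact hN n hn
  obtain ⟨c, hcfib⟩ := exists_infinite_fiber' (fun g : G => (g : G ⧸ J)) htail himfin
  set emb := hcfib.natEmbedding with hememb
  have hval : ∀ k : ℕ, ∃ n : ℕ, N ≤ n ∧ h n = (emb k : G) := by
    intro k
    obtain ⟨⟨n, hn, he⟩, -⟩ := (emb k).2
    exact ⟨n, hn, he⟩
  choose ι hιN hιh using hval
  have hcoset : ∀ k : ℕ, (((emb k : G) : G ⧸ J)) = c := fun k => (emb k).2.2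
  have hvinj : Function.Injective fun k : ℕ => (emb k : G) :=
    fun i j hij => emb.injective (Subtype.val_injective hij)
  have hιinj : Function.Injective ι := by
    intro i j hij
    apply hvinj
    show (emb i : G) = (emb j : G)
    rw [← hιh i, ← hιh j, hij]
  have hιtend : Tendsto ι atTop atTop := hιinj.nat_tendsto_atTop
  have hg₁H : (emb 0 : G) ∈ H := by rw [← hιh 0]; exact hmemH _
  set seq : ℕ → G := fun k => (emb 0 : G)⁻¹ * (emb k : G) with hseq
  have hseqH : ∀ k, seq k ∈ H := fun k =>
    H.mul_mem (H.inv_mem hg₁H) (by rw [← hιh k]; exact hmemH _)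
  have hseqJ : ∀ k, seq k ∈ J := fun k =>
    QuotientGroup.eq.mp ((hcoset 0).trans (hcoset k).symm)
  have hseqinj : Function.Injective seq := by
    intro i j hij
    apply hvinj
    exact mul_left_cancel (hij : (emb 0 : G)⁻¹ * (emb i : G) = (emb 0 : G)⁻¹ * (emb j : G))
  have ha'b' : (emb 0 : G)⁻¹ • a ≠ (emb 0 : G)⁻¹ • b :=
    fun he => hab (MulAction.injective _ he)
  have hseqz : Tendsto (fun k => seq k • z) atTop (𝓝 ((emb 0 : G)⁻¹ • a)) := by
    have he : ∀ k, seq k • z = (emb 0 : G)⁻¹ • (h (ι k) • z) := fun k => by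
      show ((emb 0 : G)⁻¹ * (emb k : G)) • z = _
      rw [mul_smul, ← hιh k]
    rw [tendsto_congr he]
    exact ((hconv.1 (emb 0 : G)⁻¹).tendsto a).comp (hz.comp hιtend)
  have hseqq : ∀ q : M, q ≠ z →
      Tendsto (fun k => seq k • q) atTop (𝓝 ((emb 0 : G)⁻¹ • b)) := by
    intro q hqz
    have he : ∀ k, seq k • q = (emb 0 : G)⁻¹ • (h (ι k) • q) := fun k => by
      show ((emb 0 : G)⁻¹ * (emb k : G)) • q = _
      rw [mul_smul, ← hιh k]
    rw [tendsto_congr he]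
    exact ((hconv.1 (emb 0 : G)⁻¹).tendsto b).comp ((hq q hqz).comp hιtend)
  obtain ⟨x, hxa, hxb⟩ := pt_ne h3 ((emb 0 : G)⁻¹ • a) ((emb 0 : G)⁻¹ • b)
  refine ⟨x, ?_⟩
  obtain ⟨w', φ, hφ, hw'⟩ := CompactSpace.tendsto_subseq fun k => (seq k)⁻¹ • x
  have hw'z : w' = z := by
    by_contra hne
    obtain ⟨e, hez, hew⟩ := pt_ne h3 z w'
    have higx : Tendsto (fun n => seq (φ n) • ((seq (φ n))⁻¹ • x)) atTop (𝓝 x) := by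
      have heq : (fun n => seq (φ n) • ((seq (φ n))⁻¹ • x)) = fun _ => x :=
        funext fun n => smul_inv_smul _ _
      rw [heq]; exact tendsto_const_nhds
    exact tool hconv (hseqinj.comp hφ.injective)
      (u := fun n => (seq (φ n))⁻¹ • x) (v := fun _ => z) (w := fun _ => e)
      hw' tendsto_const_nhds tendsto_const_nhds
      higx (hseqz.comp hφ.tendsto_atTop) ((hseqq e hez).comp hφ.tendsto_atTop)
      hne (Ne.symm hew) (Ne.symm hez)
      hxa hxb ha'b'
  rw [hw'z] at hw'
  refine mem_closure_of_tendsto hw' ?_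
  filter_upwards [(hseqz.comp hφ.tendsto_atTop).eventually_ne (Ne.symm hxa)] with n hn
  refine ⟨⟨(seq (φ n))⁻¹, Subgroup.inv_mem _ (Subgroup.mem_inf.mpr ⟨hseqH _, hseqJ _⟩), rfl⟩,
    fun he => hn ?_⟩
  have he' : (seq (φ n))⁻¹ • x = z := he
  show seq (φ n) • z = x
  rw [← he', smul_inv_smul]

private lemma parabolic_mem [CompactSpace M] [MetrizableSpace M]
    (hconv : IsConvergenceAction G M) (h3 : ∃ a b c : M, a ≠ b ∧ a ≠ c ∧ b ≠ c)
    {H J : Subgroup G} (hdqcJ : DynamicallyQuasiconvex G M J) {p : M}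
    (hpH : p ∈ limitSet G M H)
    (hbp : IsBoundedParabolicPoint G M H p)
    (hsub : limitSet G M H ⊆ limitSet G M J)
    (hq : ∃ q, q ∈ limitSet G M H ∧ q ≠ p) : p ∈ limitSet G M (H ⊓ J) := by
  letI : MetricSpace M := TopologicalSpace.metrizableSpaceMetric M
  obtain ⟨hPinf, -, -⟩ := hbp
  obtain ⟨q, hqH, hqp⟩ := hq
  have hd : (0 : ℝ) < dist p q := dist_pos.mpr (Ne.symm hqp)
  set U := Metric.ball p (dist p q) with hU
  have hqU : q ∉ U := by
    intro hc
    rw [hU, Metric.mem_ball, dist_comm] at hc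
    exact lt_irrefl _ hc
  have hdisj : Disjoint ({p} : Set M) Uᶜ :=
    Set.disjoint_singleton_left.mpr fun hc => hc (Metric.mem_ball_self hd)
  have hdq := hdqcJ {p} Uᶜ isClosed_singleton Metric.isOpen_ball.isClosed_compl hdisj
  have hPsub : ((H ⊓ MulAction.stabilizer G p : Subgroup G) : Set G) ⊆
      {g : G | ((g • limitSet G M J) ∩ {p}).Nonempty ∧
        ((g • limitSet G M J) ∩ Uᶜ).Nonempty} := by
    intro g hg
    obtain ⟨hgH, hgp⟩ := Subgroup.mem_inf.mp hg
    constructor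
    · exact ⟨p, Set.mem_smul_set.mpr ⟨p, hsub hpH, hgp⟩, rfl⟩
    · refine ⟨q, ?_, hqU⟩
      have h1 : q ∈ g • limitSet G M H := by
        rw [smul_limitSet hconv.1 hgH]
        exact hqH
      exact Set.smul_set_mono hsub h1
  have himfin : ((fun g : G => (g : G ⧸ J)) ''
      ((H ⊓ MulAction.stabilizer G p : Subgroup G) : Set G)).Finite :=
    hdq.subset (Set.image_mono hPsub)
  obtain ⟨c, hcfib⟩ := exists_infinite_fiber' _ hPinf himfin
  obtain ⟨g₁, hg₁P, hg₁c⟩ := hcfib.nonempty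
  have hsub2 : (fun g => g₁⁻¹ * g) ''
      {x | x ∈ ((H ⊓ MulAction.stabilizer G p : Subgroup G) : Set G) ∧ ((x : G ⧸ J) = c)} ⊆
      (((H ⊓ MulAction.stabilizer G p) ⊓ J : Subgroup G) : Set G) := by
    rintro - ⟨g, ⟨hgP, hgc⟩, rfl⟩
    refine Subgroup.mem_inf.mpr ⟨mul_mem (inv_mem hg₁P) hgP, ?_⟩
    exact QuotientGroup.eq.mp (hg₁c.trans hgc.symm)
  have hQinf : ((((H ⊓ MulAction.stabilizer G p) ⊓ J : Subgroup G)) : Set G).Infinite :=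
    (hcfib.image ((mul_right_injective g₁⁻¹).injOn)).mono hsub2
  have hfixPJ : ∀ g ∈ (H ⊓ MulAction.stabilizer G p) ⊓ J, g • p = p := fun g hg =>
    (Subgroup.mem_inf.mp (Subgroup.mem_inf.mp hg).1).2
  have hple := parabolic_fix_in_limitSet hconv h3 hQinf hfixPJ
  refine limitSet_mono ?_ hple
  exact le_inf ((inf_le_left : (H ⊓ MulAction.stabilizer G p) ⊓ J ≤ _).trans inf_le_left)
    inf_le_right

end Aux5

/-- if `H` and `J` are dynamically quasiconvex, all their limit points are
conical or bounded parabolic, and `Λ(H) ⊆ Λ(J)`, then either `Λ(H ∩ J) = Λ(H)` or `H`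
is a parabolic subgroup. -/
theorem limit_set_inclusion_dichotomy
    {G M : Type*} [Group G] [TopologicalSpace M] [CompactSpace M]
    [TopologicalSpace.MetrizableSpace M] [MulAction G M]
    (hconv : IsConvergenceAction G M)
    (h3 : ∃ a b c : M, a ≠ b ∧ a ≠ c ∧ b ≠ c)
    (H J : Subgroup G)
    (hdqcH : DynamicallyQuasiconvex G M H) (hdqcJ : DynamicallyQuasiconvex G M J)
    (hgfH : ∀ z ∈ limitSet G M H,
      IsConicalLimitPoint G M H z ∨ IsBoundedParabolicPoint G M H z)
    (hgfJ : ∀ z ∈ limitSet G M J,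
      IsConicalLimitPoint G M J z ∨ IsBoundedParabolicPoint G M J z)
    (hsub : limitSet G M H ⊆ limitSet G M J) :
    limitSet G M (H ⊓ J) = limitSet G M H ∨
      ((H : Set G).Infinite ∧ ∀ g ∈ H, ¬ IsLoxodromic G M g) := by
  letI : MetricSpace M := TopologicalSpace.metrizableSpaceMetric M
  by_cases hHfin : (H : Set G).Finite
  · left
    have h1 : limitSet G M H = ∅ := limitSet_of_finite hHfin
    have h2 : limitSet G M (H ⊓ J) = ∅ := limitSet_of_finite (hHfin.subset (by
      intro g hg
      exact (Subgroup.mem_inf.mp hg).1))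
    rw [h1, h2]
  by_cases hlox : ∀ g ∈ H, ¬ IsLoxodromic G M g
  · exact Or.inr ⟨hHfin, hlox⟩
  push_neg at hlox
  obtain ⟨g₀, hg₀H, hg₀lox⟩ := hlox
  left
  refine Set.Subset.antisymm (limitSet_mono inf_le_left) ?_
  intro z hz
  obtain ⟨u, v, huH, hvH, huv⟩ := two_limit_points hconv h3 hg₀H hg₀lox.1 hg₀lox.2
  have hwit : ∃ w, w ∈ limitSet G M H ∧ w ≠ z := by
    rcases eq_or_ne u z with rfl | hu
    · exact ⟨v, hvH, fun hvz => huv hvz.symm⟩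
    · exact ⟨u, huH, hu⟩
  rcases hgfH z hz with hcon | hpar
  · obtain ⟨w, hwH, hwz⟩ := hwit
    exact conical_mem hconv h3 hdqcJ (hsub hz) hcon ⟨w, hsub hwH, hwz⟩
  · exact parabolic_mem hconv h3 hdqcJ hz hpar hsub hwit
end

section
/- Let G be a group with a convergence group action on a compact metrizable space M with at least three points, and let H be a dynamically quasiconvex subgroup of G that is maximal in its limit set, i.e. H = Stab_G(Λ(H)), the setwise stabilizer of Λ(H) in G. Then for any g ∈ G \ H, one has gΛ(H) ⊄ Λ(H), i.e. the inclusion gΛ(H) ⊆ Λ(H) fails. -/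
open Pointwise Filter Topology Set

/-- if `H` is dynamically quasiconvex and maximal in its limit set, i.e.
`H = Stab_G(Λ(H))`, then no `g ∈ G \ H` satisfies `gΛ(H) ⊆ Λ(H)`. -/
theorem no_proper_limit_set_inclusion_of_maximal
    {G M : Type*} [Group G] [TopologicalSpace M] [CompactSpace M]
    [TopologicalSpace.MetrizableSpace M] [MulAction G M]
    (hconv : IsConvergenceAction G M)
    (h3 : ∃ a b c : M, a ≠ b ∧ a ≠ c ∧ b ≠ c)
    (H : Subgroup G) (hdqc : DynamicallyQuasiconvex G M H)
    (hmax : (H : Set G) = {g : G | g • limitSet G M H = limitSet G M H}) :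
    ∀ g : G, g ∉ H → ¬ (g • limitSet G M H ⊆ limitSet G M H) := by
  intro g hg hsub
  set Λ := limitSet G M H with hΛ
  have hgeq : g • Λ ≠ Λ := fun h =>
    hg (by rw [← SetLike.mem_coe, hmax]; exact h)
  by_cases hss : Λ.Subsingleton
  · rcases Λ.eq_empty_or_nonempty with he | ⟨p, hp⟩
    · exact hgeq (by rw [he]; simp)
    · have hΛp : Λ = {p} := hss.eq_singleton_of_mem hp
      have hmem : g • p ∈ ({p} : Set M) := by
        rw [← hΛp]; exact hsub (smul_mem_smul_set hp)
      apply hgeq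
      rw [hΛp, Set.smul_set_singleton, Set.mem_singleton_iff.mp hmem]
  · have hA : ∀ n : ℕ, Λ ⊆ (g⁻¹) ^ n • Λ := by
      intro n
      induction n with
      | zero => simp
      | succ n ih =>
        have h1 : Λ ⊆ g⁻¹ • Λ := fun x hx =>
          ⟨g • x, hsub (smul_mem_smul_set hx), by simp⟩
        calc Λ ⊆ g⁻¹ • Λ := h1
          _ ⊆ g⁻¹ • ((g⁻¹) ^ n • Λ) := Set.smul_set_mono ih
          _ = (g⁻¹) ^ (n + 1) • Λ := by rw [smul_smul, ← pow_succ']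
    have hpow : ∀ k : ℕ, 1 ≤ k → g ^ k ∉ H := by
      intro k hk hmemH
      have hk' : g ^ k • Λ = Λ := by
        have : (g ^ k : G) ∈ (H : Set G) := hmemH
        rw [hmax] at this; exact this
      obtain ⟨j, rfl⟩ : ∃ j, k = j + 1 := ⟨k - 1, by omega⟩
      have h3 : g ^ (j + 1) • Λ ⊆ g ^ (j + 1) • ((g⁻¹) ^ j • Λ) :=
        Set.smul_set_mono (hA j)
      have h4 : g ^ (j + 1) * (g⁻¹) ^ j = g := by group
      rw [smul_smul, h4, hk'] at h3
      exact hgeq (le_antisymm hsub h3)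
    have key : ∀ n m : ℕ, m < n →
        ((((g⁻¹) ^ n : G)) : G ⧸ H) = (((g⁻¹) ^ m : G) : G ⧸ H) → False := by
      intro n m h hnm
      have hH : ((g⁻¹) ^ n)⁻¹ * (g⁻¹) ^ m ∈ H := QuotientGroup.eq.mp hnm
      have he : ((g⁻¹) ^ n)⁻¹ * (g⁻¹) ^ m = g ^ (n - m) := by
        rw [inv_pow, inv_inv, inv_pow, mul_inv_eq_iff_eq_mul, ← pow_add,
          Nat.sub_add_cancel h.le]
      exact hpow (n - m) (by omega) (he ▸ hH)
    have hinj : Function.Injective (fun n : ℕ => ((((g⁻¹) ^ n : G)) : G ⧸ H)) := by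
      intro n m hnm
      by_contra hne
      rcases Nat.lt_or_ge m n with h | h
      · exact key n m h hnm
      · exact key m n (by omega) hnm.symm
    obtain ⟨a, ha, b, hb, hab⟩ := Set.not_subsingleton_iff.mp hss
    have hfin := hdqc {a} {b} isClosed_singleton isClosed_singleton
      (Set.disjoint_singleton.mpr hab)
    apply hfin.not_infinite
    apply Set.infinite_of_injective_forall_mem hinj
    intro n
    exact ⟨(g⁻¹) ^ n, ⟨⟨a, hA n ha, rfl⟩, ⟨b, hA n hb, rfl⟩⟩, rfl⟩
end

section
/- Let G be a finitely generated group with finite symmetric generating set S and nontrivial Floyd boundary ∂G, and let H be an undistorted finitely generated subgroup of G with finite generating set T ⊆ S such that the limit set Λ(H) ⊆ ∂G satisfies |Λ(H)| ≥ 2. Then there exists a constant ε₀ ≥ 0 such that for any two distinct points p, q ∈ Λ(H) there exists an ε₀-quasigeodesic γ in the Cayley graph Γ(G,S) between p and q whose vertex set lies in H, i.e. a bi-infinite ε₀-quasigeodesic path in Γ(G,S) with all vertices in H whose two ends converge in the Floyd completion 𝔾 to p and q respectively. -/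
open Pointwise Filter Topology Set

section Floyd

variable {G : Type*} [Group G]

/-- The word metric on `G` determined by a generating set `S`: the length of a shortest
word over `S` representing `x⁻¹ * y`. -/
noncomputable def wordDist (S : Set G) (x y : G) : ℕ :=
  sInf {n : ℕ | ∃ l : List G, (∀ a ∈ l, a ∈ S) ∧ l.prod = x⁻¹ * y ∧ l.length = n}

/-- The Floyd length of the edge of the Cayley graph `Γ(G,S)` joining `x` and `y`:
the edge is rescaled by the factor `f(d_S(1,e)) = d_S(1,e)⁻²` (where `d_S(1,e)` is the
word distance from the identity to the edge, and edges at the identity keep length 1). -/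
noncomputable def floydEdgeWeight (S : Set G) (x y : G) : ℝ :=
  ((max 1 (min (wordDist S 1 x) (wordDist S 1 y)) : ℕ) : ℝ)⁻¹ ^ 2

/-- The Floyd length of an edge path in the Cayley graph, recorded as its list of
vertices: the sum of the rescaled lengths of its edges. -/
noncomputable def floydLength (S : Set G) : List G → ℝ
  | [] => 0
  | [_] => 0
  | a :: b :: l => floydEdgeWeight S a b + floydLength S (b :: l)

/-- `l` is (the list of vertices of) an edge path in the Cayley graph `Γ(G,S)` from `x`
to `y`: consecutive vertices are at word distance 1. -/
def IsEdgePath (S : Set G) (x y : G) (l : List G) : Prop :=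
  l.head? = some x ∧ l.getLast? = some y ∧ List.Chain' (fun a b => wordDist S a b = 1) l

/-- The Floyd metric on `G`: the infimum of Floyd lengths of edge paths joining the two
points. -/
noncomputable def floydDist (S : Set G) (x y : G) : ℝ :=
  sInf {r : ℝ | ∃ l : List G, IsEdgePath S x y l ∧ floydLength S l = r}

/-- The limit set in the Floyd completion `𝔾` (with `ι : G → 𝔾` the canonical map) of a
subgroup `H ≤ G`: the set of accumulation points of the `H`-orbits of points of `G`. -/
def floydLimitSet {𝔾 : Type*} [TopologicalSpace 𝔾] (ι : G → 𝔾) (H : Subgroup G) :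
    Set 𝔾 :=
  {x : 𝔾 | ∃ g₀ : G, x ∈ closure (((fun h : G => ι (h * g₀)) '' (H : Set G)) \ {x})}

/-- `H` (with finite generating set `T`) is undistorted in `G` (with finite generating
set `S`): the inclusion `(H, d_T) → (G, d_S)` is a quasi-isometric embedding. -/
def IsUndistorted (S T : Set G) (H : Subgroup G) : Prop :=
  ∃ ε : ℝ, 1 ≤ ε ∧ ∀ x ∈ H, ∀ y ∈ H,
    ε⁻¹ * (wordDist T x y : ℝ) - ε ≤ (wordDist S x y : ℝ) ∧
    (wordDist S x y : ℝ) ≤ ε * (wordDist T x y : ℝ) + ε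

end Floyd


namespace QGAux

variable {G : Type*} [Group G]

theorem exists_word_of_mem_closure {S : Set G} (hsym : ∀ s ∈ S, s⁻¹ ∈ S) {x : G}
    (hx : x ∈ Subgroup.closure S) : ∃ l : List G, (∀ a ∈ l, a ∈ S) ∧ l.prod = x := by
  induction hx using Subgroup.closure_induction with
  | mem x hx => exact ⟨[x], by simpa using hx, by simp⟩
  | one => exact ⟨[], by simp, by simp⟩
  | mul x y hx hy ihx ihy =>
    obtain ⟨l1, h1, e1⟩ := ihx
    obtain ⟨l2, h2, e2⟩ := ihy
    refine ⟨l1 ++ l2, ?_, by simp [e1, e2]⟩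
    intro a ha
    rcases List.mem_append.1 ha with h | h
    exacts [h1 a h, h2 a h]
  | inv x hx ih =>
    obtain ⟨l, h1, e1⟩ := ih
    refine ⟨(l.map (·⁻¹)).reverse, ?_, ?_⟩
    · intro a ha
      simp only [List.mem_reverse, List.mem_map] at ha
      obtain ⟨b, hb, rfl⟩ := ha
      exact hsym b (h1 b hb)
    · rw [← List.prod_inv_reverse, e1]

theorem wordDist_le_length {S : Set G} {x y : G} {l : List G} (hl : ∀ a ∈ l, a ∈ S)
    (hp : l.prod = x⁻¹ * y) : wordDist S x y ≤ l.length :=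
  Nat.sInf_le ⟨l, hl, hp, rfl⟩

theorem wordDist_self (S : Set G) (x : G) : wordDist S x x = 0 := by
  have h := wordDist_le_length (S := S) (x := x) (y := x) (l := ([] : List G))
    (by simp) (by simp)
  simpa using h

theorem wordDist_eq_of_eq (S : Set G) {x y : G} (h : x = y) : wordDist S x y = 0 :=
  h ▸ wordDist_self S x

/-- minimal word, given that some word exists -/
theorem exists_min_word {S : Set G} {x y : G}
    (hw : ∃ l : List G, (∀ a ∈ l, a ∈ S) ∧ l.prod = x⁻¹ * y) :
    ∃ l : List G, (∀ a ∈ l, a ∈ S) ∧ l.prod = x⁻¹ * y ∧ l.length = wordDist S x y := by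
  obtain ⟨l, h1, h2⟩ := hw
  have : wordDist S x y ∈ {n : ℕ | ∃ l : List G, (∀ a ∈ l, a ∈ S) ∧ l.prod = x⁻¹ * y ∧
      l.length = n} := Nat.sInf_mem ⟨l.length, l, h1, h2, rfl⟩
  exact this

theorem eq_of_wordDist_eq_zero {S : Set G} {x y : G}
    (hw : ∃ l : List G, (∀ a ∈ l, a ∈ S) ∧ l.prod = x⁻¹ * y)
    (h : wordDist S x y = 0) : x = y := by
  obtain ⟨l, -, hp, hlen⟩ := exists_min_word hw
  rw [h, List.length_eq_zero_iff] at hlen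
  subst hlen
  simp only [List.prod_nil] at hp
  have : x⁻¹ * y = 1 := hp.symm
  have := inv_mul_eq_one.1 this
  exact this

theorem wordDist_ne_zero_of_ne {S : Set G} {x y : G}
    (hw : ∃ l : List G, (∀ a ∈ l, a ∈ S) ∧ l.prod = x⁻¹ * y)
    (h : x ≠ y) : wordDist S x y ≠ 0 := fun h0 => h (eq_of_wordDist_eq_zero hw h0)

theorem wordDist_mul_left (S : Set G) (g x y : G) :
    wordDist S (g * x) (g * y) = wordDist S x y := by
  unfold wordDist
  congr 1
  ext n
  constructor <;> (rintro ⟨l, h1, h2, h3⟩; exact ⟨l, h1, by rw [h2]; group, h3⟩)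

theorem wordDist_triangle {S : Set G} {x y z : G}
    (hxy : ∃ l : List G, (∀ a ∈ l, a ∈ S) ∧ l.prod = x⁻¹ * y)
    (hyz : ∃ l : List G, (∀ a ∈ l, a ∈ S) ∧ l.prod = y⁻¹ * z) :
    wordDist S x z ≤ wordDist S x y + wordDist S y z := by
  obtain ⟨l1, h1, e1, len1⟩ := exists_min_word hxy
  obtain ⟨l2, h2, e2, len2⟩ := exists_min_word hyz
  calc wordDist S x z ≤ (l1 ++ l2).length := by
        refine wordDist_le_length ?_ ?_
        · intro a ha
          rcases List.mem_append.1 ha with h | h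
          exacts [h1 a h, h2 a h]
        · simp [e1, e2, mul_assoc]
    _ = _ := by simp [len1, len2]

theorem wordDist_symm {S : Set G} (hsym : ∀ s ∈ S, s⁻¹ ∈ S) (x y : G) :
    wordDist S x y = wordDist S y x := by
  unfold wordDist
  congr 1
  ext n
  constructor
  all_goals
    rintro ⟨l, hl, hp, rfl⟩
    refine ⟨(l.map (·⁻¹)).reverse, ?_, ?_, by simp⟩
    · intro a ha
      simp only [List.mem_reverse, List.mem_map] at ha
      obtain ⟨b, hb, rfl⟩ := ha
      exact hsym b (hl b hb)
    · rw [← List.prod_inv_reverse, hp]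
      group

end QGAux

-- chunk2 : paths and Floyd estimates
namespace QGAux

variable {G : Type*} [Group G]

/-- vertices `v 0, v 1, ..., v n` as a list -/
def pathList (v : ℕ → G) : ℕ → List G
  | 0 => [v 0]
  | n + 1 => v 0 :: pathList (fun i => v (i + 1)) n

theorem pathList_ne_nil (v : ℕ → G) (n : ℕ) : pathList v n ≠ [] := by
  cases n <;> simp [pathList]

theorem pathList_head (v : ℕ → G) (n : ℕ) : (pathList v n).head? = some (v 0) := by
  cases n <;> simp [pathList]

theorem pathList_getLast (v : ℕ → G) (n : ℕ) : (pathList v n).getLast? = some (v n) := by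
  induction n generalizing v with
  | zero => simp [pathList]
  | succ n ih =>
    rw [pathList, List.getLast?_cons, ih]
    simp

theorem pathList_chain' (S : Set G) (v : ℕ → G) (n : ℕ)
    (hv : ∀ i < n, wordDist S (v i) (v (i + 1)) = 1) :
    List.Chain' (fun a b => wordDist S a b = 1) (pathList v n) := by
  induction n generalizing v with
  | zero => exact List.isChain_singleton _
  | succ n ih =>
    rw [pathList]
    rcases n with - | m
    · simp [pathList]
      exact List.isChain_pair.2 (hv 0 (by omega))
    · rw [pathList]
      refine List.IsChain.cons_cons ?_ ?_
      · exact hv 0 (by omega)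
      · have := ih (fun i => v (i + 1)) (fun i hi => hv (i + 1) (by omega))
        rw [pathList] at this
        exact this

theorem floydLength_pathList (S : Set G) (v : ℕ → G) (n : ℕ) :
    floydLength S (pathList v n) =
      ∑ i ∈ Finset.range n, floydEdgeWeight S (v i) (v (i + 1)) := by
  induction n generalizing v with
  | zero => simp [pathList, floydLength]
  | succ n ih =>
    rcases n with - | m
    · simp [pathList, floydLength]
    · rw [pathList, pathList]
      rw [show floydLength S (v 0 :: v 1 :: pathList (fun i => v (i + 1 + 1)) m) =
        floydEdgeWeight S (v 0) (v 1) +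
          floydLength S (v 1 :: pathList (fun i => v (i + 1 + 1)) m) from rfl]
      have h2 := ih (fun i => v (i + 1))
      rw [pathList] at h2
      rw [h2, Finset.sum_range_succ' (fun i => floydEdgeWeight S (v i) (v (i + 1)))]
      ring

theorem floydLength_nonneg (S : Set G) (l : List G) : 0 ≤ floydLength S l := by
  induction l with
  | nil => simp [floydLength]
  | cons a l ih =>
    cases l with
    | nil => simp [floydLength]
    | cons b l =>
      rw [floydLength]
      have h : (0:ℝ) ≤ floydEdgeWeight S a b := by
        unfold floydEdgeWeight; positivity
      linarith

theorem floydDist_le_floydLength {S : Set G} {x y : G} {l : List G}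
    (hl : IsEdgePath S x y l) : floydDist S x y ≤ floydLength S l := by
  apply csInf_le
  · exact ⟨0, fun r ⟨l', _, hr⟩ => hr ▸ floydLength_nonneg S l'⟩
  · exact ⟨l, hl, rfl⟩

/-- Main upper bound: distance in the Floyd completion along a chain of edges. -/
theorem dist_le_sum_weights {𝔾 : Type*} [MetricSpace 𝔾] {S : Set G} {ι : G → 𝔾}
    (hdist : ∀ x y : G, dist (ι x) (ι y) = floydDist S x y)
    (v : ℕ → G) (n : ℕ) (hv : ∀ i < n, wordDist S (v i) (v (i + 1)) = 1) :
    dist (ι (v 0)) (ι (v n)) ≤ ∑ i ∈ Finset.range n, floydEdgeWeight S (v i) (v (i + 1)) := by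
  rw [hdist, ← floydLength_pathList S v n]
  exact floydDist_le_floydLength ⟨pathList_head v n, pathList_getLast v n, pathList_chain' S v n hv⟩

/-- edge weight bound from a lower bound on the levels of the endpoints -/
theorem floydEdgeWeight_le {S : Set G} {x y : G} {r : ℝ}
    (hx : r ≤ (wordDist S 1 x : ℝ)) (hy : r ≤ (wordDist S 1 y : ℝ)) :
    floydEdgeWeight S x y ≤ (max 1 r)⁻¹ ^ 2 := by
  unfold floydEdgeWeight
  have h1 : (max 1 r : ℝ) ≤ ((max 1 (min (wordDist S 1 x) (wordDist S 1 y)) : ℕ) : ℝ) := by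
    push_cast
    refine max_le_max le_rfl ?_
    exact le_min hx hy
  have h2 : (0:ℝ) < max 1 r := lt_of_lt_of_le zero_lt_one (le_max_left _ _)
  have := inv_anti₀ h2 h1
  calc ((max 1 (min (wordDist S 1 x) (wordDist S 1 y)) : ℕ) : ℝ)⁻¹ ^ 2
      ≤ (max 1 r)⁻¹ ^ 2 := by
        apply pow_le_pow_left₀ (by positivity) this
  -- done

theorem floydEdgeWeight_le_one (S : Set G) (x y : G) : floydEdgeWeight S x y ≤ 1 := by
  have h := floydEdgeWeight_le (S := S) (x := x) (y := y) (r := 0) (by positivity) (by positivity)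
  simpa using h

end QGAux
-- chunk3 : sums, and word-metric specifics
namespace QGAux

theorem sum_inv_sq_tail (n K : ℕ) (hn : 1 ≤ n) :
    ∑ i ∈ Finset.range K, (((n + i : ℕ) : ℝ))⁻¹ ^ 2 ≤ 2 / n := by
  have key : ∀ i : ℕ, (((n + i : ℕ) : ℝ))⁻¹ ^ 2 ≤
      2 * ((((n + i : ℕ):ℝ))⁻¹ - (((n + i + 1 : ℕ):ℝ))⁻¹) := by
    intro i
    have h1 : (1:ℝ) ≤ ((n + i : ℕ):ℝ) := by
      have : 1 ≤ n + i := le_add_right hn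
      exact_mod_cast this
    set x : ℝ := ((n + i : ℕ):ℝ) with hx
    have hx1 : ((n + i + 1 : ℕ):ℝ) = x + 1 := by rw [hx]; push_cast; ring
    rw [hx1]
    have hxpos : (0:ℝ) < x := by linarith
    have h2 : x⁻¹ - (x+1)⁻¹ = 1 / (x*(x+1)) := by field_simp; ring
    have h3 : x⁻¹ ^ 2 = 1 / x^2 := by field_simp
    rw [h2, h3, mul_one_div]
    rw [div_le_div_iff₀ (by positivity) (by positivity)]
    nlinarith
  calc ∑ i ∈ Finset.range K, (((n + i : ℕ) : ℝ))⁻¹ ^ 2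
      ≤ ∑ i ∈ Finset.range K, 2 * ((((n + i : ℕ):ℝ))⁻¹ - (((n + i + 1 : ℕ):ℝ))⁻¹) :=
        Finset.sum_le_sum fun i _ => key i
    _ = 2 * ∑ i ∈ Finset.range K, (((fun j => (((n + j : ℕ):ℝ))⁻¹) i) - ((fun j => (((n + j : ℕ):ℝ))⁻¹) (i+1))) := by
        rw [Finset.mul_sum]
        refine Finset.sum_congr rfl fun i _ => ?_
        have h4 : ((n + (i + 1) : ℕ):ℝ) = ((n + i + 1 : ℕ):ℝ) := by push_cast; ring
        simp only [h4]
    _ = 2 * ((((n : ℕ):ℝ))⁻¹ - (((n + K : ℕ):ℝ))⁻¹) := by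
        rw [Finset.sum_range_sub' (fun j => (((n + j : ℕ):ℝ))⁻¹) K]
        norm_num
    _ ≤ 2 * (((n : ℕ):ℝ))⁻¹ := by
        have : (0:ℝ) ≤ (((n + K : ℕ):ℝ))⁻¹ := by positivity
        linarith
    _ = 2 / n := by rw [div_eq_mul_inv]

end QGAux
-- chunk4 : balls are finite; pigeonhole; one-step lemmas
namespace QGAux

variable {G : Type*} [Group G]

theorem exists_word_S {S : Finset G} (hsym : ∀ s ∈ S, s⁻¹ ∈ S)
    (hgen : Subgroup.closure (S : Set G) = ⊤) (x y : G) :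
    ∃ l : List G, (∀ a ∈ l, a ∈ (S : Set G)) ∧ l.prod = x⁻¹ * y := by
  have hx : x⁻¹ * y ∈ Subgroup.closure (S : Set G) := by rw [hgen]; trivial
  exact exists_word_of_mem_closure (by simpa using hsym) hx

theorem ball_finite {S : Finset G} (hsym : ∀ s ∈ S, s⁻¹ ∈ S)
    (hgen : Subgroup.closure (S : Set G) = ⊤) (n : ℕ) :
    {x : G | wordDist (S : Set G) 1 x ≤ n}.Finite := by
  induction n with
  | zero =>
    apply Set.Finite.subset (Set.finite_singleton (1 : G))
    intro x hx
    simp only [Set.mem_setOf_eq, Nat.le_zero] at hx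
    have := eq_of_wordDist_eq_zero (exists_word_S hsym hgen 1 x) hx
    simp [← this]
  | succ n ih =>
    have hsub : {x : G | wordDist (S : Set G) 1 x ≤ n + 1} ⊆
        {x : G | wordDist (S : Set G) 1 x ≤ n} ∪
          ⋃ s ∈ (S : Set G), (fun y => y * s) '' {x : G | wordDist (S : Set G) 1 x ≤ n} := by
      intro x hx
      simp only [Set.mem_setOf_eq] at hx
      obtain ⟨l, hl, hp, hlen⟩ := exists_min_word (exists_word_S hsym hgen 1 x)
      rcases List.eq_nil_or_concat l with rfl | ⟨l', s, rfl⟩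
      · left
        simp only [List.prod_nil] at hp
        have : x = 1 := by simpa using hp.symm
        simp [Set.mem_setOf_eq, this, wordDist_self]
      · right
        simp only [List.concat_eq_append, List.length_append, List.length_singleton] at hlen
        have hs : s ∈ (S : Set G) := hl s (by simp)
        have hl' : ∀ a ∈ l', a ∈ (S : Set G) := fun a ha => hl a (by simp [ha])
        have hp' : l'.prod = 1⁻¹ * (l'.prod) := by simp
        have hwd : wordDist (S : Set G) 1 l'.prod ≤ n := by
          have := wordDist_le_length hl' hp'
          omega
        refine Set.mem_biUnion hs ⟨l'.prod, hwd, ?_⟩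
        simp only [List.concat_eq_append, List.prod_append, List.prod_cons, List.prod_nil,
          mul_one] at hp
        simpa using hp
    refine Set.Finite.subset (Set.Finite.union ih ?_) hsub
    exact Set.Finite.biUnion (S.finite_toSet) fun s _ => ih.image _

theorem ultra_pigeon {α : Type*} (𝒰 : Ultrafilter ℕ) {F : Set α} (hF : F.Finite) {x : ℕ → α}
    (hx : {j | x j ∈ F} ∈ 𝒰) : ∃ v, {j | x j = v} ∈ 𝒰 := by
  by_contra hcon
  push_neg at hcon
  have hc : ∀ v : α, {j | x j ≠ v} ∈ 𝒰 := fun v =>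
    (Ultrafilter.compl_mem_iff_notMem (s := {j | x j = v})).2 (hcon v)
  have hall : (⋂ v ∈ F, {j | x j ≠ v}) ∈ 𝒰 := (Filter.biInter_mem hF).2 fun v _ => hc v
  obtain ⟨j, hj1, hj2⟩ := Filter.nonempty_of_mem (Filter.inter_mem hx hall)
  simp only [Set.mem_iInter, Set.mem_setOf_eq] at hj1 hj2
  exact hj2 (x j) hj1 rfl

/-- a single generator step has word distance 1 -/
theorem wordDist_eq_one {S : Finset G} (hsym : ∀ s ∈ S, s⁻¹ ∈ S)
    (hgen : Subgroup.closure (S : Set G) = ⊤) {x y : G} (h : x⁻¹ * y ∈ (S : Set G))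
    (hne : x ≠ y) : wordDist (S : Set G) x y = 1 := by
  have hle : wordDist (S : Set G) x y ≤ 1 := by
    have := wordDist_le_length (S := (S : Set G)) (x := x) (y := y) (l := [x⁻¹ * y]) (by simpa using h) (by simp)
    simpa using this
  have hne0 := wordDist_ne_zero_of_ne (exists_word_S hsym hgen x y) hne
  omega

/-- from a word-distance-1 relation in T, extract S-distance 1 (T ⊆ S). -/
theorem step_S_of_step_T {S T : Finset G} (hsym : ∀ s ∈ S, s⁻¹ ∈ S)
    (hgen : Subgroup.closure (S : Set G) = ⊤) (hTS : T ⊆ S) {x y : G}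
    (h : wordDist (T : Set G) x y = 1) : wordDist (S : Set G) x y = 1 := by
  have hne : x ≠ y := by
    intro he
    rw [wordDist_eq_of_eq _ he] at h
    omega
  have h1 : wordDist (T : Set G) x y ∈ {n : ℕ | ∃ l : List G, (∀ a ∈ l, a ∈ (T : Set G)) ∧
      l.prod = x⁻¹ * y ∧ l.length = n} := by
    apply Nat.sInf_mem
    rcases Set.eq_empty_or_nonempty {n : ℕ | ∃ l : List G, (∀ a ∈ l, a ∈ (T : Set G)) ∧
        l.prod = x⁻¹ * y ∧ l.length = n} with he | hne'
    · exfalso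
      have : wordDist (T : Set G) x y = 0 := by
        unfold wordDist
        rw [he, Nat.sInf_empty]
      omega
    · exact hne'
  obtain ⟨l, hl, hp, hlen⟩ := h1
  rw [h] at hlen
  match l, hlen with
  | [t], _ =>
    have ht : t ∈ (T : Set G) := hl t (by simp)
    have : x⁻¹ * y ∈ (S : Set G) := by
      simp only [List.prod_cons, List.prod_nil, mul_one] at hp
      rw [← hp]
      exact hTS ht
    exact wordDist_eq_one hsym hgen this hne

end QGAux
-- chunk5 : walks along words; basic floydDist upper bound
namespace QGAux

variable {G : Type*} [Group G]

theorem exists_reduced_word (l : List G) (P : G → Prop) (hl : ∀ x ∈ l, P x) :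
    ∃ l' : List G, (∀ x ∈ l', P x) ∧ (∀ x ∈ l', x ≠ 1) ∧ l'.prod = l.prod ∧
      l'.length ≤ l.length := by
  induction l with
  | nil => exact ⟨[], by simp, by simp, by simp, by simp⟩
  | cons a l ih =>
    obtain ⟨l', h1, h2, h3, h4⟩ := ih (fun x hx => hl x (by simp [hx]))
    by_cases h : a = 1
    · exact ⟨l', h1, h2, by simp [h3, h], by simp; omega⟩
    · refine ⟨a :: l', ?_, ?_, by simp [h3], by simpa using h4⟩
      · intro x hx
        rcases List.mem_cons.1 hx with rfl | hx
        · exact hl x (by simp)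
        · exact h1 x hx
      · intro x hx
        rcases List.mem_cons.1 hx with rfl | hx
        · exact h
        · exact h2 x hx

theorem inv_prod_mul {u v w : List G} (huv : u ++ v = w) :
    (u.prod)⁻¹ * w.prod = v.prod := by
  rw [← huv, List.prod_append, inv_mul_cancel_left]

/-- the walk along a word -/
def walk (a : G) (l : List G) (i : ℕ) : G := a * (l.take i).prod

theorem walk_zero (a : G) (l : List G) : walk a l 0 = a := by simp [walk]

theorem walk_of_le (a : G) (l : List G) {i : ℕ} (h : l.length ≤ i) :
    walk a l i = a * l.prod := by
  simp [walk, List.take_of_length_le h]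

theorem walk_slice (a : G) (l : List G) {i j : ℕ} (hij : i ≤ j) :
    (walk a l i)⁻¹ * walk a l j = ((l.take j).drop i).prod := by
  have h1 : l.take i = (l.take j).take i := by rw [List.take_take, min_eq_left hij]
  rw [walk, walk, mul_inv_rev, mul_assoc, inv_mul_cancel_left, h1]
  exact inv_prod_mul (List.take_append_drop _ _)

theorem walk_wordDist_le {S : Set G} {l : List G} (hl : ∀ x ∈ l, x ∈ S) (a : G)
    {i j : ℕ} (hij : i ≤ j) :
    wordDist S (walk a l i) (walk a l j) ≤ j - i := by
  have hle := wordDist_le_length (S := S) (x := walk a l i) (y := walk a l j)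
    (l := (l.take j).drop i) (fun x hx => hl x (List.mem_of_mem_take (List.mem_of_mem_drop hx)))
    ((walk_slice a l hij).symm)
  have : ((l.take j).drop i).length ≤ j - i := by
    simp only [List.length_drop, List.length_take]
    omega
  omega

theorem walk_mem {H : Subgroup G} {l : List G} (hl : ∀ x ∈ l, x ∈ H) {a : G} (ha : a ∈ H)
    (i : ℕ) : walk a l i ∈ H :=
  H.mul_mem ha (H.list_prod_mem fun x hx => hl x (List.mem_of_mem_take hx))

theorem walk_succ (a : G) {l : List G} {i : ℕ} (hi : i < l.length) :
    walk a l (i + 1) = walk a l i * l[i] := by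
  rw [walk, walk, List.take_succ, List.prod_append, List.getElem?_eq_getElem hi]
  simp [mul_assoc]

theorem walk_step {S : Finset G} (hsym : ∀ s ∈ S, s⁻¹ ∈ S)
    (hgen : Subgroup.closure (S : Set G) = ⊤) {l : List G} (hl : ∀ x ∈ l, x ∈ (S : Set G))
    (hl1 : ∀ x ∈ l, x ≠ 1) (a : G) {i : ℕ} (hi : i < l.length) :
    wordDist (S : Set G) (walk a l i) (walk a l (i + 1)) = 1 := by
  rw [walk_succ a hi]
  have hs : l[i] ∈ (S : Set G) := hl _ (List.getElem_mem hi)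
  have hs1 : l[i] ≠ 1 := hl1 _ (List.getElem_mem hi)
  refine wordDist_eq_one hsym hgen (by simpa using hs) ?_
  intro he
  exact hs1 (by
    have := he.symm
    rwa [mul_eq_left] at this)

/-- level along a walk: `|a| ≤ |walk a l i| + i`. -/
theorem walk_level {S : Finset G} (hsym : ∀ s ∈ S, s⁻¹ ∈ S)
    (hgen : Subgroup.closure (S : Set G) = ⊤) {l : List G} (hl : ∀ x ∈ l, x ∈ (S : Set G))
    (a : G) (i : ℕ) :
    wordDist (S : Set G) 1 a ≤ wordDist (S : Set G) 1 (walk a l i) + i := by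
  have h1 : wordDist (S : Set G) 1 a ≤ wordDist (S : Set G) 1 (walk a l i) +
      wordDist (S : Set G) (walk a l i) a :=
    wordDist_triangle (exists_word_S hsym hgen 1 (walk a l i))
      (exists_word_S hsym hgen (walk a l i) a)
  have h2 : wordDist (S : Set G) (walk a l i) a = wordDist (S : Set G) a (walk a l i) :=
    wordDist_symm (by simpa using hsym) _ _
  have h3 : wordDist (S : Set G) a (walk a l i) ≤ i := by
    have := walk_wordDist_le (S := (S : Set G)) hl a (Nat.zero_le i)
    simpa [walk_zero] using this
  omega

end QGAux
-- chunk6 : the basic distance upper bound, and geodesics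
namespace QGAux

variable {G : Type*} [Group G]

theorem dist_le_of_word {𝔾 : Type*} [MetricSpace 𝔾] {S : Finset G}
    (hsym : ∀ s ∈ S, s⁻¹ ∈ S) (hgen : Subgroup.closure (S : Set G) = ⊤) {ι : G → 𝔾}
    (hdist : ∀ x y : G, dist (ι x) (ι y) = floydDist (S : Set G) x y) (a b : G) :
    dist (ι a) (ι b) ≤ (wordDist (S : Set G) a b : ℝ) *
      (max 1 ((wordDist (S : Set G) 1 a : ℝ) - (wordDist (S : Set G) a b : ℝ)))⁻¹ ^ 2 := by
  set k := wordDist (S : Set G) a b with hk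
  obtain ⟨l0, hl0, hp0, hlen0⟩ := exists_min_word (exists_word_S hsym hgen a b)
  obtain ⟨l, hl, hl1, hp, hlen⟩ := exists_reduced_word l0 (· ∈ (S : Set G)) hl0
  set n := l.length with hn
  have hnk : n ≤ k := by omega
  set r : ℝ := (wordDist (S : Set G) 1 a : ℝ) - (k : ℝ) with hr
  have hw0 : walk a l 0 = a := walk_zero a l
  have hwn : walk a l n = b := by
    rw [walk_of_le a l (le_refl n), hp, hp0, mul_inv_cancel_left]
  have hstep : ∀ i < n, wordDist (S : Set G) (walk a l i) (walk a l (i + 1)) = 1 :=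
    fun i hi => walk_step hsym hgen hl hl1 a hi
  have hb : dist (ι a) (ι b) ≤
      ∑ i ∈ Finset.range n, floydEdgeWeight (S : Set G) (walk a l i) (walk a l (i + 1)) := by
    have := dist_le_sum_weights hdist (walk a l) n hstep
    rwa [hw0, hwn] at this
  have hwt : ∀ i ∈ Finset.range n,
      floydEdgeWeight (S : Set G) (walk a l i) (walk a l (i + 1)) ≤ (max 1 r)⁻¹ ^ 2 := by
    intro i hi
    simp only [Finset.mem_range] at hi
    refine floydEdgeWeight_le ?_ ?_
    · have := walk_level hsym hgen hl a i
      have hik : i ≤ k := by omega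
      rw [hr]
      push_cast
      have : (wordDist (S:Set G) 1 a : ℝ) ≤ (wordDist (S:Set G) 1 (walk a l i) : ℝ) + i := by
        exact_mod_cast this
      linarith [(Nat.cast_le.2 hik : (i:ℝ) ≤ (k:ℝ))]
    · have := walk_level hsym hgen hl a (i + 1)
      have hik : i + 1 ≤ k := by omega
      rw [hr]
      have h2 : (wordDist (S:Set G) 1 a : ℝ) ≤
          (wordDist (S:Set G) 1 (walk a l (i+1)) : ℝ) + (i+1) := by
        exact_mod_cast this
      have hc : ((i+1:ℕ):ℝ) = (i:ℝ)+1 := by exact_mod_cast Nat.cast_succ i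
      linarith [(Nat.cast_le.2 hik : ((i+1:ℕ):ℝ) ≤ (k:ℝ)), hc]
  calc dist (ι a) (ι b) ≤
      ∑ i ∈ Finset.range n, floydEdgeWeight (S : Set G) (walk a l i) (walk a l (i + 1)) := hb
    _ ≤ ∑ _i ∈ Finset.range n, (max 1 r)⁻¹ ^ 2 := Finset.sum_le_sum hwt
    _ = (n : ℝ) * (max 1 r)⁻¹ ^ 2 := by simp [mul_comm]
    _ ≤ (k : ℝ) * (max 1 r)⁻¹ ^ 2 := by
        have h1 : (n:ℝ) ≤ (k:ℝ) := Nat.cast_le.2 hnk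
        have h2 : (0:ℝ) ≤ (max 1 r)⁻¹ ^ 2 := by positivity
        nlinarith
  
theorem exists_geodesic {T : Finset G} {H : Subgroup G} (hT : (T : Set G) ⊆ (H : Set G))
    {a b : G} (ha : a ∈ H)
    (hw : ∃ l : List G, (∀ x ∈ l, x ∈ (T : Set G)) ∧ l.prod = a⁻¹ * b) :
    ∃ w : ℕ → G, w 0 = a ∧ (∀ i, w i ∈ H) ∧
      (∀ i, wordDist (T : Set G) a b ≤ i → w i = b) ∧
      ∀ i j, i ≤ j → j ≤ wordDist (T : Set G) a b →
        wordDist (T : Set G) (w i) (w j) = j - i := by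
  set L := wordDist (T : Set G) a b with hL
  obtain ⟨l, hl, hp, hlen⟩ := exists_min_word hw
  refine ⟨walk a l, walk_zero a l, ?_, ?_, ?_⟩
  · exact fun i => walk_mem (fun x hx => hT (hl x hx)) ha i
  · intro i hi
    rw [walk_of_le a l (by omega), hp, mul_inv_cancel_left]
  · intro i j hij hjL
    have hword : ∀ u v : ℕ, u ≤ v → ∃ m : List G, (∀ x ∈ m, x ∈ (T : Set G)) ∧
        m.prod = (walk a l u)⁻¹ * walk a l v := by
      intro u v huv
      exact ⟨(l.take v).drop u,
        fun x hx => hl x (List.mem_of_mem_take (List.mem_of_mem_drop hx)),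
        (walk_slice a l huv).symm⟩
    have hle : wordDist (T : Set G) (walk a l i) (walk a l j) ≤ j - i :=
      walk_wordDist_le hl a hij
    have hwb : walk a l L = b := by
      rw [walk_of_le a l (by omega), hp, mul_inv_cancel_left]
    have hword0 : ∃ m : List G, (∀ x ∈ m, x ∈ (T : Set G)) ∧ m.prod = a⁻¹ * walk a l i := by
      have := hword 0 i (Nat.zero_le i)
      rwa [walk_zero] at this
    have hwordib : ∃ m : List G, (∀ x ∈ m, x ∈ (T : Set G)) ∧ m.prod = (walk a l i)⁻¹ * b := by
      have := hword i L (hij.trans hjL)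
      rwa [hwb] at this
    have hwordjb : ∃ m : List G, (∀ x ∈ m, x ∈ (T : Set G)) ∧ m.prod = (walk a l j)⁻¹ * b := by
      have := hword j L hjL
      rwa [hwb] at this
    have e1 : L ≤ wordDist (T : Set G) a (walk a l i) +
        wordDist (T : Set G) (walk a l i) b := wordDist_triangle hword0 hwordib
    have e2 : wordDist (T : Set G) (walk a l i) b ≤
        wordDist (T : Set G) (walk a l i) (walk a l j) +
        wordDist (T : Set G) (walk a l j) b := wordDist_triangle (hword i j hij) hwordjb
    have e3 : wordDist (T : Set G) (walk a l j) b ≤ L - j := by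
      have := walk_wordDist_le hl a hjL
      rwa [hwb] at this
    have h2 : wordDist (T : Set G) a (walk a l i) ≤ i := by
      have := walk_wordDist_le hl a (Nat.zero_le i)
      rwa [walk_zero] at this
    omega

end QGAux
-- chunk7 : the ψ-sum estimate
namespace QGAux

theorem inv_sq_anti {x y : ℝ} (hx : 0 < x) (hxy : x ≤ y) : y⁻¹ ^ 2 ≤ x⁻¹ ^ 2 :=
  pow_le_pow_left₀ (inv_nonneg.2 (le_of_lt (lt_of_lt_of_le hx hxy))) (inv_anti₀ hx hxy) 2

set_option maxHeartbeats 2000000 in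
theorem psi_sum (ε₁ D : ℝ) (hε₁ : 1 ≤ ε₁) (hD0 : 0 ≤ D) (K : ℕ) :
    ∑ m ∈ Finset.range K, (max 1 (max D (ε₁⁻¹ * (m:ℝ) - ε₁ - D)))⁻¹ ^ 2 ≤
      20 * ε₁ ^ 2 / max 1 D := by
  set Dr : ℝ := max 1 D with hDr
  have hDr1 : 1 ≤ Dr := le_max_left _ _
  have hDrpos : 0 < Dr := by linarith
  have hDD : D ≤ Dr := le_max_right _ _
  have hε₁pos : 0 < ε₁ := by linarith
  set M₀ : ℕ := ⌈ε₁ * (2 * Dr + 2 * ε₁)⌉₊ with hM₀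
  have hM₀ge : (M₀ : ℝ) ≥ ε₁ * (2 * Dr + 2 * ε₁) := Nat.le_ceil _
  have hM₀pos : (M₀ : ℝ) ≥ 2 * ε₁ * Dr := by nlinarith
  have hM₀1 : 1 ≤ M₀ := by
    have : (1:ℝ) ≤ (M₀ : ℝ) := by nlinarith
    exact_mod_cast this
  have hnear : ∀ m : ℕ, (max 1 (max D (ε₁⁻¹ * (m:ℝ) - ε₁ - D)))⁻¹ ^ 2 ≤ Dr⁻¹ ^ 2 := by
    intro m
    apply inv_sq_anti hDrpos
    exact max_le (le_max_left _ _) (le_trans (le_max_left D _) (le_max_right 1 _))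
  have hfar : ∀ m : ℕ, M₀ ≤ m →
      (max 1 (max D (ε₁⁻¹ * (m:ℝ) - ε₁ - D)))⁻¹ ^ 2 ≤ 4 * ε₁ ^ 2 * ((m:ℝ))⁻¹ ^ 2 := by
    intro m hm
    have hmr : (M₀:ℝ) ≤ (m:ℝ) := Nat.cast_le.2 hm
    have hmbig : ε₁ * (2 * Dr + 2 * ε₁) ≤ (m:ℝ) := le_trans hM₀ge hmr
    have hmpos : (0:ℝ) < m := by nlinarith
    have hx : ε₁⁻¹ * (m:ℝ) / 2 ≤ ε₁⁻¹ * (m:ℝ) - ε₁ - D := by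
      have h1 : ε₁ + Dr ≤ ε₁⁻¹ * (m:ℝ) / 2 := by
        rw [ge_iff_le, ← sub_nonneg] at hM₀ge
        have h2 : ε₁⁻¹ * (ε₁ * (2 * Dr + 2 * ε₁)) = 2 * Dr + 2 * ε₁ := by
          field_simp
        nlinarith [mul_le_mul_of_nonneg_left hmbig (le_of_lt (inv_pos.2 hε₁pos))]
      have : D ≤ Dr := hDD
      linarith
    have hge1 : (1:ℝ) ≤ ε₁⁻¹ * (m:ℝ) / 2 := by
      have h2 : ε₁⁻¹ * (ε₁ * (2 * Dr + 2 * ε₁)) = 2 * Dr + 2 * ε₁ := by field_simp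
      nlinarith [mul_le_mul_of_nonneg_left hmbig (le_of_lt (inv_pos.2 hε₁pos))]
    have hbnd : ε₁⁻¹ * (m:ℝ) / 2 ≤ max 1 (max D (ε₁⁻¹ * (m:ℝ) - ε₁ - D)) :=
      le_max_of_le_right (le_max_of_le_right hx)
    have h3 := inv_sq_anti (by linarith : (0:ℝ) < ε₁⁻¹ * (m:ℝ) / 2) hbnd
    refine le_trans h3 (le_of_eq ?_)
    have he : (ε₁⁻¹ * (m:ℝ) / 2)⁻¹ = 2 * ε₁ * ((m:ℝ))⁻¹ := by
      rw [div_eq_mul_inv, mul_inv, mul_inv, inv_inv, inv_inv]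
      ring
    rw [he]
    ring
  rcases le_or_gt K M₀ with hK | hK
  · calc ∑ m ∈ Finset.range K, (max 1 (max D (ε₁⁻¹ * (m:ℝ) - ε₁ - D)))⁻¹ ^ 2
        ≤ ∑ _m ∈ Finset.range K, Dr⁻¹ ^ 2 := Finset.sum_le_sum fun m _ => hnear m
      _ = (K:ℝ) * Dr⁻¹ ^ 2 := by simp [mul_comm]
      _ ≤ (M₀:ℝ) * Dr⁻¹ ^ 2 := by
          have : (K:ℝ) ≤ (M₀:ℝ) := Nat.cast_le.2 hK
          nlinarith [sq_nonneg Dr⁻¹]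
      _ ≤ 20 * ε₁ ^ 2 / Dr := by
          rw [div_eq_mul_inv]
          have hMle : (M₀:ℝ) ≤ ε₁ * (2 * Dr + 2 * ε₁) + 1 := le_of_lt (Nat.ceil_lt_add_one
            (by nlinarith))
          have hDrinv : Dr⁻¹ ≤ 1 := by
            rw [inv_le_one_iff₀]; right; exact hDr1
          have hDrinvpos : 0 < Dr⁻¹ := inv_pos.2 hDrpos
          have key : (M₀:ℝ) * Dr⁻¹ ≤ 2 * ε₁ + 2 * ε₁ ^ 2 + 1 := by
            have h1 : (M₀:ℝ) * Dr⁻¹ ≤ (ε₁ * (2 * Dr + 2 * ε₁) + 1) * Dr⁻¹ :=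
              mul_le_mul_of_nonneg_right hMle (le_of_lt hDrinvpos)
            have h2 : (ε₁ * (2 * Dr + 2 * ε₁) + 1) * Dr⁻¹ =
                2 * ε₁ * (Dr * Dr⁻¹) + (2 * ε₁ ^ 2 + 1) * Dr⁻¹ := by ring
            rw [h2, mul_inv_cancel₀ (ne_of_gt hDrpos), mul_one] at h1
            nlinarith
          calc (M₀:ℝ) * Dr⁻¹ ^ 2 = ((M₀:ℝ) * Dr⁻¹) * Dr⁻¹ := by ring
            _ ≤ (2 * ε₁ + 2 * ε₁ ^ 2 + 1) * Dr⁻¹ :=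
                mul_le_mul_of_nonneg_right key (le_of_lt hDrinvpos)
            _ ≤ (20 * ε₁ ^ 2) * Dr⁻¹ := by
                have hc : 2 * ε₁ + 2 * ε₁ ^ 2 + 1 ≤ 20 * ε₁ ^ 2 := by nlinarith
                exact mul_le_mul_of_nonneg_right hc (le_of_lt hDrinvpos)
  · rw [Finset.range_eq_Ico, ← Finset.sum_Ico_consecutive _ (Nat.zero_le M₀) (le_of_lt hK)]
    have hnearsum : ∑ m ∈ Finset.Ico 0 M₀, (max 1 (max D (ε₁⁻¹ * (m:ℝ) - ε₁ - D)))⁻¹ ^ 2 ≤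
        (M₀:ℝ) * Dr⁻¹ ^ 2 := by
      calc ∑ m ∈ Finset.Ico 0 M₀, (max 1 (max D (ε₁⁻¹ * (m:ℝ) - ε₁ - D)))⁻¹ ^ 2
          ≤ ∑ _m ∈ Finset.Ico 0 M₀, Dr⁻¹ ^ 2 := Finset.sum_le_sum fun m _ => hnear m
        _ = (M₀:ℝ) * Dr⁻¹ ^ 2 := by simp [mul_comm]
    have hfarsum : ∑ m ∈ Finset.Ico M₀ K, (max 1 (max D (ε₁⁻¹ * (m:ℝ) - ε₁ - D)))⁻¹ ^ 2 ≤
        4 * ε₁ ^ 2 * (2 / M₀) := by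
      calc ∑ m ∈ Finset.Ico M₀ K, (max 1 (max D (ε₁⁻¹ * (m:ℝ) - ε₁ - D)))⁻¹ ^ 2
          ≤ ∑ m ∈ Finset.Ico M₀ K, 4 * ε₁ ^ 2 * ((m:ℝ))⁻¹ ^ 2 :=
            Finset.sum_le_sum fun m hm => hfar m (Finset.mem_Ico.1 hm).1
        _ = 4 * ε₁ ^ 2 * ∑ m ∈ Finset.Ico M₀ K, ((m:ℝ))⁻¹ ^ 2 := by
            rw [Finset.mul_sum]
        _ ≤ 4 * ε₁ ^ 2 * (2 / M₀) := by
            have hs : ∑ m ∈ Finset.Ico M₀ K, ((m:ℝ))⁻¹ ^ 2 ≤ 2 / M₀ := by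
              rw [Finset.sum_Ico_eq_sum_range]
              exact sum_inv_sq_tail M₀ (K - M₀) hM₀1
            nlinarith [hs, sq_nonneg ε₁]
    have hb1 : (M₀:ℝ) * Dr⁻¹ ^ 2 ≤ 12 * ε₁ ^ 2 / Dr := by
      rw [div_eq_mul_inv]
      have hMle : (M₀:ℝ) ≤ ε₁ * (2 * Dr + 2 * ε₁) + 1 := le_of_lt (Nat.ceil_lt_add_one
        (by nlinarith))
      have hDrinv : Dr⁻¹ ≤ 1 := by rw [inv_le_one_iff₀]; right; exact hDr1
      have hDrinvpos : 0 < Dr⁻¹ := inv_pos.2 hDrpos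
      have key : (M₀:ℝ) * Dr⁻¹ ≤ 2 * ε₁ + 2 * ε₁ ^ 2 + 1 := by
        have h1 : (M₀:ℝ) * Dr⁻¹ ≤ (ε₁ * (2 * Dr + 2 * ε₁) + 1) * Dr⁻¹ :=
          mul_le_mul_of_nonneg_right hMle (le_of_lt hDrinvpos)
        have h2 : (ε₁ * (2 * Dr + 2 * ε₁) + 1) * Dr⁻¹ =
            2 * ε₁ * (Dr * Dr⁻¹) + (2 * ε₁ ^ 2 + 1) * Dr⁻¹ := by ring
        rw [h2, mul_inv_cancel₀ (ne_of_gt hDrpos), mul_one] at h1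
        nlinarith
      calc (M₀:ℝ) * Dr⁻¹ ^ 2 = ((M₀:ℝ) * Dr⁻¹) * Dr⁻¹ := by ring
        _ ≤ (2 * ε₁ + 2 * ε₁ ^ 2 + 1) * Dr⁻¹ :=
            mul_le_mul_of_nonneg_right key (le_of_lt hDrinvpos)
        _ ≤ (12 * ε₁ ^ 2) * Dr⁻¹ := by
            have hc : 2 * ε₁ + 2 * ε₁ ^ 2 + 1 ≤ 12 * ε₁ ^ 2 := by nlinarith
            exact mul_le_mul_of_nonneg_right hc (le_of_lt hDrinvpos)
    have hb2 : 4 * ε₁ ^ 2 * (2 / M₀) ≤ 8 * ε₁ ^ 2 / Dr := by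
      have hDrM : Dr ≤ (M₀:ℝ) := by nlinarith [hM₀pos, hε₁, hDr1]
      have he : 4 * ε₁ ^ 2 * (2 / (M₀:ℝ)) = 8 * ε₁ ^ 2 / (M₀:ℝ) := by ring
      rw [he]
      apply div_le_div_of_nonneg_left _ hDrpos hDrM
      positivity
    have hfinal : (M₀:ℝ) * Dr⁻¹ ^ 2 + 4 * ε₁ ^ 2 * (2 / M₀) ≤ 20 * ε₁ ^ 2 / Dr := by
      have he : (12 * ε₁ ^ 2 / Dr) + (8 * ε₁ ^ 2 / Dr) = 20 * ε₁ ^ 2 / Dr := by ring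
      linarith
    linarith

end QGAux
-- chunk8 : central estimate along a T-geodesic
namespace QGAux

variable {G : Type*} [Group G]

set_option maxHeartbeats 1000000 in
theorem central_estimate {𝔾 : Type*} [MetricSpace 𝔾] {S T : Finset G}
    (hsym : ∀ s ∈ S, s⁻¹ ∈ S) (hgen : Subgroup.closure (S : Set G) = ⊤) (hTS : T ⊆ S)
    {H : Subgroup G} {ι : G → 𝔾}
    (hdist : ∀ x y : G, dist (ι x) (ι y) = floydDist (S : Set G) x y)
    {ε₁ : ℝ} (hε₁ : 1 ≤ ε₁)
    (hund : ∀ x ∈ H, ∀ y ∈ H,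
      ε₁⁻¹ * (wordDist (T : Set G) x y : ℝ) - ε₁ ≤ (wordDist (S : Set G) x y : ℝ) ∧
      (wordDist (S : Set G) x y : ℝ) ≤ ε₁ * (wordDist (T : Set G) x y : ℝ) + ε₁)
    {w : ℕ → G} {L i₀ : ℕ} (hwH : ∀ i, w i ∈ H) (hi₀ : i₀ ≤ L)
    (hgeo : ∀ i j, i ≤ j → j ≤ L → wordDist (T : Set G) (w i) (w j) = j - i)
    (hmin : ∀ i, i ≤ L → wordDist (S : Set G) 1 (w i₀) ≤ wordDist (S : Set G) 1 (w i)) :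
    dist (ι (w 0)) (ι (w L)) ≤
      40 * ε₁ ^ 2 / max 1 ((wordDist (S : Set G) 1 (w i₀) : ℝ)) := by
  have hε₁pos : (0:ℝ) < ε₁ := by linarith
  set Dr : ℝ := (wordDist (S : Set G) 1 (w i₀) : ℝ) with hDrdef
  have hD0 : 0 ≤ Dr := Nat.cast_nonneg _
  -- the steps are S-edges
  have hstep : ∀ i, i < L → wordDist (S : Set G) (w i) (w (i + 1)) = 1 := by
    intro i hi
    have := hgeo i (i + 1) (Nat.le_succ i) hi
    have h1 : wordDist (T : Set G) (w i) (w (i + 1)) = 1 := by omega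
    exact step_S_of_step_T hsym hgen hTS h1
  have hsum := dist_le_sum_weights hdist w L hstep
  -- level estimates
  have hlev : ∀ u, u ≤ L → ∀ m : ℕ,
      (m ≤ i₀ - u ∧ u ≤ i₀ ∨ m ≤ u - i₀) →
      max Dr (ε₁⁻¹ * (m : ℝ) - ε₁ - Dr) ≤ (wordDist (S : Set G) 1 (w u) : ℝ) := by
    intro u hu m hm
    have hbase : Dr ≤ (wordDist (S : Set G) 1 (w u) : ℝ) := Nat.cast_le.2 (hmin u hu)
    refine max_le hbase ?_
    -- T-distance between w u and w i₀
    have hdT : (m : ℝ) ≤ (wordDist (T : Set G) (w u) (w i₀) : ℝ) ∨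
        (m : ℝ) ≤ (wordDist (T : Set G) (w i₀) (w u) : ℝ) := by
      rcases hm with ⟨hm1, hm2⟩ | hm1
      · left
        rw [hgeo u i₀ hm2 hi₀]
        exact_mod_cast hm1
      · right
        rcases Nat.le_total i₀ u with h | h
        · rw [hgeo i₀ u h hu]
          exact_mod_cast hm1
        · have : u - i₀ = 0 := by omega
          rw [this] at hm1
          have : m = 0 := by omega
          simp [this]
    -- undistortion lower bound + triangle
    have htri : ∀ v v' : G, wordDist (S : Set G) v v' ≤
        wordDist (S : Set G) 1 v + wordDist (S : Set G) 1 v' := by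
      intro v v'
      have h1 : wordDist (S : Set G) v 1 = wordDist (S : Set G) 1 v :=
        wordDist_symm (by simpa using hsym) v 1
      have := wordDist_triangle (exists_word_S hsym hgen v 1) (exists_word_S hsym hgen 1 v')
      omega
    have hSd : (wordDist (S : Set G) (w u) (w i₀) : ℝ) ≤
        (wordDist (S : Set G) 1 (w u) : ℝ) + Dr := by
      have := htri (w u) (w i₀)
      rw [hDrdef]
      exact_mod_cast this
    have hSsymm : wordDist (S : Set G) (w i₀) (w u) = wordDist (S : Set G) (w u) (w i₀) :=
      wordDist_symm (by simpa using hsym) _ _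
    rcases hdT with h | h
    · have hlow := (hund (w u) (hwH u) (w i₀) (hwH i₀)).1
      have : ε₁⁻¹ * (m:ℝ) - ε₁ ≤ (wordDist (S : Set G) (w u) (w i₀) : ℝ) := by
        have hmono : ε₁⁻¹ * (m:ℝ) ≤ ε₁⁻¹ * (wordDist (T : Set G) (w u) (w i₀) : ℝ) := by
          apply mul_le_mul_of_nonneg_left h (le_of_lt (inv_pos.2 hε₁pos))
        linarith
      linarith
    · have hlow := (hund (w i₀) (hwH i₀) (w u) (hwH u)).1
      have : ε₁⁻¹ * (m:ℝ) - ε₁ ≤ (wordDist (S : Set G) (w i₀) (w u) : ℝ) := by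
        have hmono : ε₁⁻¹ * (m:ℝ) ≤ ε₁⁻¹ * (wordDist (T : Set G) (w i₀) (w u) : ℝ) := by
          apply mul_le_mul_of_nonneg_left h (le_of_lt (inv_pos.2 hε₁pos))
        linarith
      rw [hSsymm] at this
      linarith
  -- weight bound in terms of the distance from i₀
  have hweight : ∀ i, i < L →
      floydEdgeWeight (S : Set G) (w i) (w (i + 1)) ≤
        (max 1 (max Dr (ε₁⁻¹ * ((if i < i₀ then i₀ - (i+1) else i - i₀ : ℕ) : ℝ) - ε₁ - Dr)))⁻¹ ^ 2 := by
    intro i hi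
    refine floydEdgeWeight_le ?_ ?_
    · refine hlev i (le_of_lt hi) _ ?_
      by_cases h : i < i₀
      · rw [if_pos h]; left; omega
      · rw [if_neg h]; right; omega
    · refine hlev (i+1) hi _ ?_
      by_cases h : i < i₀
      · by_cases h2 : i + 1 ≤ i₀
        · rw [if_pos h]; left; omega
        · rw [if_pos h]; right; omega
      · rw [if_neg h]; right; omega
  -- sum the bounds
  have hsplit : ∑ i ∈ Finset.range L,
      (max 1 (max Dr (ε₁⁻¹ * ((if i < i₀ then i₀ - (i+1) else i - i₀ : ℕ) : ℝ) - ε₁ - Dr)))⁻¹ ^ 2 ≤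
      40 * ε₁ ^ 2 / max 1 Dr := by
    have e1 : ∑ i ∈ Finset.range L,
        (max 1 (max Dr (ε₁⁻¹ * ((if i < i₀ then i₀ - (i+1) else i - i₀ : ℕ) : ℝ) - ε₁ - Dr)))⁻¹ ^ 2
        = (∑ i ∈ Finset.Ico 0 i₀,
            (max 1 (max Dr (ε₁⁻¹ * ((if i < i₀ then i₀ - (i+1) else i - i₀ : ℕ) : ℝ) - ε₁ - Dr)))⁻¹ ^ 2)
          + ∑ i ∈ Finset.Ico i₀ L,
            (max 1 (max Dr (ε₁⁻¹ * ((if i < i₀ then i₀ - (i+1) else i - i₀ : ℕ) : ℝ) - ε₁ - Dr)))⁻¹ ^ 2 := by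
      rw [Finset.range_eq_Ico, Finset.sum_Ico_consecutive _ (Nat.zero_le i₀) hi₀]
    have e2 : ∑ i ∈ Finset.Ico 0 i₀,
        (max 1 (max Dr (ε₁⁻¹ * ((if i < i₀ then i₀ - (i+1) else i - i₀ : ℕ) : ℝ) - ε₁ - Dr)))⁻¹ ^ 2
        = ∑ m ∈ Finset.range i₀, (max 1 (max Dr (ε₁⁻¹ * (m : ℝ) - ε₁ - Dr)))⁻¹ ^ 2 := by
      rw [← Finset.range_eq_Ico]
      rw [← Finset.sum_range_reflect (fun m => (max 1 (max Dr (ε₁⁻¹ * (m : ℝ) - ε₁ - Dr)))⁻¹ ^ 2) i₀]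
      refine Finset.sum_congr rfl fun i hi => ?_
      simp only [Finset.mem_range] at hi
      have : (if i < i₀ then i₀ - (i+1) else i - i₀ : ℕ) = i₀ - 1 - i := by
        rw [if_pos hi]; omega
      rw [this]
    have e3 : ∑ i ∈ Finset.Ico i₀ L,
        (max 1 (max Dr (ε₁⁻¹ * ((if i < i₀ then i₀ - (i+1) else i - i₀ : ℕ) : ℝ) - ε₁ - Dr)))⁻¹ ^ 2
        = ∑ m ∈ Finset.range (L - i₀), (max 1 (max Dr (ε₁⁻¹ * (m : ℝ) - ε₁ - Dr)))⁻¹ ^ 2 := by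
      rw [Finset.sum_Ico_eq_sum_range]
      refine Finset.sum_congr rfl fun k hk => ?_
      have : (if i₀ + k < i₀ then i₀ - (i₀ + k + 1) else i₀ + k - i₀ : ℕ) = k := by
        rw [if_neg (by omega)]; omega
      rw [this]
    rw [e1, e2, e3]
    have b1 := psi_sum ε₁ Dr hε₁ hD0 i₀
    have b2 := psi_sum ε₁ Dr hε₁ hD0 (L - i₀)
    have : (20 * ε₁ ^ 2 / max 1 Dr) + (20 * ε₁ ^ 2 / max 1 Dr) = 40 * ε₁ ^ 2 / max 1 Dr := by
      ring
    linarith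
  calc dist (ι (w 0)) (ι (w L)) ≤
      ∑ i ∈ Finset.range L, floydEdgeWeight (S : Set G) (w i) (w (i + 1)) := hsum
    _ ≤ ∑ i ∈ Finset.range L,
        (max 1 (max Dr (ε₁⁻¹ * ((if i < i₀ then i₀ - (i+1) else i - i₀ : ℕ) : ℝ) - ε₁ - Dr)))⁻¹ ^ 2 :=
      Finset.sum_le_sum fun i hi => hweight i (Finset.mem_range.1 hi)
    _ ≤ 40 * ε₁ ^ 2 / max 1 Dr := hsplit

end QGAux
-- chunk9 : sequences in H converging to a limit point
namespace QGAux

variable {G : Type*} [Group G]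

theorem bound_tendsto_zero {k₀ : ℝ} (hk₀ : 0 ≤ k₀) {f : ℕ → ℝ}
    (hf : Tendsto f atTop atTop) :
    Tendsto (fun n => k₀ * (max 1 (f n - k₀))⁻¹ ^ 2) atTop (nhds 0) := by
  have h1 : Tendsto (fun n => max 1 (f n - k₀)) atTop atTop := by
    apply tendsto_atTop_mono (fun n => le_max_right 1 (f n - k₀))
    exact tendsto_atTop_add_const_right _ (-k₀) hf
  have h2 : Tendsto (fun n => (max 1 (f n - k₀))⁻¹) atTop (nhds 0) :=
    h1.inv_tendsto_atTop
  have h3 : Tendsto (fun n => (max 1 (f n - k₀))⁻¹ ^ 2) atTop (nhds 0) := by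
    have := h2.pow 2
    simpa using this
  have := h3.const_mul k₀
  simpa using this

theorem limit_seq {𝔾 : Type*} [MetricSpace 𝔾] {S : Finset G}
    (hsym : ∀ s ∈ S, s⁻¹ ∈ S) (hgen : Subgroup.closure (S : Set G) = ⊤)
    {ι : G → 𝔾} (hdist : ∀ x y : G, dist (ι x) (ι y) = floydDist (S : Set G) x y)
    {H : Subgroup G} {p : 𝔾} (hp : p ∈ floydLimitSet ι H) :
    ∃ a : ℕ → G, (∀ n, a n ∈ H) ∧ Tendsto (fun n => ι (a n)) atTop (nhds p) ∧
      Tendsto (fun n => (wordDist (S : Set G) 1 (a n) : ℝ)) atTop atTop := by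
  obtain ⟨g₀, hg₀⟩ := hp
  have hch : ∀ n : ℕ, ∃ h : G, h ∈ H ∧ ι (h * g₀) ≠ p ∧ dist p (ι (h * g₀)) < 1/(n+1) := by
    intro n
    have hpos : (0:ℝ) < 1/(n+1) := by positivity
    obtain ⟨y, hy, hyd⟩ := Metric.mem_closure_iff.1 hg₀ _ hpos
    obtain ⟨⟨h, hh, rfl⟩, hyne⟩ := hy
    exact ⟨h, hh, by simpa using hyne, hyd⟩
  choose a haH hane had using hch
  set x : ℕ → G := fun n => a n * g₀ with hx
  have hxp : Tendsto (fun n => ι (x n)) atTop (nhds p) := by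
    rw [tendsto_iff_dist_tendsto_zero]
    apply squeeze_zero (fun n => dist_nonneg) (fun n => le_of_lt ?_)
      tendsto_one_div_add_atTop_nhds_zero_nat
    rw [dist_comm]
    exact had _
  -- levels of x go to infinity
  have hxlev : Tendsto (fun n => wordDist (S : Set G) 1 (x n)) atTop atTop := by
    rw [tendsto_atTop_atTop]
    intro B
    by_contra hcon
    push_neg at hcon
    have hfreq : ∃ᶠ n in atTop, wordDist (S : Set G) 1 (x n) ≤ B := by
      rw [Filter.frequently_atTop]
      intro N
      obtain ⟨n, hn1, hn2⟩ := hcon N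
      exact ⟨n, hn1, by omega⟩
    have hFin := ball_finite hsym hgen B
    set F : Finset G := hFin.toFinset with hF
    have hfreq' : ∃ᶠ n in atTop, x n ∈ F := by
      refine hfreq.mono fun n hn => ?_
      simp [hF, Set.Finite.mem_toFinset, Set.mem_setOf_eq, hn]
    have hval : ∃ v ∈ F, ∃ᶠ n in atTop, x n = v := by
      by_contra hcon2
      push_neg at hcon2
      have hev : ∀ᶠ n in atTop, ∀ v ∈ F, x n ≠ v :=
        (Filter.eventually_all_finset F).2 fun v hv => (hcon2 v hv)
      obtain ⟨n, hn1, hn2⟩ := (hfreq'.and_eventually hev).exists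
      exact hn2 (x n) hn1 rfl
    obtain ⟨v, -, hv⟩ := hval
    have hpv : p = ι v := by
      rw [← dist_eq_zero (x := p)]
      by_contra hd0
      have hdpos : 0 < dist p (ι v) := lt_of_le_of_ne dist_nonneg (Ne.symm hd0)
      obtain ⟨N, hN⟩ := exists_nat_gt (1 / dist p (ι v))
      have hlt : 1 / ((N:ℝ)+1) < dist p (ι v) := by
        rw [div_lt_iff₀ (by positivity)]
        rw [div_lt_iff₀ hdpos] at hN
        nlinarith [hdpos]
      obtain ⟨n, hn1, hn2⟩ := (hv.and_eventually (Filter.eventually_ge_atTop N)).exists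
      have := had n
      rw [show a n * g₀ = v from hn1] at this
      have hmono : 1/((n:ℝ)+1) ≤ 1/((N:ℝ)+1) := by
        apply div_le_div_of_nonneg_left one_pos.le (by positivity)
        push_cast
        have : (N:ℝ) ≤ (n:ℝ) := Nat.cast_le.2 hn2
        linarith
      linarith
    obtain ⟨n, hn1⟩ := hv.exists
    exact (hane n) (by rw [show a n * g₀ = v from hn1, ← hpv])
  -- levels of a go to infinity
  set k₀ : ℕ := wordDist (S : Set G) 1 g₀ with hk₀
  have hinv : ∀ n, wordDist (S : Set G) (a n) (x n) = k₀ := by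
    intro n
    have := wordDist_mul_left (S : Set G) (a n) 1 g₀
    simpa using this
  have halev : Tendsto (fun n => wordDist (S : Set G) 1 (a n)) atTop atTop := by
    rw [tendsto_atTop_atTop]
    intro B
    rw [tendsto_atTop_atTop] at hxlev
    obtain ⟨N, hN⟩ := hxlev (B + k₀)
    refine ⟨N, fun n hn => ?_⟩
    have h1 := hN n hn
    have h2 : wordDist (S : Set G) 1 (x n) ≤ wordDist (S : Set G) 1 (a n) +
        wordDist (S : Set G) (a n) (x n) :=
      wordDist_triangle (exists_word_S hsym hgen 1 (a n)) (exists_word_S hsym hgen (a n) (x n))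
    rw [hinv n] at h2
    omega
  have halevR : Tendsto (fun n => (wordDist (S : Set G) 1 (a n) : ℝ)) atTop atTop :=
    tendsto_natCast_atTop_atTop.comp halev
  -- ι (a n) converges to p
  have hap : Tendsto (fun n => ι (a n)) atTop (nhds p) := by
    rw [tendsto_iff_dist_tendsto_zero]
    have hb : ∀ n, dist (ι (a n)) p ≤
        (k₀:ℝ) * (max 1 ((wordDist (S : Set G) 1 (a n) : ℝ) - (k₀:ℝ)))⁻¹ ^ 2 +
          dist (ι (x n)) p := by
      intro n
      have h1 : dist (ι (a n)) p ≤ dist (ι (a n)) (ι (x n)) + dist (ι (x n)) p :=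
        dist_triangle _ _ _
      have h2 := dist_le_of_word hsym hgen hdist (a n) (x n)
      rw [hinv n] at h2
      linarith
    apply squeeze_zero (fun n => dist_nonneg) hb
    have h3 := bound_tendsto_zero (Nat.cast_nonneg k₀) halevR
    have h4 : Tendsto (fun n => dist (ι (x n)) p) atTop (nhds 0) :=
      tendsto_iff_dist_tendsto_zero.1 hxp
    simpa using h3.add h4
  exact ⟨a, haH, hap, halevR⟩

end QGAux
-- chunk10 : small extra aux lemmas
namespace QGAux

variable {G : Type*} [Group G]

theorem wordDist_eq_zero_of_no_word {S : Set G} {x y : G}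
    (h : ¬∃ l : List G, (∀ a ∈ l, a ∈ S) ∧ l.prod = x⁻¹ * y) : wordDist S x y = 0 := by
  unfold wordDist
  have he : {n : ℕ | ∃ l : List G, (∀ a ∈ l, a ∈ S) ∧ l.prod = x⁻¹ * y ∧ l.length = n} = ∅ := by
    ext n
    simp only [Set.mem_setOf_eq, Set.mem_empty_iff_false, iff_false]
    rintro ⟨l, h1, h2, h3⟩
    exact h ⟨l, h1, h2⟩
  rw [he, Nat.sInf_empty]

theorem wordDist_le_lev_add_lev {S : Finset G} (hsym : ∀ s ∈ S, s⁻¹ ∈ S)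
    (hgen : Subgroup.closure (S : Set G) = ⊤) (x y : G) :
    wordDist (S : Set G) x y ≤ wordDist (S : Set G) 1 x + wordDist (S : Set G) 1 y := by
  have h1 : wordDist (S : Set G) x 1 = wordDist (S : Set G) 1 x :=
    wordDist_symm (by simpa using hsym) x 1
  have := wordDist_triangle (exists_word_S hsym hgen x 1) (exists_word_S hsym hgen 1 y)
  omega

theorem lev_le_lev_add_wordDist {S : Finset G} (hsym : ∀ s ∈ S, s⁻¹ ∈ S)
    (hgen : Subgroup.closure (S : Set G) = ⊤) (x y : G) :
    wordDist (S : Set G) 1 y ≤ wordDist (S : Set G) 1 x + wordDist (S : Set G) x y :=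
  wordDist_triangle (exists_word_S hsym hgen 1 x) (exists_word_S hsym hgen x y)

theorem mem_of_U {s : Set ℕ} (𝒰 : Ultrafilter ℕ) (h : s ∈ 𝒰) : ∃ j, j ∈ s :=
  Filter.nonempty_of_mem h

end QGAux

open QGAux

set_option maxHeartbeats 3000000 in
/-- if `H` is undistorted (with finite generating set `T ⊆ S`) and
`|Λ(H)| ≥ 2` in the Floyd boundary, then there is `ε₀ ≥ 0` such that any two distinct
points `p, q ∈ Λ(H)` are joined by a bi-infinite `ε₀`-quasigeodesic edge path in the
Cayley graph `Γ(G,S)` all of whose vertices lie in `H`, whose two ends converge in the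
Floyd completion `𝔾` to `p` and `q` respectively. -/
theorem quasigeodesics_in_subgroup_between_limit_points
    {G : Type*} [Group G] (S : Finset G)
    (hsym : ∀ s ∈ S, s⁻¹ ∈ S) (hgen : Subgroup.closure (S : Set G) = ⊤)
    {𝔾 : Type*} [MetricSpace 𝔾] [CompleteSpace 𝔾] [CompactSpace 𝔾]
    (ι : G → 𝔾)
    (hdist : ∀ x y : G, dist (ι x) (ι y) = floydDist (S : Set G) x y)
    (hdense : DenseRange ι)
    (hnontriv : ∃ a b c : 𝔾, a ∉ Set.range ι ∧ b ∉ Set.range ι ∧ c ∉ Set.range ι ∧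
      a ≠ b ∧ a ≠ c ∧ b ≠ c)
    (H : Subgroup G) (T : Finset G) (hTS : T ⊆ S) (hT : (T : Set G) ⊆ (H : Set G))
    (hTgen : Subgroup.closure (T : Set G) = H)
    (hund : IsUndistorted (S : Set G) (T : Set G) H)
    (hΛ : 2 ≤ (floydLimitSet ι H).encard) :
    ∃ ε₀ : ℝ, 0 ≤ ε₀ ∧
      ∀ p q : 𝔾, p ∈ floydLimitSet ι H → q ∈ floydLimitSet ι H → p ≠ q →
        ∃ γ : ℤ → G, (∀ n : ℤ, γ n ∈ H) ∧
          (∀ n : ℤ, wordDist (S : Set G) (γ n) (γ (n + 1)) = 1) ∧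
          (∀ m n : ℤ, m ≤ n →
            ((n - m : ℤ) : ℝ) < ε₀ * (wordDist (S : Set G) (γ m) (γ n) : ℝ) + ε₀) ∧
          Tendsto (fun k : ℕ => ι (γ (-(k : ℤ)))) atTop (nhds p) ∧
          Tendsto (fun k : ℕ => ι (γ (k : ℤ))) atTop (nhds q) := by
  classical
  obtain ⟨ε₁, hε₁, hund'⟩ := hund
  have hε₁pos : (0:ℝ) < ε₁ := by linarith
  refine ⟨ε₁ ^ 2 + ε₁ + 1, by positivity, ?_⟩
  intro p q hp hq hpq
  obtain ⟨a, haH, hap, halev⟩ := limit_seq hsym hgen hdist hp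
  obtain ⟨b, hbH, hbq, hblev⟩ := limit_seq hsym hgen hdist hq
  set δpq : ℝ := dist p q with hδpq
  have hδ : 0 < δpq := dist_pos.2 hpq
  -- geodesics between a j and b j
  have hWex : ∀ j : ℕ, ∃ w : ℕ → G,
      (∃ l : List G, (∀ x ∈ l, x ∈ (T : Set G)) ∧ l.prod = (a j)⁻¹ * (b j)) →
      (w 0 = a j ∧ (∀ i, w i ∈ H) ∧
        (∀ i, wordDist (T : Set G) (a j) (b j) ≤ i → w i = b j) ∧
        ∀ i i', i ≤ i' → i' ≤ wordDist (T : Set G) (a j) (b j) →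
          wordDist (T : Set G) (w i) (w i') = i' - i) := by
    intro j
    by_cases hw : ∃ l : List G, (∀ x ∈ l, x ∈ (T : Set G)) ∧ l.prod = (a j)⁻¹ * (b j)
    · obtain ⟨w, h1, h2, h3, h4⟩ := exists_geodesic hT (haH j) hw
      exact ⟨w, fun _ => ⟨h1, h2, h3, h4⟩⟩
    · exact ⟨fun _ => 1, fun h => absurd h hw⟩
  choose W hW using hWex
  set L : ℕ → ℕ := fun j => wordDist (T : Set G) (a j) (b j) with hL
  -- index of minimal level
  have hi₀ex : ∀ j : ℕ, ∃ i₀, i₀ ≤ L j ∧ ∀ i, i ≤ L j →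
      wordDist (S : Set G) 1 (W j i₀) ≤ wordDist (S : Set G) 1 (W j i) := by
    intro j
    obtain ⟨i₀, hmem, hmin⟩ := Finset.exists_min_image (Finset.range (L j + 1))
      (fun i => wordDist (S : Set G) 1 (W j i)) ⟨0, by simp⟩
    simp only [Finset.mem_range] at hmem
    exact ⟨i₀, by omega, fun i hi => hmin i (Finset.mem_range.2 (by omega))⟩
  choose i₀ hi₀le hi₀min using hi₀ex
  set c : ℕ → G := fun j => W j (i₀ j) with hc
  -- the good events
  set P : ℕ → Prop := fun j =>
    (∃ l : List G, (∀ x ∈ l, x ∈ (T : Set G)) ∧ l.prod = (a j)⁻¹ * (b j)) ∧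
    dist (ι (a j)) p < δpq/4 ∧ dist (ι (b j)) q < δpq/4 ∧
    δpq/2 ≤ dist (ι (a j)) (ι (b j)) with hP
  have he1 : ∀ᶠ j in atTop, dist (ι (a j)) p < δpq/4 :=
    (tendsto_iff_dist_tendsto_zero.1 hap).eventually_lt_const (by linarith)
  have he2 : ∀ᶠ j in atTop, dist (ι (b j)) q < δpq/4 :=
    (tendsto_iff_dist_tendsto_zero.1 hbq).eventually_lt_const (by linarith)
  have he3 : ∀ᶠ j in atTop, δpq/2 ≤ dist (ι (a j)) (ι (b j)) := by
    filter_upwards [he1, he2] with j h1 h2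
    have htr : δpq ≤ dist p (ι (a j)) + dist (ι (a j)) (ι (b j)) + dist (ι (b j)) q :=
      dist_triangle4 p (ι (a j)) (ι (b j)) q
    have hcomm : dist p (ι (a j)) = dist (ι (a j)) p := dist_comm _ _
    linarith
  have hew : ∀ᶠ j in atTop,
      ε₁ * (max 1 ((wordDist (S : Set G) 1 (a j) : ℝ) - ε₁))⁻¹ ^ 2 < δpq/2 :=
    (bound_tendsto_zero (le_of_lt hε₁pos) halev).eventually_lt_const (by linarith)
  have heword : ∀ᶠ j in atTop,
      ∃ l : List G, (∀ x ∈ l, x ∈ (T : Set G)) ∧ l.prod = (a j)⁻¹ * (b j) := by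
    filter_upwards [he3, hew] with j h3 h4
    by_contra hno
    have hTd : wordDist (T : Set G) (a j) (b j) = 0 := wordDist_eq_zero_of_no_word hno
    have hSd : (wordDist (S : Set G) (a j) (b j) : ℝ) ≤ ε₁ := by
      have := (hund' (a j) (haH j) (b j) (hbH j)).2
      rw [hTd] at this
      simpa using this
    have hSd0 : (0:ℝ) ≤ (wordDist (S : Set G) (a j) (b j) : ℝ) := Nat.cast_nonneg _
    have hb1 := dist_le_of_word hsym hgen hdist (a j) (b j)
    have hb2 : (wordDist (S : Set G) (a j) (b j) : ℝ) *
        (max 1 ((wordDist (S : Set G) 1 (a j) : ℝ) - (wordDist (S : Set G) (a j) (b j) : ℝ)))⁻¹ ^ 2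
        ≤ ε₁ * (max 1 ((wordDist (S : Set G) 1 (a j) : ℝ) - ε₁))⁻¹ ^ 2 := by
      have hmax : max 1 ((wordDist (S : Set G) 1 (a j) : ℝ) - ε₁) ≤
          max 1 ((wordDist (S : Set G) 1 (a j) : ℝ) - (wordDist (S : Set G) (a j) (b j) : ℝ)) :=
        max_le_max le_rfl (by linarith)
      have hpos1 : (0:ℝ) < max 1 ((wordDist (S : Set G) 1 (a j) : ℝ) - ε₁) :=
        lt_of_lt_of_le zero_lt_one (le_max_left _ _)
      have hinv := inv_sq_anti hpos1 hmax
      apply mul_le_mul hSd hinv (by positivity) (le_of_lt hε₁pos)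
    linarith
  have hEall : ∀ᶠ j in atTop, P j := by
    filter_upwards [heword, he1, he2, he3] with j h0 h1 h2 h3
    exact ⟨h0, h1, h2, h3⟩
  -- the minimal level is bounded
  have hDle : ∀ j, P j → (wordDist (S : Set G) 1 (c j) : ℝ) ≤ 80 * ε₁ ^ 2 / δpq := by
    intro j hj
    obtain ⟨hW0, hWH, hWb, hgeo⟩ := hW j hj.1
    have hcent := central_estimate hsym hgen hTS hdist hε₁ hund' hWH (hi₀le j) hgeo (hi₀min j)
    rw [hW0, hWb (L j) le_rfl] at hcent
    have h3 := hj.2.2.2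
    set M : ℝ := max 1 ((wordDist (S : Set G) 1 (c j) : ℝ)) with hM
    have hMpos : (0:ℝ) < M := lt_of_lt_of_le zero_lt_one (le_max_left _ _)
    have h4 : δpq/2 ≤ 40 * ε₁ ^ 2 / M := le_trans h3 hcent
    rw [le_div_iff₀ hMpos] at h4
    have h5 : M ≤ 80 * ε₁ ^ 2 / δpq := by
      rw [le_div_iff₀ hδ]
      nlinarith
    exact le_trans (le_max_right _ _) h5
  set R : ℕ := ⌈(80 * ε₁ ^ 2 / δpq : ℝ)⌉₊ with hR
  have hDleR : ∀ j, P j → wordDist (S : Set G) 1 (c j) ≤ R := by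
    intro j hj
    have h1 := hDle j hj
    have h2 : (wordDist (S : Set G) 1 (c j) : ℝ) ≤ (R : ℝ) := le_trans h1 (Nat.le_ceil _)
    exact_mod_cast h2
  -- the ultrafilter
  set 𝒰 : Ultrafilter ℕ := Ultrafilter.of atTop with h𝒰
  have hUev : ∀ {r : ℕ → Prop}, (∀ᶠ j in atTop, r j) → (∀ᶠ j in (𝒰 : Filter ℕ), r j) :=
    fun h => h.filter_mono (Ultrafilter.of_le atTop)
  -- pigeonhole for the center
  have hcex : ∃ v : G, {j | c j = v} ∈ 𝒰 := by
    refine ultra_pigeon 𝒰 (ball_finite hsym hgen R) (x := c) ?_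
    have : ∀ᶠ j in (𝒰 : Filter ℕ), c j ∈ {x : G | wordDist (S : Set G) 1 x ≤ R} :=
      (hUev hEall).mono fun j hj => hDleR j hj
    exact this
  obtain ⟨cs, hcs⟩ := hcex
  have hcsU : ∀ᶠ j in (𝒰 : Filter ℕ), c j = cs := hcs
  obtain ⟨j₀, hj₀1, hj₀2⟩ := (hcsU.and (hUev hEall)).exists
  have hcsH : cs ∈ H := by
    rw [← hj₀1]
    exact (hW j₀ hj₀2.1).2.1 _
  have hcslev : wordDist (S : Set G) 1 cs ≤ R := by
    rw [← hj₀1]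
    exact hDleR j₀ hj₀2
  -- the clamped bi-infinite paths
  set δf : ℕ → ℤ → G := fun j i => W j ((min (i + (i₀ j : ℤ)) ((L j : ℤ))).toNat) with hδf
  have hF0 : ∀ j, P j → δf j 0 = c j := by
    intro j hj
    show W j ((min ((0:ℤ) + (i₀ j : ℤ)) ((L j : ℤ))).toNat) = W j (i₀ j)
    congr 1
    have h := hi₀le j
    omega
  have hFH : ∀ j i, P j → δf j i ∈ H := by
    intro j i hj
    exact (hW j hj.1).2.1 _
  have hFa : ∀ j, P j → ∀ i : ℤ, i ≤ -(i₀ j : ℤ) → δf j i = a j := by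
    intro j hj i hi
    show W j ((min (i + (i₀ j : ℤ)) ((L j : ℤ))).toNat) = a j
    have hk : ((min (i + (i₀ j : ℤ)) ((L j : ℤ))).toNat) = 0 := by omega
    rw [hk]
    exact (hW j hj.1).1
  have hFb : ∀ j, P j → ∀ i : ℤ, ((L j : ℤ) - i₀ j) ≤ i → δf j i = b j := by
    intro j hj i hi
    show W j ((min (i + (i₀ j : ℤ)) ((L j : ℤ))).toNat) = b j
    have hk : ((min (i + (i₀ j : ℤ)) ((L j : ℤ))).toNat) = L j := by omega
    rw [hk]
    exact (hW j hj.1).2.2.1 (L j) le_rfl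
  have hF2 : ∀ j, P j → ∀ m n : ℤ, -(i₀ j : ℤ) ≤ m → m ≤ n → n ≤ (L j : ℤ) - i₀ j →
      wordDist (T : Set G) (δf j m) (δf j n) = (n - m).toNat := by
    intro j hj m n hm hmn hn
    show wordDist (T : Set G) (W j ((min (m + (i₀ j : ℤ)) ((L j : ℤ))).toNat))
      (W j ((min (n + (i₀ j : ℤ)) ((L j : ℤ))).toNat)) = (n - m).toNat
    set u : ℕ := (min (m + (i₀ j : ℤ)) ((L j : ℤ))).toNat with hu
    set v : ℕ := (min (n + (i₀ j : ℤ)) ((L j : ℤ))).toNat with hv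
    have huv : u ≤ v := by omega
    have hvL : v ≤ L j := by omega
    rw [(hW j hj.1).2.2.2 u v huv hvL]
    omega
  -- the ends go to infinity
  have hdTa : ∀ j, P j → wordDist (T : Set G) (a j) (c j) = i₀ j := by
    intro j hj
    have := (hW j hj.1).2.2.2 0 (i₀ j) (Nat.zero_le _) (hi₀le j)
    rw [(hW j hj.1).1] at this
    simpa using this
  have hdTb : ∀ j, P j → wordDist (T : Set G) (c j) (b j) = L j - i₀ j := by
    intro j hj
    have := (hW j hj.1).2.2.2 (i₀ j) (L j) (hi₀le j) le_rfl
    rwa [(hW j hj.1).2.2.1 (L j) le_rfl] at this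
  have hsN : ∀ N : ℕ, ∀ᶠ j in atTop, P j → (N ≤ i₀ j ∧ (N : ℤ) ≤ (L j : ℤ) - i₀ j) := by
    intro N
    filter_upwards [halev.eventually_ge_atTop (ε₁ * N + R + ε₁),
      hblev.eventually_ge_atTop (ε₁ * N + R + ε₁)] with j hA hB hj
    have hca : c j ∈ H := (hW j hj.1).2.1 _
    have hlevc : (wordDist (S : Set G) 1 (c j) : ℝ) ≤ R := by
      exact_mod_cast Nat.cast_le.2 (hDleR j hj)
    constructor
    · -- side a
      have h1 : (wordDist (S : Set G) (a j) (c j) : ℝ) ≤ ε₁ * (i₀ j : ℝ) + ε₁ := by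
        have := (hund' (a j) (haH j) (c j) hca).2
        rwa [hdTa j hj] at this
      have h2 : wordDist (S : Set G) 1 (a j) ≤ wordDist (S : Set G) 1 (c j) +
          wordDist (S : Set G) (c j) (a j) := lev_le_lev_add_wordDist hsym hgen _ _
      have h3 : wordDist (S : Set G) (c j) (a j) = wordDist (S : Set G) (a j) (c j) :=
        wordDist_symm (by simpa using hsym) _ _
      rw [h3] at h2
      have h4 : (wordDist (S : Set G) 1 (a j) : ℝ) ≤ (wordDist (S : Set G) 1 (c j) : ℝ) +
          (wordDist (S : Set G) (a j) (c j) : ℝ) := by exact_mod_cast h2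
      have h5 : ε₁ * (N : ℝ) ≤ ε₁ * (i₀ j : ℝ) := by linarith
      have h6 : (N : ℝ) ≤ (i₀ j : ℝ) := le_of_mul_le_mul_left h5 hε₁pos
      exact_mod_cast h6
    · -- side b
      have h1 : (wordDist (S : Set G) (c j) (b j) : ℝ) ≤ ε₁ * ((L j : ℝ) - (i₀ j : ℝ)) + ε₁ := by
        have := (hund' (c j) hca (b j) (hbH j)).2
        rw [hdTb j hj] at this
        have hcast : ((L j - i₀ j : ℕ) : ℝ) = (L j : ℝ) - (i₀ j : ℝ) := by
          have := hi₀le j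
          push_cast [Nat.cast_sub this]
          ring
        rwa [hcast] at this
      have h2 : wordDist (S : Set G) 1 (b j) ≤ wordDist (S : Set G) 1 (c j) +
          wordDist (S : Set G) (c j) (b j) := lev_le_lev_add_wordDist hsym hgen _ _
      have h4 : (wordDist (S : Set G) 1 (b j) : ℝ) ≤ (wordDist (S : Set G) 1 (c j) : ℝ) +
          (wordDist (S : Set G) (c j) (b j) : ℝ) := by exact_mod_cast h2
      have h5 : ε₁ * (N : ℝ) ≤ ε₁ * ((L j : ℝ) - (i₀ j : ℝ)) := by linarith
      have h6 : (N : ℝ) ≤ (L j : ℝ) - (i₀ j : ℝ) := le_of_mul_le_mul_left h5 hε₁pos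
      have : ((N : ℤ) : ℝ) ≤ (((L j : ℤ) - i₀ j : ℤ) : ℝ) := by push_cast; push_cast at h6; linarith
      exact_mod_cast this
  -- definition of γ by the ultrafilter
  have hkey : ∀ i : ℤ, ∃ v : G, ∀ᶠ j in (𝒰 : Filter ℕ), δf j i = v := by
    intro i
    set B : ℕ := R + (⌈ε₁ * ((i.natAbs : ℝ) + 1)⌉₊ + 1) with hB
    have hmem : {j | δf j i ∈ {x : G | wordDist (S : Set G) 1 x ≤ B}} ∈ 𝒰 := by
      have hev : ∀ᶠ j in (𝒰 : Filter ℕ), δf j i ∈ {x : G | wordDist (S : Set G) 1 x ≤ B} := by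
        filter_upwards [hUev hEall, hUev (hsN i.natAbs)] with j hj hN
        obtain ⟨hN1, hN2⟩ := hN hj
        have hrange1 : -(i₀ j : ℤ) ≤ i := by omega
        have hrange2 : i ≤ (L j : ℤ) - i₀ j := by omega
        have hca : c j ∈ H := (hW j hj.1).2.1 _
        have hδH : δf j i ∈ H := hFH j i hj
        have hdT : (wordDist (T : Set G) (c j) (δf j i) = i.natAbs) ∨
            (wordDist (T : Set G) (δf j i) (c j) = i.natAbs) := by
          rcases le_or_gt 0 i with h0 | h0
          · left
            have := hF2 j hj 0 i (by omega) h0 hrange2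
            rw [hF0 j hj] at this
            rw [this]
            omega
          · right
            have := hF2 j hj i 0 hrange1 (by omega) (by omega)
            rw [hF0 j hj] at this
            rw [this]
            omega
        have hdS : (wordDist (S : Set G) (c j) (δf j i) : ℝ) ≤ ε₁ * (i.natAbs : ℝ) + ε₁ := by
          rcases hdT with h | h
          · have := (hund' (c j) hca (δf j i) hδH).2
            rwa [h] at this
          · have := (hund' (δf j i) hδH (c j) hca).2
            rw [h] at this
            have hsymm : wordDist (S : Set G) (c j) (δf j i) =
                wordDist (S : Set G) (δf j i) (c j) := wordDist_symm (by simpa using hsym) _ _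
            rw [hsymm]
            exact this
        have hlev : (wordDist (S : Set G) 1 (δf j i) : ℝ) ≤
            (R : ℝ) + (ε₁ * (i.natAbs : ℝ) + ε₁) := by
          have h2 := lev_le_lev_add_wordDist hsym hgen (c j) (δf j i)
          have h4 : (wordDist (S : Set G) 1 (δf j i) : ℝ) ≤
              (wordDist (S : Set G) 1 (c j) : ℝ) + (wordDist (S : Set G) (c j) (δf j i) : ℝ) := by
            exact_mod_cast h2
          have h5 : (wordDist (S : Set G) 1 (c j) : ℝ) ≤ (R:ℝ) := by
            exact_mod_cast Nat.cast_le.2 (hDleR j hj)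
          linarith
        have hfin : (wordDist (S : Set G) 1 (δf j i) : ℝ) ≤ (B : ℝ) := by
          have h6 : ε₁ * (i.natAbs : ℝ) + ε₁ = ε₁ * ((i.natAbs : ℝ) + 1) := by ring
          have h7 : ε₁ * ((i.natAbs : ℝ) + 1) ≤ (⌈ε₁ * ((i.natAbs : ℝ) + 1)⌉₊ : ℝ) := Nat.le_ceil _
          rw [hB]
          push_cast
          linarith
        simpa using (Nat.cast_le.1 hfin)
      exact hev
    obtain ⟨v, hv⟩ := ultra_pigeon 𝒰 (ball_finite hsym hgen B) hmem
    exact ⟨v, hv⟩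
  choose γ hγ using hkey
  -- levels along the path
  have hlev2 : ∀ j, P j → c j = cs → ∀ u : ℤ, -(i₀ j : ℤ) ≤ u → u ≤ (L j : ℤ) - i₀ j →
      ε₁⁻¹ * (u.natAbs : ℝ) - ε₁ - R ≤ (wordDist (S : Set G) 1 (δf j u) : ℝ) := by
    intro j hj hcj u hu1 hu2
    have hca : cs ∈ H := hcsH
    have hδH : δf j u ∈ H := hFH j u hj
    have hc0 : δf j 0 = cs := by rw [hF0 j hj, hcj]
    have hdT : (wordDist (T : Set G) (cs) (δf j u) = u.natAbs) ∨
        (wordDist (T : Set G) (δf j u) (cs) = u.natAbs) := by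
      rcases le_or_gt 0 u with h0 | h0
      · left
        have := hF2 j hj 0 u (by omega) h0 hu2
        rw [hc0] at this
        rw [this]
        omega
      · right
        have hle := hi₀le j
        have := hF2 j hj u 0 hu1 (by omega) (by omega)
        rw [hc0] at this
        rw [this]
        omega
    have hdS : ε₁⁻¹ * (u.natAbs : ℝ) - ε₁ ≤ (wordDist (S : Set G) (cs) (δf j u) : ℝ) := by
      rcases hdT with h | h
      · have := (hund' (cs) hca (δf j u) hδH).1
        rwa [h] at this
      · have := (hund' (δf j u) hδH (cs) hca).1
        rw [h] at this
        have hsymm : wordDist (S : Set G) (cs) (δf j u) =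
            wordDist (S : Set G) (δf j u) (cs) := wordDist_symm (by simpa using hsym) _ _
        rw [hsymm]
        exact this
    have h2 := wordDist_le_lev_add_lev hsym hgen (cs) (δf j u)
    have h4 : (wordDist (S : Set G) (cs) (δf j u) : ℝ) ≤
        (wordDist (S : Set G) 1 (cs) : ℝ) + (wordDist (S : Set G) 1 (δf j u) : ℝ) := by
      exact_mod_cast h2
    have h5 : (wordDist (S : Set G) 1 (cs) : ℝ) ≤ (R:ℝ) := by
      exact_mod_cast Nat.cast_le.2 hcslev
    linarith
  set Ns : ℕ := ⌈2 * ε₁ * (ε₁ + R + 2)⌉₊ + 1 with hNs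
  -- tail estimates
  have hNsbig : 2 * ε₁ * (ε₁ + R + 2) ≤ (Ns : ℝ) := by
    have h1 : 2 * ε₁ * (ε₁ + R + 2) ≤ (⌈2 * ε₁ * (ε₁ + R + 2)⌉₊ : ℝ) := Nat.le_ceil _
    rw [hNs]
    push_cast
    linarith
  have hNspos : 1 ≤ Ns := by omega
  -- common level-to-weight bound
  have hwt : ∀ j, P j → c j = cs → ∀ n : ℕ, Ns ≤ n → ∀ u u' : ℤ,
      -(i₀ j : ℤ) ≤ u → -(i₀ j : ℤ) ≤ u' → u ≤ (L j : ℤ) - i₀ j → u' ≤ (L j : ℤ) - i₀ j →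
      (n : ℤ) ≤ u.natAbs → (u.natAbs : ℤ) ≤ u'.natAbs →
      floydEdgeWeight (S : Set G) (δf j u) (δf j u') ≤ 4 * ε₁ ^ 2 * ((u.natAbs : ℝ))⁻¹ ^ 2 := by
    intro j hj hcj n hn u u' hu1 hu'1 hu2 hu'2 hun huu'
    set m : ℕ := u.natAbs with hm
    have hmn : (n : ℝ) ≤ (m : ℝ) := by exact_mod_cast hun
    have hNsn : (Ns : ℝ) ≤ (n : ℝ) := Nat.cast_le.2 hn
    have hmbig : 2 * ε₁ * (ε₁ + R + 2) ≤ (m : ℝ) := by linarith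
    set r : ℝ := (m : ℝ) / (2 * ε₁) with hr
    have hrpos : 0 < r := by
      apply div_pos _ (by linarith)
      nlinarith
    have hr1 : 1 ≤ r := by
      rw [hr, le_div_iff₀ (by linarith)]
      nlinarith
    have hkey : ∀ w : ℤ, -(i₀ j : ℤ) ≤ w → w ≤ (L j : ℤ) - i₀ j → (m : ℤ) ≤ w.natAbs →
        r ≤ (wordDist (S : Set G) 1 (δf j w) : ℝ) := by
      intro w hw1 hw2 hwm
      have hlev := hlev2 j hj hcj w hw1 hw2
      have hwm' : (m : ℝ) ≤ (w.natAbs : ℝ) := by exact_mod_cast hwm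
      have h1 : ε₁⁻¹ * (m : ℝ) - ε₁ - R ≤ ε₁⁻¹ * (w.natAbs : ℝ) - ε₁ - R := by
        have := mul_le_mul_of_nonneg_left hwm' (le_of_lt (inv_pos.2 hε₁pos))
        linarith
      have h2 : r ≤ ε₁⁻¹ * (m : ℝ) - ε₁ - R := by
        rw [hr]
        rw [div_le_iff₀ (by linarith : (0:ℝ) < 2 * ε₁)]
        have hid : (ε₁⁻¹ * (m : ℝ) - ε₁ - (R:ℝ)) * (2 * ε₁) =
            2 * (m : ℝ) - (2 * ε₁ * ε₁ + 2 * ε₁ * R) := by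
          field_simp
          ring
        rw [hid]
        nlinarith
      linarith
    have hw1b := hkey u hu1 hu2 (by omega)
    have hw2b := hkey u' hu'1 hu'2 (by omega)
    have := floydEdgeWeight_le hw1b hw2b
    rw [max_eq_right hr1] at this
    refine le_trans this (le_of_eq ?_)
    have hrinv : r⁻¹ = 2 * ε₁ * ((m:ℝ))⁻¹ := by
      rw [hr, div_eq_mul_inv, mul_inv, inv_inv]
      ring
    rw [hrinv]
    ring
  have htailpos : ∀ n : ℕ, Ns ≤ n → ∀ η : ℝ, 0 < η →
      dist (ι (γ (n : ℤ))) q ≤ 8 * ε₁ ^ 2 / n + η := by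
    intro n hn η hη
    have hbev : ∀ᶠ j in atTop, dist (ι (b j)) q < η :=
      (tendsto_iff_dist_tendsto_zero.1 hbq).eventually_lt_const hη
    obtain ⟨j, hj1, hj2, hj3, hj4, hj5⟩ :=
      ((hγ (n : ℤ)).and ((hUev hEall).and ((hUev (hsN n)).and (hcsU.and (hUev hbev))))).exists
    obtain ⟨hs1, hs2⟩ := hj3 hj2
    set K : ℕ := ((L j : ℤ) - i₀ j - n).toNat with hK
    set v : ℕ → G := fun k => δf j ((n : ℤ) + k) with hv
    have hv0 : v 0 = δf j (n : ℤ) := by simp [hv]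
    have hvK : v K = b j := by
      rw [hv]
      exact hFb j hj2 _ (by omega)
    have hstep : ∀ k, k < K → wordDist (S : Set G) (v k) (v (k + 1)) = 1 := by
      intro k hk
      have hd := hF2 j hj2 ((n : ℤ) + (k : ℕ)) ((n : ℤ) + ((k + 1 : ℕ) : ℤ)) (by omega)
        (by omega) (by omega)
      have hone : wordDist (T : Set G) (δf j ((n : ℤ) + (k : ℕ)))
          (δf j ((n : ℤ) + ((k + 1 : ℕ) : ℤ))) = 1 := by
        rw [hd]
        omega
      have hS1 : wordDist (S : Set G) (δf j ((n : ℤ) + (k : ℕ)))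
          (δf j ((n : ℤ) + ((k + 1 : ℕ) : ℤ))) = 1 :=
        step_S_of_step_T hsym hgen hTS hone
      rw [hv]
      simpa using hS1
    have hsum := dist_le_sum_weights hdist v K hstep
    have hwtk : ∀ k ∈ Finset.range K,
        floydEdgeWeight (S : Set G) (v k) (v (k + 1)) ≤
          4 * ε₁ ^ 2 * (((n + k : ℕ) : ℝ))⁻¹ ^ 2 := by
      intro k hk
      simp only [Finset.mem_range] at hk
      have hcast : ((n : ℤ) + ((k + 1 : ℕ) : ℤ)) = (n : ℤ) + k + 1 := by push_cast; ring
      have hna : ((n : ℤ) + k).natAbs = n + k := by omega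
      have := hwt j hj2 hj4 n hn ((n:ℤ) + k) ((n:ℤ) + k + 1) (by omega) (by omega)
        (by omega) (by omega) (by omega) (by omega)
      rw [hna] at this
      rw [hv]
      simpa [hcast, add_assoc] using this
    have hsum2 : dist (ι (v 0)) (ι (v K)) ≤ 8 * ε₁ ^ 2 / n := by
      refine le_trans hsum (le_trans (Finset.sum_le_sum hwtk) ?_)
      have := sum_inv_sq_tail n K (by omega)
      calc ∑ k ∈ Finset.range K, 4 * ε₁ ^ 2 * (((n + k : ℕ) : ℝ))⁻¹ ^ 2
          = 4 * ε₁ ^ 2 * ∑ k ∈ Finset.range K, (((n + k : ℕ) : ℝ))⁻¹ ^ 2 := by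
            rw [Finset.mul_sum]
        _ ≤ 4 * ε₁ ^ 2 * (2 / n) := by
            apply mul_le_mul_of_nonneg_left this (by positivity)
        _ = 8 * ε₁ ^ 2 / n := by ring
    have hfinal : dist (ι (γ (n : ℤ))) q ≤ dist (ι (v 0)) (ι (v K)) + dist (ι (b j)) q := by
      rw [hv0, hj1, hvK]
      exact dist_triangle _ _ _
    have : dist (ι (b j)) q ≤ η := le_of_lt hj5
    linarith
  have htailneg : ∀ n : ℕ, Ns ≤ n → ∀ η : ℝ, 0 < η →
      dist (ι (γ (-(n : ℤ)))) p ≤ 8 * ε₁ ^ 2 / n + η := by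
    intro n hn η hη
    have haev : ∀ᶠ j in atTop, dist (ι (a j)) p < η :=
      (tendsto_iff_dist_tendsto_zero.1 hap).eventually_lt_const hη
    obtain ⟨j, hj1, hj2, hj3, hj4, hj5⟩ :=
      ((hγ (-(n : ℤ))).and ((hUev hEall).and ((hUev (hsN n)).and (hcsU.and (hUev haev))))).exists
    obtain ⟨hs1, hs2⟩ := hj3 hj2
    set K : ℕ := i₀ j - n with hK
    set v : ℕ → G := fun k => δf j (-(n : ℤ) - k) with hv
    have hv0 : v 0 = δf j (-(n : ℤ)) := by simp [hv]
    have hvK : v K = a j := by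
      rw [hv]
      exact hFa j hj2 _ (by omega)
    have hle := hi₀le j
    have hstep : ∀ k, k < K → wordDist (S : Set G) (v k) (v (k + 1)) = 1 := by
      intro k hk
      have hd := hF2 j hj2 (-(n : ℤ) - ((k + 1 : ℕ) : ℤ)) (-(n : ℤ) - (k : ℕ)) (by omega)
        (by omega) (by omega)
      have hone : wordDist (T : Set G) (δf j (-(n : ℤ) - ((k + 1 : ℕ) : ℤ)))
          (δf j (-(n : ℤ) - (k : ℕ))) = 1 := by
        rw [hd]
        omega
      have hS1 : wordDist (S : Set G) (δf j (-(n : ℤ) - ((k + 1 : ℕ) : ℤ)))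
          (δf j (-(n : ℤ) - (k : ℕ))) = 1 :=
        step_S_of_step_T hsym hgen hTS hone
      have hS2 : wordDist (S : Set G) (δf j (-(n : ℤ) - (k : ℕ)))
          (δf j (-(n : ℤ) - ((k + 1 : ℕ) : ℤ))) = 1 := by
        rw [wordDist_symm (by simpa using hsym)]
        exact hS1
      rw [hv]
      simpa using hS2
    have hsum := dist_le_sum_weights hdist v K hstep
    have hwtk : ∀ k ∈ Finset.range K,
        floydEdgeWeight (S : Set G) (v k) (v (k + 1)) ≤
          4 * ε₁ ^ 2 * (((n + k : ℕ) : ℝ))⁻¹ ^ 2 := by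
      intro k hk
      simp only [Finset.mem_range] at hk
      have hna : (-(n : ℤ) - (k:ℕ)).natAbs = n + k := by omega
      have := hwt j hj2 hj4 n hn (-(n:ℤ) - (k:ℕ)) (-(n:ℤ) - ((k + 1 : ℕ) : ℤ)) (by omega)
        (by omega) (by omega) (by omega) (by omega) (by omega)
      rw [hna] at this
      rw [hv]
      simpa using this
    have hsum2 : dist (ι (v 0)) (ι (v K)) ≤ 8 * ε₁ ^ 2 / n := by
      refine le_trans hsum (le_trans (Finset.sum_le_sum hwtk) ?_)
      have := sum_inv_sq_tail n K (by omega)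
      calc ∑ k ∈ Finset.range K, 4 * ε₁ ^ 2 * (((n + k : ℕ) : ℝ))⁻¹ ^ 2
          = 4 * ε₁ ^ 2 * ∑ k ∈ Finset.range K, (((n + k : ℕ) : ℝ))⁻¹ ^ 2 := by
            rw [Finset.mul_sum]
        _ ≤ 4 * ε₁ ^ 2 * (2 / n) := by
            apply mul_le_mul_of_nonneg_left this (by positivity)
        _ = 8 * ε₁ ^ 2 / n := by ring
    have hfinal : dist (ι (γ (-(n : ℤ)))) p ≤ dist (ι (v 0)) (ι (v K)) + dist (ι (a j)) p := by
      rw [hv0, hj1, hvK]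
      exact dist_triangle _ _ _
    have : dist (ι (a j)) p ≤ η := le_of_lt hj5
    linarith
  -- finish
  have hγH : ∀ i : ℤ, γ i ∈ H := by
    intro i
    obtain ⟨j, hj1, hj2⟩ := ((hγ i).and (hUev hEall)).exists
    rw [← hj1]
    exact hFH j i hj2
  have htendneg : Tendsto (fun k : ℕ => ι (γ (-(k : ℤ)))) atTop (nhds p) := by
    rw [Metric.tendsto_atTop]
    intro ζ hζ
    obtain ⟨M, hM⟩ := exists_nat_gt (8 * ε₁ ^ 2 / ζ)
    refine ⟨max Ns (M + 1), fun k hk => ?_⟩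
    have hk1 : Ns ≤ k := le_trans (le_max_left _ _) hk
    have hk2 : M + 1 ≤ k := le_trans (le_max_right _ _) hk
    have hd : dist (ι (γ (-(k : ℤ)))) p ≤ 8 * ε₁ ^ 2 / k :=
      le_of_forall_pos_le_add (fun η hη => htailneg k hk1 η hη)
    have hkpos : (0:ℝ) < (k:ℝ) := by
      have : (1:ℕ) ≤ k := by omega
      exact_mod_cast Nat.lt_of_lt_of_le Nat.zero_lt_one this
    have hlt : 8 * ε₁ ^ 2 / (k:ℝ) < ζ := by
      rw [div_lt_iff₀ hkpos]
      rw [div_lt_iff₀ hζ] at hM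
      have hMk : ((M:ℝ) + 1) ≤ (k:ℝ) := by exact_mod_cast hk2
      nlinarith
    linarith
  have htendpos : Tendsto (fun k : ℕ => ι (γ (k : ℤ))) atTop (nhds q) := by
    rw [Metric.tendsto_atTop]
    intro ζ hζ
    obtain ⟨M, hM⟩ := exists_nat_gt (8 * ε₁ ^ 2 / ζ)
    refine ⟨max Ns (M + 1), fun k hk => ?_⟩
    have hk1 : Ns ≤ k := le_trans (le_max_left _ _) hk
    have hk2 : M + 1 ≤ k := le_trans (le_max_right _ _) hk
    have hd : dist (ι (γ (k : ℤ))) q ≤ 8 * ε₁ ^ 2 / k :=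
      le_of_forall_pos_le_add (fun η hη => htailpos k hk1 η hη)
    have hkpos : (0:ℝ) < (k:ℝ) := by
      have : (1:ℕ) ≤ k := by omega
      exact_mod_cast Nat.lt_of_lt_of_le Nat.zero_lt_one this
    have hlt : 8 * ε₁ ^ 2 / (k:ℝ) < ζ := by
      rw [div_lt_iff₀ hkpos]
      rw [div_lt_iff₀ hζ] at hM
      have hMk : ((M:ℝ) + 1) ≤ (k:ℝ) := by exact_mod_cast hk2
      nlinarith
    linarith
  refine ⟨γ, hγH, ?_, ?_, htendneg, htendpos⟩
  · -- consecutive steps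
    intro n
    obtain ⟨j, hj1, hj2, hj3, hj4⟩ :=
      ((hγ n).and ((hγ (n+1)).and ((hUev hEall).and (hUev (hsN (n.natAbs + 1)))))).exists
    obtain ⟨hs1, hs2⟩ := hj4 hj3
    have hd := hF2 j hj3 n (n + 1) (by omega) (by omega) (by omega)
    have hone : wordDist (T : Set G) (δf j n) (δf j (n + 1)) = 1 := by
      rw [hd]
      omega
    have := step_S_of_step_T hsym hgen hTS hone
    rwa [hj1, hj2] at this
  · -- quasigeodesic
    intro m n hmn
    obtain ⟨j, hj1, hj2, hj3, hj4⟩ :=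
      ((hγ m).and ((hγ n).and ((hUev hEall).and (hUev (hsN (m.natAbs + n.natAbs)))))).exists
    obtain ⟨hs1, hs2⟩ := hj4 hj3
    have hd := hF2 j hj3 m n (by omega) hmn (by omega)
    rw [hj1, hj2] at hd
    have hlow := (hund' (γ m) (hγH m) (γ n) (hγH n)).1
    rw [hd] at hlow
    have hcast : (((n - m).toNat : ℕ) : ℝ) = ((n - m : ℤ) : ℝ) := by
      have h0 : (0:ℤ) ≤ n - m := by omega
      exact_mod_cast congrArg (fun z : ℤ => (z : ℝ)) (Int.toNat_of_nonneg h0)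
    rw [hcast] at hlow
    have hd0 : (0:ℝ) ≤ (wordDist (S : Set G) (γ m) (γ n) : ℝ) := Nat.cast_nonneg _
    have hmul : ((n - m : ℤ) : ℝ) ≤ ε₁ * (wordDist (S : Set G) (γ m) (γ n) : ℝ) + ε₁ ^ 2 := by
      have h1 : ε₁⁻¹ * ((n - m : ℤ) : ℝ) ≤ (wordDist (S : Set G) (γ m) (γ n) : ℝ) + ε₁ := by
        linarith
      have h2 := mul_le_mul_of_nonneg_left h1 (le_of_lt hε₁pos)
      rw [← mul_assoc, mul_inv_cancel₀ (ne_of_gt hε₁pos), one_mul] at h2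
      nlinarith
    nlinarith
end

section
/- Let G be a group with a convergence group action on a compact metrizable space M with at least three points. Then a conical limit point of G cannot be a parabolic point of G, i.e. no point z ∈ M that is a conical limit point of G is fixed by a parabolic subgroup of G. -/
open Pointwise Filter Topology Set

/- ===================================================================================
   Auxiliary machinery for the proof that a conical limit point is not parabolic.

   Strategy (a version of Tukia's argument, reworked to use only the properness of the
   action on distinct triples):

   * `star`: the basic consequence of properness: there is no sequence of pairwise
     distinct group elements `k j` together with triples `t j` of distinct points
     converging (along a fixed ultrafilter extending `atTop`) to a distinct triple and
     whose images `k j • t j` also converge to a distinct triple.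
   * `pattern`: for an injective sequence `k`, the pointwise (ultrafilter) limits of
     `k j • y` take a common value `c` for all `y` outside at most one exceptional point.
   * `convergence`: the convergence-group property: an injective sequence has
     "north-south" limit dynamics `(u, v)`: `k j • y j → u` whenever `y j → w ≠ v`,
     and dually for the inverses.
   * `stepC`: an injective sequence with north-south dynamics `(u, v)`, `u ≠ v`,
     eventually consists of loxodromic elements.
   * `engine`: putting everything together: if `z` is conical (witnessed by `g`, with
     limits `a ≠ b`) and `P` is an infinite subgroup fixing `z`, we build `r j ∈ P` and
     indices `n j` such that the conjugates `k j = g (n j) * r j * (g (n j))⁻¹` are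
     pairwise distinct and suitably steered; the pins `k j • (g (n j) • z) = g (n j) • z → a`
     and `k j • (g (n j) • w₀) = g (n j) • (r j • w₀) → b` force the north-south pair of
     `(k j)` to be `(a, b)` or `(b, a)`, hence `k j` is eventually loxodromic, hence some
     `r j ∈ P` is loxodromic, a contradiction.
   =================================================================================== -/

namespace ConicalNotParabolicAux

set_option linter.unusedSectionVars false

open Metric

variable {G M : Type*} [Group G] [MetricSpace M] [CompactSpace M] [MulAction G M]

/-- Distinctness of a triple. -/
def D3 (t : M × M × M) : Prop := t.1 ≠ t.2.1 ∧ t.1 ≠ t.2.2 ∧ t.2.1 ≠ t.2.2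

/-- Properness of the action on distinct triples. -/
def Prop3 (G M : Type*) [Group G] [MetricSpace M] [MulAction G M] : Prop :=
  ∀ K L : Set (M × M × M), IsCompact K → IsCompact L →
    (∀ t ∈ K ∪ L, t.1 ≠ t.2.1 ∧ t.1 ≠ t.2.2 ∧ t.2.1 ≠ t.2.2) →
    {g : G | ((g • K) ∩ L).Nonempty}.Finite

variable (𝒰 : Ultrafilter ℕ)

section Ulim

variable [Nonempty M]

/-- The limit of a sequence along an ultrafilter, in a compact space. -/
noncomputable def ulim (y : ℕ → M) : M :=
  (isCompact_univ.ultrafilter_le_nhds (Ultrafilter.map y 𝒰)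
    (le_principal_iff.2 univ_mem)).choose

lemma tendsto_ulim (y : ℕ → M) : Tendsto y ↑𝒰 (𝓝 (ulim 𝒰 y)) :=
  (isCompact_univ.ultrafilter_le_nhds (Ultrafilter.map y 𝒰)
    (le_principal_iff.2 univ_mem)).choose_spec.2

lemma ulim_eq {y : ℕ → M} {c : M} (h : Tendsto y ↑𝒰 (𝓝 c)) : ulim 𝒰 y = c :=
  tendsto_nhds_unique (tendsto_ulim 𝒰 y) h

lemma ulim_mem_of_closed {y : ℕ → M} {C : Set M} (hC : IsClosed C)
    (h : {j | y j ∈ C} ∈ 𝒰) : ulim 𝒰 y ∈ C :=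
  hC.mem_of_tendsto (tendsto_ulim 𝒰 y) h

end Ulim

lemma mem_infinite (h𝒰 : (𝒰 : Filter ℕ) ≤ atTop) {s : Set ℕ} (hs : s ∈ 𝒰) : s.Infinite := by
  by_contra h
  rw [Set.not_infinite] at h
  have hc : sᶜ ∈ 𝒰 := h𝒰 (by rw [← Nat.cofinite_eq_atTop]; exact h.compl_mem_cofinite)
  exact (Ultrafilter.compl_mem_iff_notMem.1 hc) hs

lemma dist_fst3 (x τ : M × M × M) : dist x.1 τ.1 ≤ dist x τ := by
  rw [Prod.dist_eq]; exact le_max_left _ _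

lemma dist_snd3 (x τ : M × M × M) : dist x.2.1 τ.2.1 ≤ dist x τ := by
  rw [Prod.dist_eq, Prod.dist_eq]
  exact le_max_of_le_right (le_max_left _ _)

lemma dist_trd3 (x τ : M × M × M) : dist x.2.2 τ.2.2 ≤ dist x τ := by
  rw [Prod.dist_eq, Prod.dist_eq]
  exact le_max_of_le_right (le_max_right _ _)

/-- Triples close to a distinct triple are distinct. -/
lemma exists_eps_D3 {τ : M × M × M} (hτ : D3 τ) :
    ∃ ε : ℝ, 0 < ε ∧ ∀ x : M × M × M, dist x τ < ε → D3 x := by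
  obtain ⟨h1, h2, h3⟩ := hτ
  set m : ℝ := min (dist τ.1 τ.2.1) (min (dist τ.1 τ.2.2) (dist τ.2.1 τ.2.2)) with hm
  have hmpos : 0 < m := by
    simp only [hm, lt_min_iff]
    exact ⟨dist_pos.2 h1, dist_pos.2 h2, dist_pos.2 h3⟩
  refine ⟨m / 3, by linarith, ?_⟩
  intro x hx
  have e1 := dist_fst3 x τ
  have e2 := dist_snd3 x τ
  have e3 := dist_trd3 x τ
  have hm1 : m ≤ dist τ.1 τ.2.1 := min_le_left _ _
  have hm2 : m ≤ dist τ.1 τ.2.2 := le_trans (min_le_right _ _) (min_le_left _ _)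
  have hm3 : m ≤ dist τ.2.1 τ.2.2 := le_trans (min_le_right _ _) (min_le_right _ _)
  refine ⟨fun h => ?_, fun h => ?_, fun h => ?_⟩
  · have hd : dist τ.1 τ.2.1 ≤ dist x.1 τ.1 + dist x.2.1 τ.2.1 := by
      calc dist τ.1 τ.2.1 ≤ dist τ.1 x.1 + dist x.1 τ.2.1 := dist_triangle _ _ _
        _ = dist x.1 τ.1 + dist x.2.1 τ.2.1 := by rw [dist_comm τ.1 x.1, h]
    linarith
  · have hd : dist τ.1 τ.2.2 ≤ dist x.1 τ.1 + dist x.2.2 τ.2.2 := by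
      calc dist τ.1 τ.2.2 ≤ dist τ.1 x.1 + dist x.1 τ.2.2 := dist_triangle _ _ _
        _ = dist x.1 τ.1 + dist x.2.2 τ.2.2 := by rw [dist_comm τ.1 x.1, h]
    linarith
  · have hd : dist τ.2.1 τ.2.2 ≤ dist x.2.1 τ.2.1 + dist x.2.2 τ.2.2 := by
      calc dist τ.2.1 τ.2.2 ≤ dist τ.2.1 x.2.1 + dist x.2.1 τ.2.2 := dist_triangle _ _ _
        _ = dist x.2.1 τ.2.1 + dist x.2.2 τ.2.2 := by rw [dist_comm τ.2.1 x.2.1, h]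
    linarith

lemma tendsto_of_dist_lt {f : ℕ → M} {x : M} (h : ∀ n, dist (f n) x < 1 / (n + 1)) :
    Tendsto f atTop (𝓝 x) := by
  rw [tendsto_iff_dist_tendsto_zero]
  exact squeeze_zero (fun n => dist_nonneg) (fun n => (h n).le)
    tendsto_one_div_add_atTop_nhds_zero_nat

/-- The key properness consequence. -/
lemma star (hprop : Prop3 G M) (h𝒰 : (𝒰 : Filter ℕ) ≤ atTop) [Nonempty M]
    {k : ℕ → G} (hinj : Function.Injective k)
    {t : ℕ → M × M × M} {τ σ : M × M × M} (hτ : D3 τ) (hσ : D3 σ)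
    (ht : Tendsto t ↑𝒰 (𝓝 τ)) (hts : Tendsto (fun j => k j • t j) ↑𝒰 (𝓝 σ)) : False := by
  classical
  obtain ⟨ε₁, hε₁, hball₁⟩ := exists_eps_D3 hτ
  obtain ⟨ε₂, hε₂, hball₂⟩ := exists_eps_D3 hσ
  have hA : ∀ n : ℕ, {j | dist (t j) τ < min ε₁ (1 / (n + 1)) ∧
      dist (k j • t j) σ < min ε₂ (1 / (n + 1))} ∈ 𝒰 := by
    intro n
    have hpos1 : (0 : ℝ) < min ε₁ (1 / (n + 1)) := lt_min hε₁ (by positivity)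
    have hpos2 : (0 : ℝ) < min ε₂ (1 / (n + 1)) := lt_min hε₂ (by positivity)
    have h1 : {j | dist (t j) τ < min ε₁ (1 / (n + 1))} ∈ (𝒰 : Filter ℕ) :=
      ht (Metric.ball_mem_nhds τ hpos1)
    have h2 : {j | dist (k j • t j) σ < min ε₂ (1 / (n + 1))} ∈ (𝒰 : Filter ℕ) :=
      hts (Metric.ball_mem_nhds σ hpos2)
    exact Filter.inter_mem h1 h2
  obtain ⟨φ, hφmono, hφ⟩ := extraction_forall_of_frequently
    (fun n => Nat.frequently_atTop_iff_infinite.2 (mem_infinite 𝒰 h𝒰 (hA n)))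
  have hKt : Tendsto (fun n => t (φ n)) atTop (𝓝 τ) :=
    tendsto_of_dist_lt (fun n => lt_of_lt_of_le (hφ n).1 (min_le_right _ _))
  have hLt : Tendsto (fun n => k (φ n) • t (φ n)) atTop (𝓝 σ) :=
    tendsto_of_dist_lt (fun n => lt_of_lt_of_le (hφ n).2 (min_le_right _ _))
  set K : Set (M × M × M) := insert τ (Set.range fun n => t (φ n)) with hK
  set L : Set (M × M × M) := insert σ (Set.range fun n => k (φ n) • t (φ n)) with hL
  have hKc : IsCompact K := hKt.isCompact_insert_range
  have hLc : IsCompact L := hLt.isCompact_insert_range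
  have hdis : ∀ x ∈ K ∪ L, x.1 ≠ x.2.1 ∧ x.1 ≠ x.2.2 ∧ x.2.1 ≠ x.2.2 := by
    rintro x (hx | hx)
    · rcases hx with rfl | ⟨n, rfl⟩
      · exact hτ
      · exact hball₁ _ (lt_of_lt_of_le (hφ n).1 (min_le_left _ _))
    · rcases hx with rfl | ⟨n, rfl⟩
      · exact hσ
      · exact hball₂ _ (lt_of_lt_of_le (hφ n).2 (min_le_left _ _))
  have hfin := hprop K L hKc hLc hdis
  have hinf2 : {g : G | ((g • K) ∩ L).Nonempty}.Infinite := by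
    apply Set.infinite_of_injective_forall_mem (f := fun n : ℕ => k (φ n))
      (hinj.comp hφmono.injective)
    intro n
    exact ⟨k (φ n) • t (φ n),
      Set.smul_mem_smul_set (Set.mem_insert_of_mem _ ⟨n, rfl⟩),
      Set.mem_insert_of_mem _ ⟨n, rfl⟩⟩
  exact hinf2 hfin

variable [Nonempty M]

variable {hP : Prop}

section Patterns

variable [Nonempty M]

variable {hP : Prop}

/-- Pattern lemma: pointwise ultrafilter limits of an injective sequence take a common
value off at most one exceptional point. -/
lemma pattern (hprop : Prop3 G M) (h𝒰 : (𝒰 : Filter ℕ) ≤ atTop) (hM : (univ : Set M).Infinite) {k : ℕ → G} (hinj : Function.Injective k) :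
    ∃ c e : M, ∀ y : M, y ≠ e → Tendsto (fun j => k j • y) ↑𝒰 (𝓝 c) := by
  classical
  set F : M → M := fun y => ulim 𝒰 (fun j => k j • y) with hF
  have hFt : ∀ y, Tendsto (fun j => k j • y) ↑𝒰 (𝓝 (F y)) := fun y => tendsto_ulim 𝒰 _
  have hne : ∀ {y y' : M}, F y ≠ F y' → y ≠ y' := by
    intro y y' h hyy
    exact h (by rw [hyy])
  have no3 : ∀ y₁ y₂ y₃ : M, F y₁ ≠ F y₂ → F y₁ ≠ F y₃ → F y₂ ≠ F y₃ → False := by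
    intro y₁ y₂ y₃ h12 h13 h23
    refine star 𝒰 hprop h𝒰 hinj (t := fun _ => ((y₁, y₂, y₃) : M × M × M))
      (τ := (y₁, y₂, y₃)) (σ := (F y₁, F y₂, F y₃))
      ⟨hne h12, hne h13, hne h23⟩ ⟨h12, h13, h23⟩ tendsto_const_nhds ?_
    show Tendsto (fun j => (k j • y₁, k j • y₂, k j • y₃)) ↑𝒰 (𝓝 (F y₁, F y₂, F y₃))
    exact (hFt y₁).prodMk_nhds ((hFt y₂).prodMk_nhds (hFt y₃))
  have nofat : ∀ y₁ y₂ y₃ y₄ : M, y₁ ≠ y₂ → y₃ ≠ y₄ → F y₁ = F y₂ → F y₃ = F y₄ →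
      F y₁ ≠ F y₃ → False := by
    intro y₁ y₂ y₃ y₄ h12 h34 e12 e34 hne13
    obtain ⟨γ, -, hγ⟩ := (hM.diff (Set.toFinite {F y₁, F y₃})).nonempty
    set ω := ulim 𝒰 (fun j => (k j)⁻¹ • γ) with hω
    obtain ⟨ya, hya, hyaω⟩ : ∃ ya, F ya = F y₁ ∧ ya ≠ ω := by
      by_cases h : y₁ = ω
      · refine ⟨y₂, e12.symm, fun hh => h12 ?_⟩
        rw [h, hh]
      · exact ⟨y₁, rfl, h⟩
    obtain ⟨yb, hyb, hybω⟩ : ∃ yb, F yb = F y₃ ∧ yb ≠ ω := by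
      by_cases h : y₃ = ω
      · refine ⟨y₄, e34.symm, fun hh => h34 ?_⟩
        rw [h, hh]
      · exact ⟨y₃, rfl, h⟩
    have hnab : ya ≠ yb := hne (by rw [hya, hyb]; exact hne13)
    have hγ1 : F y₁ ≠ γ := fun h => hγ (h ▸ Set.mem_insert _ _)
    have hγ3 : F y₃ ≠ γ := fun h => hγ (h ▸ Set.mem_insert_of_mem _ rfl)
    refine star 𝒰 hprop h𝒰 hinj (t := fun j => ((ya, yb, (k j)⁻¹ • γ) : M × M × M))
      (τ := (ya, yb, ω)) (σ := (F y₁, F y₃, γ))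
      ⟨hnab, hyaω, hybω⟩ ⟨hne13, hγ1, hγ3⟩ ?_ ?_
    · exact tendsto_const_nhds.prodMk_nhds
        (tendsto_const_nhds.prodMk_nhds (tendsto_ulim 𝒰 _))
    · have heq : (fun j => k j • ((ya, yb, (k j)⁻¹ • γ) : M × M × M))
          = fun j => ((k j • ya, k j • yb, γ) : M × M × M) := by
        funext j
        show (k j • ya, k j • yb, k j • ((k j)⁻¹ • γ)) = _
        rw [smul_inv_smul]
      rw [heq]
      have h1 : Tendsto (fun j => k j • ya) ↑𝒰 (𝓝 (F y₁)) := by rw [← hya]; exact hFt ya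
      have h2 : Tendsto (fun j => k j • yb) ↑𝒰 (𝓝 (F y₃)) := by rw [← hyb]; exact hFt yb
      exact h1.prodMk_nhds (h2.prodMk_nhds tendsto_const_nhds)
  by_cases hconst : ∀ y y' : M, F y = F y'
  · obtain ⟨y₀⟩ := (inferInstance : Nonempty M)
    exact ⟨F y₀, y₀, fun y _ => by rw [← hconst y y₀]; exact hFt y⟩
  · push_neg at hconst
    obtain ⟨y₁, y₂, h12⟩ := hconst
    have h2vals : ∀ y : M, F y = F y₁ ∨ F y = F y₂ := by
      intro y
      by_contra hy
      push_neg at hy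
      exact no3 y₁ y₂ y h12 (fun h => hy.1 h.symm) (fun h => hy.2 h.symm)
    have hcover : (univ : Set M) ⊆ {y | F y = F y₁} ∪ {y | F y = F y₂} :=
      fun y _ => h2vals y
    have main : ∀ u₁ u₂ : M, F u₁ ≠ F u₂ → (∀ y : M, F y = F u₁ ∨ F y = F u₂) →
        {y | F y = F u₁}.Infinite →
        ∃ c e : M, ∀ y : M, y ≠ e → Tendsto (fun j => k j • y) ↑𝒰 (𝓝 c) := by
      intro u₁ u₂ hne12 h2v hinf1
      refine ⟨F u₁, u₂, fun y hy => ?_⟩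
      rcases h2v y with h | h
      · rw [← h]; exact hFt y
      · exfalso
        obtain ⟨w₁, hw₁⟩ := hinf1.nonempty
        obtain ⟨w₂, hw₂, hw₂w₁⟩ := (hinf1.diff (Set.finite_singleton w₁)).nonempty
        refine nofat w₁ w₂ y u₂ ?_ hy ?_ h ?_
        · intro hh
          exact hw₂w₁ (by rw [hh]; rfl)
        · rw [Set.mem_setOf_eq] at hw₁ hw₂
          rw [hw₁, hw₂]
        · rw [Set.mem_setOf_eq] at hw₁
          rw [hw₁]
          exact fun hh => hne12 (hh.trans h)
    have hfi : {y | F y = F y₁}.Infinite ∨ {y | F y = F y₂}.Infinite := by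
      by_contra hcon
      push_neg at hcon
      exact hM ((hcon.1.union hcon.2).subset hcover)
    rcases hfi with hf | hf
    · exact main y₁ y₂ h12 h2vals hf
    · exact main y₂ y₁ (Ne.symm h12) (fun y => (h2vals y).symm) hf

/-- North-south convergence along the ultrafilter. -/
def LU (k : ℕ → G) (u v : M) : Prop :=
  ∀ (y : ℕ → M) (w : M), w ≠ v → Tendsto y ↑𝒰 (𝓝 w) →
    Tendsto (fun j => k j • y j) ↑𝒰 (𝓝 u)

lemma lu_core (hprop : Prop3 G M) (h𝒰 : (𝒰 : Filter ℕ) ≤ atTop) (hM : (univ : Set M).Infinite) {k : ℕ → G} (hinj : Function.Injective k)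
    {c e c' e' : M}
    (hc : ∀ y : M, y ≠ e → Tendsto (fun j => k j • y) ↑𝒰 (𝓝 c))
    (hc' : ∀ y : M, y ≠ e' → Tendsto (fun j => (k j)⁻¹ • y) ↑𝒰 (𝓝 c')) :
    LU 𝒰 k c c' := by
  intro y w hw hy
  have key : ulim 𝒰 (fun j => k j • y j) = c := by
    by_contra hnec
    set ybar := ulim 𝒰 (fun j => k j • y j) with hybar
    obtain ⟨T₀, -, hT₀⟩ := (hM.diff (Set.toFinite ({e', ybar, c} : Set M))).nonempty
    obtain ⟨d₁, -, hd₁⟩ := (hM.diff (Set.toFinite ({e, w, c'} : Set M))).nonempty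
    have hT₀e' : T₀ ≠ e' := fun h => hT₀ (h ▸ Set.mem_insert _ _)
    have hT₀y : T₀ ≠ ybar := fun h => hT₀ (h ▸ Set.mem_insert_of_mem _ (Set.mem_insert _ _))
    have hT₀c : T₀ ≠ c := fun h =>
      hT₀ (h ▸ Set.mem_insert_of_mem _ (Set.mem_insert_of_mem _ rfl))
    have hd₁e : d₁ ≠ e := fun h => hd₁ (h ▸ Set.mem_insert _ _)
    have hd₁w : d₁ ≠ w := fun h => hd₁ (h ▸ Set.mem_insert_of_mem _ (Set.mem_insert _ _))
    have hd₁c' : d₁ ≠ c' := fun h =>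
      hd₁ (h ▸ Set.mem_insert_of_mem _ (Set.mem_insert_of_mem _ rfl))
    refine star 𝒰 hprop h𝒰 hinj (t := fun j => ((y j, (k j)⁻¹ • T₀, d₁) : M × M × M))
      (τ := (w, c', d₁)) (σ := (ybar, T₀, c))
      ⟨hw, hd₁w.symm, hd₁c'.symm⟩ ⟨hT₀y.symm, hnec, hT₀c⟩ ?_ ?_
    · exact hy.prodMk_nhds ((hc' T₀ hT₀e').prodMk_nhds tendsto_const_nhds)
    · have heq : (fun j => k j • ((y j, (k j)⁻¹ • T₀, d₁) : M × M × M))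
          = fun j => ((k j • y j, T₀, k j • d₁) : M × M × M) := by
        funext j
        show (k j • y j, k j • ((k j)⁻¹ • T₀), k j • d₁) = _
        rw [smul_inv_smul]
      rw [heq]
      exact (tendsto_ulim 𝒰 _).prodMk_nhds
        (tendsto_const_nhds.prodMk_nhds (hc d₁ hd₁e))
  rw [← key]
  exact tendsto_ulim 𝒰 _

/-- The convergence property: every injective sequence has north-south dynamics along
the ultrafilter. -/
lemma convergence (hprop : Prop3 G M) (h𝒰 : (𝒰 : Filter ℕ) ≤ atTop) (hM : (univ : Set M).Infinite) {k : ℕ → G}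
    (hinj : Function.Injective k) :
    ∃ u v : M, LU 𝒰 k u v ∧ LU 𝒰 (fun j => (k j)⁻¹) v u := by
  obtain ⟨c, e, hc⟩ := pattern 𝒰 hprop h𝒰 hM hinj
  have hinvinj : Function.Injective (fun j => (k j)⁻¹) := fun a b h => hinj (inv_injective h)
  obtain ⟨c', e', hc'⟩ := pattern 𝒰 hprop h𝒰 hM hinvinj
  refine ⟨c, c', lu_core 𝒰 hprop h𝒰 hM hinj hc hc', ?_⟩
  refine lu_core 𝒰 hprop h𝒰 hM hinvinj (e := e') (e' := e) hc' ?_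
  intro y hy
  have := hc y hy
  simpa [inv_inv] using this

lemma lu_ball {k : ℕ → G} {u v : M} (hLU : LU 𝒰 k u v) {ε₁ ε₂ : ℝ}
    (hε₁ : 0 < ε₁) (hε₂ : 0 < ε₂) :
    {j | ∀ y : M, y ∉ ball v ε₁ → k j • y ∈ ball u ε₂} ∈ 𝒰 := by
  classical
  by_contra hmem
  have hT : {j | ∀ y : M, y ∉ ball v ε₁ → k j • y ∈ ball u ε₂}ᶜ ∈ 𝒰 :=
    Ultrafilter.compl_mem_iff_notMem.2 hmem
  have hch : ∀ j : ℕ, ∃ y : M,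
      j ∈ {j | ∀ y : M, y ∉ ball v ε₁ → k j • y ∈ ball u ε₂}ᶜ →
      (y ∉ ball v ε₁ ∧ k j • y ∉ ball u ε₂) := by
    intro j
    by_cases h : ∀ y : M, y ∉ ball v ε₁ → k j • y ∈ ball u ε₂
    · exact ⟨Classical.arbitrary M, fun hj => absurd h hj⟩
    · push_neg at h
      obtain ⟨y, hy1, hy2⟩ := h
      exact ⟨y, fun _ => ⟨hy1, hy2⟩⟩
  choose y hy using hch
  have hyT : {j | y j ∈ (ball v ε₁)ᶜ} ∈ 𝒰 :=
    𝒰.toFilter.mem_of_superset hT (fun j hj => (hy j hj).1)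
  have hwmem : ulim 𝒰 y ∈ (ball v ε₁)ᶜ :=
    ulim_mem_of_closed 𝒰 isOpen_ball.isClosed_compl hyT
  have hwv : ulim 𝒰 y ≠ v := fun h => hwmem (by rw [h]; exact mem_ball_self hε₁)
  have htend := hLU y (ulim 𝒰 y) hwv (tendsto_ulim 𝒰 y)
  have h2 : {j | k j • y j ∈ ball u ε₂} ∈ (𝒰 : Filter ℕ) := htend (ball_mem_nhds u hε₂)
  obtain ⟨j, hj1, hj2⟩ := Filter.nonempty_of_mem (Filter.inter_mem hT h2)
  exact (hy j hj1).2 hj2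

/-- An injective sequence with cross north-south dynamics eventually contains a
loxodromic element. -/
lemma stepC (hprop : Prop3 G M) (hcont : ∀ g : G, Continuous fun x : M => g • x)
    (h𝒰 : (𝒰 : Filter ℕ) ≤ atTop) [Nonempty M]
    (hM : (univ : Set M).Infinite) {k : ℕ → G} (hinj : Function.Injective k)
    {u v : M} (huv : u ≠ v)
    (hLU : LU 𝒰 k u v) (hLU' : LU 𝒰 (fun j => (k j)⁻¹) v u) :
    ∃ j, ¬ IsOfFinOrder (k j) ∧ {x : M | k j • x = x}.encard = 2 := by
  classical
  obtain ⟨x₀, -, hx₀⟩ := (hM.diff (Set.toFinite ({u, v} : Set M))).nonempty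
  have hx₀u : x₀ ≠ u := fun h => hx₀ (h ▸ Set.mem_insert _ _)
  have hx₀v : x₀ ≠ v := fun h => hx₀ (h ▸ Set.mem_insert_of_mem _ rfl)
  set ε : ℝ := min (min (dist x₀ u) (dist x₀ v)) (dist u v) / 3 with hεdef
  have hdxu : 0 < dist x₀ u := dist_pos.2 hx₀u
  have hdxv : 0 < dist x₀ v := dist_pos.2 hx₀v
  have hduv : 0 < dist u v := dist_pos.2 huv
  have hεpos : 0 < ε := by
    rw [hεdef]
    have : 0 < min (min (dist x₀ u) (dist x₀ v)) (dist u v) :=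
      lt_min (lt_min hdxu hdxv) hduv
    linarith
  have h3euv : 3 * ε ≤ dist u v := by
    rw [hεdef]
    have := min_le_right (min (dist x₀ u) (dist x₀ v)) (dist u v)
    linarith
  have h3exu : 3 * ε ≤ dist x₀ u := by
    rw [hεdef]
    have h1 := min_le_left (min (dist x₀ u) (dist x₀ v)) (dist u v)
    have h2 := min_le_left (dist x₀ u) (dist x₀ v)
    linarith
  have h3exv : 3 * ε ≤ dist x₀ v := by
    rw [hεdef]
    have h1 := min_le_left (min (dist x₀ u) (dist x₀ v)) (dist u v)
    have h2 := min_le_right (dist x₀ u) (dist x₀ v)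
    linarith
  obtain ⟨J, hJ1, hJ2⟩ := Filter.nonempty_of_mem
    (Filter.inter_mem (lu_ball 𝒰 hLU hεpos hεpos) (lu_ball 𝒰 hLU' hεpos hεpos))
  set κ : G := k J with hκ
  have hk1 : ∀ y : M, y ∉ ball v ε → κ • y ∈ ball u ε := hJ1
  have hk2 : ∀ y : M, y ∉ ball u ε → κ⁻¹ • y ∈ ball v ε := hJ2
  have hballs : ∀ y : M, y ∈ closedBall u ε → y ∉ ball v ε := by
    intro y hy hyv
    rw [mem_closedBall] at hy
    rw [mem_ball] at hyv
    have htr : dist u v ≤ dist y u + dist y v := by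
      calc dist u v ≤ dist u y + dist y v := dist_triangle _ _ _
        _ = dist y u + dist y v := by rw [dist_comm]
    linarith
  have hballs' : ∀ y : M, y ∈ closedBall v ε → y ∉ ball u ε := by
    intro y hy hyu
    rw [mem_closedBall] at hy
    rw [mem_ball] at hyu
    have htr : dist u v ≤ dist y u + dist y v := by
      calc dist u v ≤ dist u y + dist y v := dist_triangle _ _ _
        _ = dist y u + dist y v := by rw [dist_comm u y]
    linarith
  have hx₀nv : x₀ ∉ ball v ε := by
    rw [mem_ball]
    intro h
    linarith
  have hx₀nu : x₀ ∉ ball u ε := by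
    rw [mem_ball]
    intro h
    linarith
  have hunv : u ∉ ball v ε := by
    rw [mem_ball]
    intro h
    linarith
  have hvnu : v ∉ ball u ε := by
    rw [mem_ball]
    intro h
    rw [dist_comm] at h
    linarith
  have hpow : ∀ w : M, w ∉ ball v ε → ∀ i : ℕ, κ ^ (i + 1) • w ∈ ball u ε := by
    intro w hw i
    induction i with
    | zero => simpa [pow_one] using hk1 w hw
    | succ n ih =>
      have h1 : κ ^ (n + 1 + 1) • w = κ • (κ ^ (n + 1) • w) := by
        rw [← mul_smul, ← pow_succ']
      rw [h1]
      exact hk1 _ (hballs _ (ball_subset_closedBall ih))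
  have hpow' : ∀ w : M, w ∉ ball u ε → ∀ i : ℕ, (κ ^ (i + 1))⁻¹ • w ∈ ball v ε := by
    intro w hw i
    induction i with
    | zero => simpa [pow_one] using hk2 w hw
    | succ n ih =>
      have h1 : (κ ^ (n + 1 + 1))⁻¹ • w = κ⁻¹ • ((κ ^ (n + 1))⁻¹ • w) := by
        rw [← mul_smul, ← mul_inv_rev, ← pow_succ]
      rw [h1]
      exact hk2 _ (hballs' _ (ball_subset_closedBall ih))
  have hord : ¬ IsOfFinOrder κ := by
    intro h
    obtain ⟨m, hm, hm1⟩ := isOfFinOrder_iff_pow_eq_one.1 h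
    obtain ⟨i, rfl⟩ : ∃ i, m = i + 1 := ⟨m - 1, by omega⟩
    have := hpow x₀ hx₀nv i
    rw [hm1, one_smul] at this
    exact hx₀nu this
  have hKinj : Function.Injective (fun i : ℕ => κ ^ (i + 1)) := by
    have key : ∀ s t : ℕ, s < t → κ ^ (s + 1) = κ ^ (t + 1) → False := by
      intro s t hst he
      apply hord
      refine isOfFinOrder_iff_pow_eq_one.2 ⟨t - s, by omega, ?_⟩
      have h1 : κ ^ (t + 1) = κ ^ (s + 1) * κ ^ (t - s) := by
        rw [← pow_add]
        congr 1
        omega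
      rw [← he] at h1
      exact (left_eq_mul.1 h1)
    intro i i' h
    by_contra hne
    rcases Ne.lt_or_gt hne with h' | h'
    · exact key i i' h' h
    · exact key i' i h' h.symm
  obtain ⟨c', d', hP1, hP2⟩ := convergence 𝒰 hprop h𝒰 hM hKinj
  -- c' lies in the closed ball around u
  obtain ⟨w₁, hw₁v, hw₁d'⟩ : ∃ w₁ : M, w₁ ∉ ball v ε ∧ w₁ ≠ d' := by
    by_cases h : u = d'
    · exact ⟨x₀, hx₀nv, fun hh => hx₀u (hh.trans h.symm)⟩
    · exact ⟨u, hunv, h⟩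
  have hc'mem : c' ∈ closedBall u ε := by
    have ht : Tendsto (fun i => κ ^ (i + 1) • w₁) ↑𝒰 (𝓝 c') :=
      hP1 (fun _ => w₁) w₁ hw₁d' tendsto_const_nhds
    exact Metric.isClosed_closedBall.mem_of_tendsto ht
      (Filter.Eventually.of_forall fun i => ball_subset_closedBall (hpow w₁ hw₁v i))
  obtain ⟨w₂, hw₂u, hw₂c'⟩ : ∃ w₂ : M, w₂ ∉ ball u ε ∧ w₂ ≠ c' := by
    by_cases h : v = c'
    · exact ⟨x₀, hx₀nu, fun hh => hx₀v (hh.trans h.symm)⟩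
    · exact ⟨v, hvnu, h⟩
  have hd'mem : d' ∈ closedBall v ε := by
    have ht : Tendsto (fun i => (κ ^ (i + 1))⁻¹ • w₂) ↑𝒰 (𝓝 d') :=
      hP2 (fun _ => w₂) w₂ hw₂c' tendsto_const_nhds
    exact Metric.isClosed_closedBall.mem_of_tendsto ht
      (Filter.Eventually.of_forall fun i => ball_subset_closedBall (hpow' w₂ hw₂u i))
  have hc'd' : c' ≠ d' := by
    intro h
    have h1 := mem_closedBall.1 hc'mem
    have h2 := mem_closedBall.1 hd'mem
    rw [h] at h1
    have htr : dist u v ≤ dist d' u + dist d' v := by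
      calc dist u v ≤ dist u d' + dist d' v := dist_triangle _ _ _
        _ = dist d' u + dist d' v := by rw [dist_comm u d']
    linarith
  -- the nested intersections
  set C : ℕ → Set M := fun i => (fun y => κ ^ (i + 1) • y) '' closedBall u ε with hC
  have hCne : ∀ i, (C i).Nonempty :=
    fun i => ⟨κ ^ (i + 1) • u, u, mem_closedBall_self hεpos.le, rfl⟩
  have hCcompact : ∀ i, IsCompact (C i) :=
    fun i => (isCompact_closedBall u ε).image (hcont _)
  have hCanti : ∀ i, C (i + 1) ⊆ C i := by
    rintro i x ⟨y, hy, rfl⟩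
    refine ⟨κ • y, ball_subset_closedBall (hk1 y (hballs y hy)), ?_⟩
    show κ ^ (i + 1) • (κ • y) = κ ^ (i + 1 + 1) • y
    rw [← mul_smul, ← pow_succ]
  have hXne : (⋂ i, C i).Nonempty :=
    IsCompact.nonempty_iInter_of_sequence_nonempty_isCompact_isClosed C hCanti hCne
      (hCcompact 0) (fun i => (hCcompact i).isClosed)
  have hUd : ∀ y : M, y ∈ closedBall u ε → y ∉ ball d' ε := by
    intro y hy hyd
    rw [mem_closedBall] at hy
    rw [mem_ball] at hyd
    have h2 := mem_closedBall.1 hd'mem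
    have htr : dist u v ≤ dist y u + dist y d' + dist d' v := by
      calc dist u v ≤ dist u y + dist y v := dist_triangle _ _ _
        _ ≤ dist u y + (dist y d' + dist d' v) := by linarith [dist_triangle y d' v]
        _ = dist y u + dist y d' + dist d' v := by rw [dist_comm u y]; ring
    linarith
  have hXsub : ∀ x ∈ ⋂ i, C i, x = c' := by
    intro x hx
    have hdist : ∀ ε' : ℝ, 0 < ε' → dist x c' < ε' := by
      intro ε' hε'
      obtain ⟨i, hi⟩ := Filter.nonempty_of_mem (lu_ball 𝒰 hP1 hεpos hε')
      obtain ⟨y, hy, hxy⟩ := Set.mem_iInter.1 hx i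
      rw [← hxy]
      exact mem_ball.1 (hi y (hUd y hy))
    by_contra hne
    exact lt_irrefl _ (hdist (dist x c') (dist_pos.2 (fun h => hne h)))
  obtain ⟨xX, hxX⟩ := hXne
  have hc'X : c' ∈ ⋂ i, C i := hXsub xX hxX ▸ hxX
  have hfixc : κ • c' = c' := by
    apply hXsub
    rw [Set.mem_iInter]
    intro i
    obtain ⟨y, hy, hxy⟩ := Set.mem_iInter.1 hc'X i
    refine hCanti i ⟨y, hy, ?_⟩
    show κ ^ (i + 1 + 1) • y = κ • c'
    rw [← hxy]
    show κ ^ (i + 1 + 1) • y = κ • (κ ^ (i + 1) • y)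
    rw [← mul_smul, ← pow_succ']
  -- dual side
  set D : ℕ → Set M := fun i => (fun y => (κ ^ (i + 1))⁻¹ • y) '' closedBall v ε with hD
  have hDne : ∀ i, (D i).Nonempty :=
    fun i => ⟨(κ ^ (i + 1))⁻¹ • v, v, mem_closedBall_self hεpos.le, rfl⟩
  have hDcompact : ∀ i, IsCompact (D i) :=
    fun i => (isCompact_closedBall v ε).image (hcont _)
  have hDanti : ∀ i, D (i + 1) ⊆ D i := by
    rintro i x ⟨y, hy, rfl⟩
    refine ⟨κ⁻¹ • y, ball_subset_closedBall (hk2 y (hballs' y hy)), ?_⟩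
    show (κ ^ (i + 1))⁻¹ • (κ⁻¹ • y) = (κ ^ (i + 1 + 1))⁻¹ • y
    rw [← mul_smul, ← mul_inv_rev, ← pow_succ']
  have hVc : ∀ y : M, y ∈ closedBall v ε → y ∉ ball c' ε := by
    intro y hy hyc
    rw [mem_closedBall] at hy
    rw [mem_ball] at hyc
    have h2 := mem_closedBall.1 hc'mem
    have htr : dist u v ≤ dist c' u + dist y c' + dist y v := by
      calc dist u v ≤ dist u c' + dist c' v := dist_triangle _ _ _
        _ ≤ dist u c' + (dist c' y + dist y v) := by linarith [dist_triangle c' y v]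
        _ = dist c' u + dist y c' + dist y v := by rw [dist_comm u c', dist_comm c' y]; ring
    linarith
  have hYsub : ∀ x ∈ ⋂ i, D i, x = d' := by
    intro x hx
    have hdist : ∀ ε' : ℝ, 0 < ε' → dist x d' < ε' := by
      intro ε' hε'
      obtain ⟨i, hi⟩ := Filter.nonempty_of_mem (lu_ball 𝒰 hP2 hεpos hε')
      obtain ⟨y, hy, hxy⟩ := Set.mem_iInter.1 hx i
      rw [← hxy]
      exact mem_ball.1 (hi y (hVc y hy))
    by_contra hne
    exact lt_irrefl _ (hdist (dist x d') (dist_pos.2 (fun h => hne h)))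
  have hYne : (⋂ i, D i).Nonempty :=
    IsCompact.nonempty_iInter_of_sequence_nonempty_isCompact_isClosed D hDanti hDne
      (hDcompact 0) (fun i => (hDcompact i).isClosed)
  obtain ⟨xY, hxY⟩ := hYne
  have hd'Y : d' ∈ ⋂ i, D i := hYsub xY hxY ▸ hxY
  have hfixd : κ • d' = d' := by
    have h1 : κ⁻¹ • d' = d' := by
      apply hYsub
      rw [Set.mem_iInter]
      intro i
      obtain ⟨y, hy, hxy⟩ := Set.mem_iInter.1 hd'Y i
      refine hDanti i ⟨y, hy, ?_⟩
      show (κ ^ (i + 1 + 1))⁻¹ • y = κ⁻¹ • d'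
      rw [← hxy]
      show (κ ^ (i + 1 + 1))⁻¹ • y = κ⁻¹ • ((κ ^ (i + 1))⁻¹ • y)
      rw [← mul_smul, ← mul_inv_rev, ← pow_succ]
    calc κ • d' = κ • (κ⁻¹ • d') := by rw [h1]
      _ = d' := smul_inv_smul _ _
  -- identification of the fixed point set
  have hFix : {x : M | κ • x = x} = {c', d'} := by
    ext x
    simp only [Set.mem_setOf_eq, Set.mem_insert_iff, Set.mem_singleton_iff]
    constructor
    · intro hx
      by_cases hxv : x ∈ ball v ε
      · right
        have hxfix' : κ⁻¹ • x = x := by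
          conv_lhs => rw [← hx]
          rw [inv_smul_smul]
        have hxpow : ∀ i : ℕ, (κ ^ (i + 1))⁻¹ • x = x := by
          intro i
          induction i with
          | zero => simpa [pow_one] using hxfix'
          | succ n ih =>
            have h1 : (κ ^ (n + 1 + 1))⁻¹ • x = κ⁻¹ • ((κ ^ (n + 1))⁻¹ • x) := by
              rw [← mul_smul, ← mul_inv_rev, ← pow_succ]
            rw [h1, ih, hxfix']
        apply hYsub
        rw [Set.mem_iInter]
        intro i
        exact ⟨x, ball_subset_closedBall hxv, hxpow i⟩
      · left
        have hxpow : ∀ i : ℕ, κ ^ (i + 1) • x = x := by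
          intro i
          induction i with
          | zero => simpa [pow_one] using hx
          | succ n ih =>
            have h1 : κ ^ (n + 1 + 1) • x = κ • (κ ^ (n + 1) • x) := by
              rw [← mul_smul, ← pow_succ']
            rw [h1, ih, hx]
        have hxu : x ∈ closedBall u ε := ball_subset_closedBall (hx ▸ hk1 x hxv)
        apply hXsub
        rw [Set.mem_iInter]
        intro i
        exact ⟨x, hxu, hxpow i⟩
    · rintro (rfl | rfl)
      exacts [hfixc, hfixd]
  exact ⟨J, hord, by rw [hFix]; exact Set.encard_pair hc'd'⟩

end Patterns

/-- Transfer loxodromicity through conjugation. -/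
lemma lox_transfer {g r : G} (h1 : ¬ IsOfFinOrder (g * r * g⁻¹))
    (h2 : {x : M | (g * r * g⁻¹) • x = x}.encard = 2) :
    ¬ IsOfFinOrder r ∧ {x : M | r • x = x}.encard = 2 := by
  constructor
  · intro h
    apply h1
    obtain ⟨m, hm, hm1⟩ := isOfFinOrder_iff_pow_eq_one.1 h
    exact isOfFinOrder_iff_pow_eq_one.2
      ⟨m, hm, by rw [conj_pow, hm1, mul_one, mul_inv_cancel]⟩
  · have hset : {x : M | (g * r * g⁻¹) • x = x} = (fun x : M => g • x) '' {x : M | r • x = x} := by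
      ext x
      simp only [Set.mem_setOf_eq, Set.mem_image]
      constructor
      · intro hx
        refine ⟨g⁻¹ • x, ?_, smul_inv_smul g x⟩
        have hx' : g • (r • (g⁻¹ • x)) = x := by
          rw [← mul_smul, ← mul_smul]
          exact hx
        calc r • (g⁻¹ • x) = g⁻¹ • (g • (r • (g⁻¹ • x))) := (inv_smul_smul g _).symm
          _ = g⁻¹ • x := by rw [hx']
      · rintro ⟨y, hy, rfl⟩
        show (g * r * g⁻¹) • g • y = g • y
        rw [mul_smul, mul_smul, inv_smul_smul, hy]
    rw [hset, Set.InjOn.encard_image ((MulAction.injective g).injOn)] at h2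
    exact h2

/-- Recursion with choice. -/
lemma exists_rec_seq {α T : Type*} (init : T) (upd : T → α → T)
    (Q : T → α → Prop) (h : ∀ t : T, ∃ a, Q t a) :
    ∃ (f : ℕ → α) (s : ℕ → T), s 0 = init ∧ (∀ n, s (n + 1) = upd (s n) (f n)) ∧
      ∀ n, Q (s n) (f n) := by
  classical
  choose pick hpick using h
  exact ⟨fun n => pick (Nat.rec init (fun _ ih => upd ih (pick ih)) n),
    fun n => Nat.rec init (fun _ ih => upd ih (pick ih)) n, rfl, fun n => rfl,
    fun n => hpick _⟩

/-- The main engine: a conical limit point cannot be fixed by an infinite subgroup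
without loxodromic elements. -/
lemma engine (hprop : Prop3 G M) (hcont : ∀ g : G, Continuous fun x : M => g • x)
    (hM : (univ : Set M).Infinite)
    (g : ℕ → G) (z a b : M) (hab : a ≠ b)
    (hza : Tendsto (fun n => g n • z) atTop (𝓝 a))
    (hqb : ∀ q : M, q ≠ z → Tendsto (fun n => g n • q) atTop (𝓝 b))
    (P : Subgroup G) (hPinf : (P : Set G).Infinite)
    (hnl : ∀ p ∈ P, ¬ (¬ IsOfFinOrder p ∧ {x : M | p • x = x}.encard = 2))
    (hfix : ∀ p ∈ P, p • z = z) : False := by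
  classical
  have hNe : Nonempty M := ⟨z⟩
  obtain ⟨w₀, -, hw₀'⟩ := (hM.diff (Set.finite_singleton z)).nonempty
  have hw₀ : w₀ ≠ z := hw₀'
  set 𝒰 : Ultrafilter ℕ := Ultrafilter.of atTop with h𝒰def
  have h𝒰 : (𝒰 : Filter ℕ) ≤ atTop := Ultrafilter.of_le atTop
  have hrw : ∀ r : G, r ∈ P → r • w₀ ≠ z := by
    intro r hr h
    apply hw₀
    have h2 : r⁻¹ • (r • w₀) = r⁻¹ • z := by rw [h]
    rw [inv_smul_smul] at h2
    rw [h2, hfix r⁻¹ (inv_mem hr)]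
  -- the step existence: given the current state, there is an admissible next choice
  have hstep : ∀ st : Finset G × Finset G × ℕ × ℕ, ∃ p : G × ℕ,
      p.1 ∈ P ∧ p.1 ∉ st.1 ∧ st.2.2.1 < p.2 ∧
      dist (g p.2 • (p.1 • w₀)) b < 1 / (st.2.2.2 + 1) ∧
      g p.2 * p.1 * (g p.2)⁻¹ ∉ st.2.1 := by
    rintro ⟨R, F, N, m⟩
    by_contra hcon
    push_neg at hcon
    simp only at hcon
    obtain ⟨t, htsub, htfin, htcard⟩ :=
      (hPinf.diff R.finite_toSet).exists_subset_ncard_eq (F.card + 1)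
    have hth : ∀ r : G, ∃ Nr : ℕ, r ∈ t → ∀ n ≥ Nr,
        dist (g n • (r • w₀)) b < 1 / (m + 1) := by
      intro r
      by_cases hr : r ∈ t
      · have hrP : r ∈ P := (htsub hr).1
        obtain ⟨Nr, hNr⟩ := (Metric.tendsto_atTop.1 (hqb (r • w₀) (hrw r hrP)))
          (1 / (m + 1)) (by positivity)
        exact ⟨Nr, fun _ => hNr⟩
      · exact ⟨0, fun h => absurd h hr⟩
    choose Nr hNr using hth
    set ft : Finset G := htfin.toFinset with hft
    set n₀ : ℕ := max (N + 1) (ft.sup Nr) with hn₀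
    have hn₀N : N < n₀ := lt_of_lt_of_le (Nat.lt_succ_self N) (le_max_left _ _)
    have hmem : ∀ r ∈ ft, g n₀ * r * (g n₀)⁻¹ ∈ F := by
      intro r hr
      rw [Set.Finite.mem_toFinset] at hr
      have h1 : r ∈ P := (htsub hr).1
      have h2 : r ∉ (R : Set G) := (htsub hr).2
      have h3 : dist (g n₀ • (r • w₀)) b < 1 / (m + 1) :=
        hNr r hr n₀ (le_trans (Finset.le_sup (htfin.mem_toFinset.2 hr)) (le_max_right _ _))
      exact hcon (r, n₀) h1 (by simpa using h2) hn₀N h3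
    have hinj0 : Set.InjOn (fun r => g n₀ * r * (g n₀)⁻¹) ft := by
      intro r hr r' hr' h
      simp only at h
      exact mul_left_cancel (mul_right_cancel h)
    have hcard := Finset.card_le_card_of_injOn _ hmem hinj0
    have hftcard : ft.card = F.card + 1 := by
      rw [hft, ← htcard]
      exact (Set.ncard_eq_toFinset_card t htfin).symm
    omega
  obtain ⟨f, s, hs0, hsS, hQ⟩ := exists_rec_seq
    (init := ((∅ : Finset G), (∅ : Finset G), 0, 0))
    (upd := fun st p => (insert p.1 st.1, insert (g p.2 * p.1 * (g p.2)⁻¹) st.2.1,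
      max st.2.2.1 p.2, st.2.2.2 + 1)) _ hstep
  set r : ℕ → G := fun j => (f j).1 with hr
  set nn : ℕ → ℕ := fun j => (f j).2 with hnn
  set kk : ℕ → G := fun j => g (nn j) * r j * (g (nn j))⁻¹ with hkk
  have hctr : ∀ j, (s j).2.2.2 = j := by
    intro j
    induction j with
    | zero => rw [hs0]
    | succ n ih => rw [hsS]; simpa using ih
  have hacc : ∀ j m, m < j → r m ∈ (s j).1 ∧ kk m ∈ (s j).2.1 ∧ nn m ≤ (s j).2.2.1 := by
    intro j
    induction j with
    | zero => intro m hm; omega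
    | succ n ih =>
      intro m hm
      rw [hsS]
      rcases Nat.lt_succ_iff_lt_or_eq.1 hm with h | h
      · obtain ⟨h1, h2, h3⟩ := ih m h
        exact ⟨Finset.mem_insert_of_mem h1, Finset.mem_insert_of_mem h2,
          le_trans h3 (le_max_left _ _)⟩
      · subst h
        exact ⟨Finset.mem_insert_self _ _, Finset.mem_insert_self _ _, le_max_right _ _⟩
  have hrP : ∀ j, r j ∈ P := fun j => (hQ j).1
  have hnlt : ∀ m j, m < j → nn m < nn j :=
    fun m j hmj => lt_of_le_of_lt (hacc j m hmj).2.2 (hQ j).2.2.1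
  have hnmono : StrictMono nn := fun m j h => hnlt m j h
  have hkinj : Function.Injective kk := by
    intro m j h
    by_contra hne
    rcases Ne.lt_or_gt hne with h' | h'
    · have h1 := (hacc j m h').2.1
      rw [h] at h1
      exact (hQ j).2.2.2.2 h1
    · have h1 := (hacc m j h').2.1
      rw [← h] at h1
      exact (hQ m).2.2.2.2 h1
  have hsteer : ∀ j, dist (g (nn j) • (r j • w₀)) b < 1 / (j + 1) := by
    intro j
    have h := (hQ j).2.2.2.1
    rwa [hctr j] at h
  obtain ⟨u, v, hLU, hLU'⟩ := convergence 𝒰 hprop h𝒰 hM hkinj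
  have hζ : Tendsto (fun j => g (nn j) • z) atTop (𝓝 a) := hza.comp hnmono.tendsto_atTop
  have hζfix : ∀ j, kk j • (g (nn j) • z) = g (nn j) • z := by
    intro j
    show (g (nn j) * r j * (g (nn j))⁻¹) • (g (nn j) • z) = g (nn j) • z
    rw [mul_smul (g (nn j) * r j) (g (nn j))⁻¹, inv_smul_smul, mul_smul,
      hfix (r j) (hrP j)]
  have hsw : Tendsto (fun j => g (nn j) • w₀) atTop (𝓝 b) :=
    (hqb w₀ hw₀).comp hnmono.tendsto_atTop
  have hst : Tendsto (fun j => g (nn j) • (r j • w₀)) atTop (𝓝 b) :=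
    tendsto_of_dist_lt hsteer
  have hswim : ∀ j, kk j • (g (nn j) • w₀) = g (nn j) • (r j • w₀) := by
    intro j
    show (g (nn j) * r j * (g (nn j))⁻¹) • (g (nn j) • w₀) = g (nn j) • (r j • w₀)
    rw [mul_smul (g (nn j) * r j) (g (nn j))⁻¹, inv_smul_smul, mul_smul]
  have hswim' : ∀ j, (kk j)⁻¹ • (g (nn j) • (r j • w₀)) = g (nn j) • w₀ := by
    intro j
    rw [← hswim j, inv_smul_smul]
  have pinA : a ≠ v → u = a := by
    intro hav
    have h1 : Tendsto (fun j => kk j • (g (nn j) • z)) ↑𝒰 (𝓝 u) :=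
      hLU (fun j => g (nn j) • z) a hav (hζ.mono_left h𝒰)
    have h2 : Tendsto (fun j => kk j • (g (nn j) • z)) ↑𝒰 (𝓝 a) := by
      simp only [hζfix]
      exact hζ.mono_left h𝒰
    exact tendsto_nhds_unique h1 h2
  have pinB : b ≠ v → u = b := by
    intro hbv
    have h1 : Tendsto (fun j => kk j • (g (nn j) • w₀)) ↑𝒰 (𝓝 u) :=
      hLU (fun j => g (nn j) • w₀) b hbv (hsw.mono_left h𝒰)
    have h2 : Tendsto (fun j => kk j • (g (nn j) • w₀)) ↑𝒰 (𝓝 b) := by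
      simp only [hswim]
      exact hst.mono_left h𝒰
    exact tendsto_nhds_unique h1 h2
  have pinB' : b ≠ u → v = b := by
    intro hbu
    have h1 : Tendsto (fun j => (kk j)⁻¹ • (g (nn j) • (r j • w₀))) ↑𝒰 (𝓝 v) :=
      hLU' (fun j => g (nn j) • (r j • w₀)) b hbu (hst.mono_left h𝒰)
    have h2 : Tendsto (fun j => (kk j)⁻¹ • (g (nn j) • (r j • w₀))) ↑𝒰 (𝓝 b) := by
      simp only [hswim']
      exact hsw.mono_left h𝒰
    exact tendsto_nhds_unique h1 h2
  have hcross : u ≠ v := by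
    by_cases hva : v = a
    · have hub : u = b := pinB (by rw [hva]; exact hab.symm)
      rw [hub, hva]
      exact hab.symm
    · have hua : u = a := pinA (fun h => hva h.symm)
      have hvb : v = b := pinB' (by rw [hua]; exact hab.symm)
      rw [hua, hvb]
      exact hab
  obtain ⟨J, hJord, hJcard⟩ := stepC 𝒰 hprop hcont h𝒰 hM hkinj hcross hLU hLU'
  exact hnl (r J) (hrP J) (lox_transfer hJord hJcard)


end ConicalNotParabolicAux

/-- in a convergence group, a conical limit point of `G` cannot be a
parabolic point, i.e. it is not fixed by any parabolic subgroup of `G`. -/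
theorem conical_limit_point_not_parabolic
    {G M : Type*} [Group G] [TopologicalSpace M] [CompactSpace M]
    [TopologicalSpace.MetrizableSpace M] [MulAction G M]
    (hconv : IsConvergenceAction G M)
    (h3 : ∃ a b c : M, a ≠ b ∧ a ≠ c ∧ b ≠ c) :
    ∀ z : M, IsConicalLimitPoint G M ⊤ z →
      ¬ ∃ P : Subgroup G, (P : Set G).Infinite ∧
          (∀ g ∈ P, ¬ IsLoxodromic G M g) ∧
          ∀ g ∈ P, g • z = z := by
  classical
  intro z hzcon hex
  obtain ⟨P, hPinf, hPnl, hPfix⟩ := hex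
  obtain ⟨g, a, b, -, hab, hza, hqb⟩ := hzcon
  letI : MetricSpace M := TopologicalSpace.metrizableSpaceMetric M
  rcases Set.finite_or_infinite (univ : Set M) with hfin | hinf
  · -- finite space: the whole group is finite, contradicting the infinitude of `P`
    obtain ⟨p₁, p₂, p₃, h12, h13, h23⟩ := h3
    set τ : M × M × M := (p₁, p₂, p₃) with hτdef
    have hstab : {g : G | g • τ = τ}.Finite := by
      have hfin2 := hconv.2 {τ} {τ} isCompact_singleton isCompact_singleton
        (by
          rintro t ht
          have ht' : t = τ := by
            rcases ht with h | h
            · exact h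
            · exact h
          subst ht'
          exact ⟨h12, h13, h23⟩)
      refine hfin2.subset ?_
      intro g hg
      exact ⟨g • τ, Set.smul_mem_smul_set rfl, by rw [hg]; rfl⟩
    haveI hMfin : Finite M := Set.finite_univ_iff.1 hfin
    have hGfin : (univ : Set G).Finite := by
      set χ : G → (M → M) := fun g x => g • x with hχ
      have hsub : (univ : Set G) ⊆ ⋃ f ∈ Set.range χ, {g : G | χ g = f} := by
        intro g _
        simp only [Set.mem_iUnion]
        exact ⟨χ g, ⟨g, rfl⟩, rfl⟩
      refine (Set.Finite.biUnion (Set.toFinite (Set.range χ)) ?_).subset hsub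
      intro f hf
      obtain ⟨g₀, rfl⟩ := hf
      have : {g : G | χ g = χ g₀} ⊆ (fun s => g₀ * s) '' {g : G | g • τ = τ} := by
        intro g hg
        refine ⟨g₀⁻¹ * g, ?_, by group⟩
        have hgx : ∀ x : M, g • x = g₀ • x := fun x => congrFun hg x
        have : ∀ x : M, (g₀⁻¹ * g) • x = x := by
          intro x
          rw [mul_smul, hgx, inv_smul_smul]
        show (g₀⁻¹ * g) • τ = τ
        show ((g₀⁻¹ * g) • τ.1, (g₀⁻¹ * g) • τ.2.1, (g₀⁻¹ * g) • τ.2.2) = τ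
        rw [this, this, this]
      exact (hstab.image _).subset this
    exact hPinf (hGfin.subset (Set.subset_univ _))
  · haveI : Nonempty M := ⟨z⟩
    exact ConicalNotParabolicAux.engine hconv.2 hconv.1 hinf g z a b hab hza hqb P hPinf
      (fun p hp hpair => hPnl p hp hpair) hPfix
end
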